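/- arXiv:1712.04506 — 3 statements merged into one kernel-verified Lean document; each statement's English description precedes it below -/
import Mathlib

section
/- Let τ be a combinatorial type in 𝒞_q with des(τ) = d ≥ 2 and sym(τ) = s. Choose a representative cycle σ of τ whose signature ends in 1 (i.e., a_q = 1) and let 𝒪 be the unique realization of σ under m_d. Then the rotated copies 𝒪 − j/(d−1) (mod ℤ) for 0 ≤ j < (d−1)/s form all the realizations of τ under m_d, and each of these (d−1)/s orbits is invariant under the rigid rotation x ↦ x − 1/s (mod ℤ). -/
open scoped Classical

noncomputable section

/-- The representative of `i : ZMod q` in `{1, …, q}`. -/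
def rep (q : ℕ) [NeZero q] (i : ZMod q) : ℕ :=
  if i = 0 then q else i.val

/-- The rotation `ρ : i ↦ i + 1 (mod q)` of `ZMod q`. -/
def rotPerm (q : ℕ) : Equiv.Perm (ZMod q) :=
  Equiv.addRight 1

/-- The descent number `des σ`: the number of `i ∈ ZMod q` with `σ(i) > σ(i+1)`,
values compared via their representatives in `{1, …, q}`. -/
def desNum (q : ℕ) [NeZero q] (σ : Equiv.Perm (ZMod q)) : ℕ :=
  (Finset.univ.filter fun i : ZMod q => rep q (σ (i + 1)) < rep q (σ i)).card

/-- `σ` is a `q`-cycle, i.e. it acts transitively on `ZMod q`. -/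
def IsQCycle (q : ℕ) (σ : Equiv.Perm (ZMod q)) : Prop :=
  ∀ i j : ZMod q, ∃ n : ℕ, (σ ^ n) i = j

/-- The transition matrix of `σ`: the `(i,j)` entry is `1` if `j` lies in the
cyclic interval `[σ(i), σ(i+1))` of `ZMod q` and `0` otherwise. -/
def transMatrix (q : ℕ) [NeZero q] (σ : Equiv.Perm (ZMod q)) :
    Matrix (ZMod q) (ZMod q) ℝ :=
  Matrix.of fun i j => if (j - σ i).val < (σ (i + 1) - σ i).val then (1 : ℝ) else 0

/-- A probability vector: non-negative components summing to `1`. -/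
def IsProbVec (q : ℕ) [NeZero q] (v : ZMod q → ℝ) : Prop :=
  (∀ i, 0 ≤ v i) ∧ ∑ i, v i = 1

/-- The symmetry order of `σ`: the order of the stabilizer of `σ` in the rotation
group `⟨ρ⟩` acting by conjugation. -/
def symOrder (q : ℕ) [NeZero q] (σ : Equiv.Perm (ZMod q)) : ℕ :=
  ((Finset.range q).filter fun j => rotPerm q ^ j * σ * (rotPerm q ^ j)⁻¹ = σ).card

/-- `F : ℝ → ℝ` is a lift of a degree `k` covering map of `ℝ/ℤ`:
a homeomorphism of `ℝ` with `F (t+1) = F t + k`. -/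
def IsDegreeLift (k : ℕ) (F : ℝ → ℝ) : Prop :=
  Continuous F ∧ StrictMono F ∧ ∀ t, F (t + 1) = F t + k

/-- The fixed point of the circle map corresponding to `u` (a point with
`F u - u ∈ ℤ`) is topologically repelling: `t ↦ F t - t` is strictly increasing
in a neighborhood of `u`. -/
def TopRepelling (F : ℝ → ℝ) (u : ℝ) : Prop :=
  ∃ ε > 0, StrictMonoOn (fun t => F t - t) (Set.Ioo (u - ε) (u + ε))

/-- `x : ZMod q → ℝ` is a period `q` orbit realizing `σ` for the circle map with
lift `F`: the points `x i` lie in `(0,1)` and are increasing with respect to the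
representatives `{1, …, q}` (so that `0, x₁, …, x_q` are in positive cyclic
order), and on the circle `f(x i) = x (σ i)` for all `i`. -/
def IsRealization (q : ℕ) [NeZero q] (σ : Equiv.Perm (ZMod q))
    (F : ℝ → ℝ) (x : ZMod q → ℝ) : Prop :=
  (∀ i, x i ∈ Set.Ioo (0 : ℝ) 1) ∧
  (∀ i j : ZMod q, rep q i < rep q j → x i < x j) ∧
  (∀ i, ∃ m : ℤ, F (x i) = x (σ i) + m)

/-- A realization of `σ` under the multiplication map `m_k : x ↦ kx (mod ℤ)`. -/
def MkRealization (q k : ℕ) [NeZero q] (σ : Equiv.Perm (ZMod q)) (x : ZMod q → ℝ) : Prop :=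
  IsRealization q σ (fun t => (k : ℝ) * t) x

/-- The upper endpoint (as a real number) of the partition interval
`I i = [x i, x (i+1)]`; for `i = 0 ≡ q` the interval wraps around `0 ∈ ℝ/ℤ`
and the endpoint is `x 1 + 1`. -/
def upperPt (q : ℕ) [NeZero q] (x : ZMod q → ℝ) (i : ZMod q) : ℝ :=
  if i = 0 then x 1 + 1 else x (i + 1)

/-- The `i`-th component of the fixed point distribution: the number of fixed
points of `m_k` (the points `j/(k-1) (mod ℤ)`) in the interior of the partition
interval `I i`. -/
def fixDist (q k : ℕ) [NeZero q] (x : ZMod q → ℝ) (i : ZMod q) : ℕ :=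
  ((Finset.Icc 1 (2 * (k - 1))).filter fun j : ℕ =>
    x i < (j : ℝ) / ((k : ℝ) - 1) ∧ (j : ℝ) / ((k : ℝ) - 1) < upperPt q x i).card

/-- The number of fixed points of `m_k` in the interval `(0, x 1)`. -/
def countFixBelow (q k : ℕ) [NeZero q] (x : ZMod q → ℝ) : ℕ :=
  ((Finset.range (k - 1)).filter fun j : ℕ =>
    0 < j ∧ (j : ℝ) / ((k : ℝ) - 1) < x 1).card

/-- The `m`-th component of the (cumulative) deployment vector: the number of
orbit points in `(0, m/(k-1))`. -/
def depCount (q k : ℕ) [NeZero q] (x : ZMod q → ℝ) (m : ℕ) : ℕ :=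
  (Finset.univ.filter fun j : ZMod q => x j < (m : ℝ) / ((k : ℝ) - 1)).card

/-- The rank of a marked index `i` among the marked indices `i₁ < ⋯ < i_{d-1}`
(ordered by their representatives in `{1, …, q}`). -/
def markRank (q : ℕ) [NeZero q] (σ : Equiv.Perm (ZMod q)) (i : ZMod q) : ℕ :=
  (Finset.univ.filter fun i' : ZMod q =>
    transMatrix q σ i' i' = 1 ∧ rep q i' ≤ rep q i).card

set_option linter.unusedSectionVars false

namespace RotAux

variable {q : ℕ} [NeZero q]



lemma rep_pos (i : ZMod q) : 1 ≤ rep q i := by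
  unfold rep; split
  · exact Nat.one_le_iff_ne_zero.2 (NeZero.ne q)
  · rename_i h
    exact Nat.one_le_iff_ne_zero.2 (fun h0 => h ((ZMod.val_eq_zero i).1 h0))

lemma rep_le (i : ZMod q) : rep q i ≤ q := by
  unfold rep; split
  · exact le_rfl
  · exact le_of_lt (ZMod.val_lt i)

lemma natCast_rep (i : ZMod q) : ((rep q i : ℕ) : ZMod q) = i := by
  unfold rep; split
  · rename_i h; simp [h]
  · exact ZMod.natCast_rightInverse i

lemma intCast_rep (i : ZMod q) : (((rep q i : ℕ) : ℤ) : ZMod q) = i := by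
  push_cast
  exact natCast_rep i

lemma rep_inj {i j : ZMod q} (h : rep q i = rep q j) : i = j := by
  have := natCast_rep (q := q) i
  rw [h, natCast_rep] at this
  exact this.symm

lemma rep_natval {m : ℕ} (h1 : 1 ≤ m) (h2 : m ≤ q) : rep q ((m : ZMod q)) = m := by
  rcases eq_or_lt_of_le h2 with h | h
  · subst h; simp [rep]
  · have hne : ((m : ZMod q)) ≠ 0 := by
      intro h0
      have := (ZMod.natCast_eq_zero_iff m q).1 h0
      have := Nat.le_of_dvd (by omega) this
      omega
    simp [rep, hne, ZMod.val_cast_of_lt h]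

lemma dvd_sub_rep (k : ℤ) : (q : ℤ) ∣ k - (rep q (k : ZMod q) : ℕ) := by
  have : ((k - (rep q (k : ZMod q) : ℕ) : ℤ) : ZMod q) = 0 := by
    push_cast
    rw [show (((rep q (k : ZMod q) : ℕ) : ZMod q)) = (k : ZMod q) from natCast_rep _]
    ring
  exact (ZMod.intCast_zmod_eq_zero_iff_dvd _ q).1 this

/-- C1 : key val-vs-rep identity. -/
lemma val_sub_eq (a b : ZMod q) :
    (((a - b).val : ℕ) : ℤ) = (rep q a : ℤ) - rep q b + q * (if rep q a < rep q b then 1 else 0) := by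
  have hq1 : 1 ≤ q := Nat.one_le_iff_ne_zero.2 (NeZero.ne q)
  have hd : (q : ℤ) ∣ (((a - b).val : ℕ) : ℤ) - ((rep q a : ℤ) - rep q b) := by
    have : (((((a - b).val : ℕ) : ℤ) - ((rep q a : ℤ) - rep q b) : ℤ) : ZMod q) = 0 := by
      push_cast
      rw [ZMod.natCast_rightInverse (a - b),
        show (((rep q a : ℕ) : ZMod q)) = a from natCast_rep _,
        show (((rep q b : ℕ) : ZMod q)) = b from natCast_rep _]
      ring
    exact (ZMod.intCast_zmod_eq_zero_iff_dvd _ q).1 this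
  obtain ⟨t, ht⟩ := hd
  have hv : ((a - b).val : ℤ) < q := by exact_mod_cast ZMod.val_lt (a - b)
  have hv0 : (0 : ℤ) ≤ ((a - b).val : ℤ) := by positivity
  have hra1 : (1 : ℤ) ≤ rep q a := by exact_mod_cast rep_pos a
  have hraq : (rep q a : ℤ) ≤ q := by exact_mod_cast rep_le a
  have hrb1 : (1 : ℤ) ≤ rep q b := by exact_mod_cast rep_pos b
  have hrbq : (rep q b : ℤ) ≤ q := by exact_mod_cast rep_le b
  have hqz : (0 : ℤ) < q := by exact_mod_cast hq1
  split_ifs with h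
  · have h' : (rep q a : ℤ) < rep q b := by exact_mod_cast h
    have ht1 : t = 1 := by
      by_contra hne
      rcases lt_or_gt_of_ne hne with hlt | hgt
      · have : t ≤ 0 := by omega
        nlinarith
      · have : 2 ≤ t := by omega
        nlinarith
    rw [ht1] at ht; linarith
  · have h' : (rep q b : ℤ) ≤ rep q a := by
      have := not_lt.1 h; exact_mod_cast this
    have ht0 : t = 0 := by
      by_contra hne
      rcases lt_or_gt_of_ne hne with hlt | hgt
      · have : t ≤ -1 := by omega
        nlinarith
      · have : 1 ≤ t := by omega
        nlinarith
    rw [ht0] at ht; linarith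


/-- C2 : sum of increments equals q times the descent number. -/
lemma sum_inc (σ : Equiv.Perm (ZMod q)) :
    ∑ i : ZMod q, (((σ (i + 1) - σ i).val : ℕ) : ℤ) = q * desNum q σ := by
  have h1 : ∑ i : ZMod q, (((σ (i + 1) - σ i).val : ℕ) : ℤ)
      = ∑ i : ZMod q, ((rep q (σ (i+1)) : ℤ) - rep q (σ i)
          + q * (if rep q (σ (i+1)) < rep q (σ i) then 1 else 0)) := by
    exact Finset.sum_congr rfl fun i _ => val_sub_eq _ _
  rw [h1]
  rw [Finset.sum_add_distrib, Finset.sum_sub_distrib]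
  have h2 : ∑ i : ZMod q, (rep q (σ (i+1)) : ℤ) = ∑ i : ZMod q, (rep q (σ i) : ℤ) := by
    exact Fintype.sum_equiv (Equiv.addRight (1 : ZMod q)) _ _ (fun i => rfl)
  rw [h2, sub_self, zero_add, ← Finset.mul_sum]
  congr 1
  rw [desNum]
  rw [← Finset.sum_boole]

lemma rot_pow_apply (j : ℕ) : ∀ i : ZMod q, (rotPerm q ^ j) i = i + j := by
  induction j with
  | zero => intro i; simp
  | succ n ih =>
    intro i
    rw [pow_succ, Equiv.Perm.mul_apply, show (rotPerm q) i = i + 1 from rfl, ih]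
    push_cast
    ring

lemma rot_pow_inv_apply (j : ℕ) (i : ZMod q) : ((rotPerm q ^ j)⁻¹) i = i - j := by
  rw [Equiv.Perm.inv_def, Equiv.symm_apply_eq, rot_pow_apply]
  ring

lemma conj_apply (σ : Equiv.Perm (ZMod q)) (j : ℕ) (i : ZMod q) :
    (rotPerm q ^ j * σ * (rotPerm q ^ j)⁻¹) i = σ (i - j) + j := by
  rw [Equiv.Perm.mul_apply, Equiv.Perm.mul_apply, rot_pow_inv_apply, rot_pow_apply]

/-- C3 : descent number is invariant under conjugation by rotations. -/
lemma desNum_conj (σ τ : Equiv.Perm (ZMod q)) (a : ZMod q)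
    (hJ : ∀ i, τ i = σ (i - a) + a) : desNum q τ = desNum q σ := by
  have hq0 : (q : ℤ) ≠ 0 := by exact_mod_cast NeZero.ne q
  have h1 : (q : ℤ) * desNum q τ = q * desNum q σ := by
    rw [← sum_inc, ← sum_inc]
    have : ∀ i : ZMod q, ((τ (i + 1) - τ i).val : ℤ) = ((σ (i - a + 1) - σ (i - a)).val : ℤ) := by
      intro i
      rw [hJ (i + 1), hJ i]
      congr 2
      ring_nf
    rw [Finset.sum_congr rfl fun i _ => this i]
    exact Fintype.sum_equiv (Equiv.subRight (a : ZMod q)) _ _ (fun i => rfl)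
  have := mul_left_cancel₀ hq0 h1
  exact_mod_cast this

/-- bridge from `symOrder` to the additive-stabilizer description. -/
lemma symOrder_eq (σ : Equiv.Perm (ZMod q)) :
    symOrder q σ = (Finset.univ.filter fun a : ZMod q => ∀ i, σ (i + a) = σ i + a).card := by
  unfold symOrder
  apply Finset.card_bij (fun j _ => ((j : ℕ) : ZMod q))
  · intro j hj
    simp only [Finset.mem_filter, Finset.mem_range] at hj
    simp only [Finset.mem_filter, Finset.mem_univ, true_and]
    intro i
    have h := congrArg (fun e : Equiv.Perm (ZMod q) => e (i + (j : ZMod q))) hj.2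
    rw [conj_apply, show i + (j:ZMod q) - j = i by ring] at h
    exact h.symm
  · intro j1 h1 j2 h2 he
    simp only [Finset.mem_filter, Finset.mem_range] at h1 h2
    have : (j1 : ZMod q).val = (j2 : ZMod q).val := by rw [he]
    rwa [ZMod.val_cast_of_lt h1.1, ZMod.val_cast_of_lt h2.1] at this
  · intro a ha
    simp only [Finset.mem_filter, Finset.mem_univ, true_and] at ha
    refine ⟨a.val, ?_, ?_⟩
    · simp only [Finset.mem_filter, Finset.mem_range]
      refine ⟨ZMod.val_lt a, ?_⟩
      ext i
      rw [conj_apply, ZMod.natCast_rightInverse a]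
      have := ha (i - a)
      rw [show i - a + a = i by ring] at this
      rw [this]
    · rw [ZMod.natCast_rightInverse a]


section LiftSec

variable {q d : ℕ} [NeZero q] {σ : Equiv.Perm (ZMod q)} {x : ZMod q → ℝ}

lemma hx01 (hx : MkRealization q d σ x) (i : ZMod q) : 0 < x i ∧ x i < 1 :=
  ⟨(hx.1 i).1, (hx.1 i).2⟩

lemma hxlt (hx : MkRealization q d σ x) {i j : ZMod q} (h : rep q i < rep q j) :
    x i < x j := hx.2.1 i j h

lemma mspec (hx : MkRealization q d σ x) (i : ZMod q) :
    ∃ m : ℤ, (d : ℝ) * x i = x (σ i) + m := hx.2.2 i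

/-- The lift `X : ℤ → ℝ` of the orbit labeling. -/
noncomputable def liftX (q : ℕ) [NeZero q] (x : ZMod q → ℝ) (k : ℤ) : ℝ :=
  x (k : ZMod q) + ((k : ℝ) - (rep q (k : ZMod q) : ℕ)) / (q : ℝ)

lemma hq0R : ((q : ℝ)) ≠ 0 := Nat.cast_ne_zero.2 (NeZero.ne q)

lemma hq0R' : (0:ℝ) < q := by
  have := Nat.pos_of_ne_zero (NeZero.ne q); exact_mod_cast this

lemma liftX_rep (i : ZMod q) : liftX q x ((rep q i : ℕ) : ℤ) = x i := by
  unfold liftX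
  rw [intCast_rep]
  simp

lemma liftX_add_mul (k t : ℤ) : liftX q x (k + q * t) = liftX q x k + t := by
  unfold liftX
  have hc : ((k + q * t : ℤ) : ZMod q) = (k : ZMod q) := by
    push_cast
    simp [ZMod.natCast_self]
  rw [hc]
  have := hq0R (q := q)
  push_cast
  field_simp
  ring

lemma liftX_sub_int {k l : ℤ} (h : (k : ZMod q) = (l : ZMod q)) :
    ∃ t : ℤ, k = l + q * t ∧ liftX q x k = liftX q x l + t := by
  have hd : (q : ℤ) ∣ k - l := by
    have : ((k - l : ℤ) : ZMod q) = 0 := by push_cast; rw [h]; ring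
    exact (ZMod.intCast_zmod_eq_zero_iff_dvd _ q).1 this
  obtain ⟨t, ht⟩ := hd
  refine ⟨t, by omega, ?_⟩
  rw [show k = l + q * t by omega, liftX_add_mul]

lemma rep_succ (hq2 : 2 ≤ q) {i : ZMod q} (hi : i ≠ 0) : rep q (i + 1) = rep q i + 1 := by
  have hvlt := ZMod.val_lt i
  by_cases h1 : i + 1 = 0
  · have hcast : ((i.val + 1 : ℕ) : ZMod q) = 0 := by
      push_cast
      rw [ZMod.natCast_rightInverse i]
      exact h1
    have hdvd := (ZMod.natCast_eq_zero_iff _ q).1 hcast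
    have : i.val + 1 = q := Nat.eq_of_dvd_of_lt_two_mul (by omega) hdvd (by omega)
    simp only [rep, if_pos h1, if_neg hi]
    omega
  · have hlt : i.val + 1 < q := by
      rcases Nat.lt_or_ge (i.val + 1) q with h | h
      · exact h
      · exfalso
        have : i.val + 1 = q := by omega
        have : ((i.val + 1 : ℕ) : ZMod q) = 0 := by rw [this]; simp
        rw [show ((i.val + 1 : ℕ) : ZMod q) = i + 1 by
          push_cast; rw [ZMod.natCast_rightInverse i]] at this
        exact h1 this
    have hi1 : i + 1 = ((i.val + 1 : ℕ) : ZMod q) := by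
      push_cast; rw [ZMod.natCast_rightInverse i]
    simp only [rep, if_neg h1, if_neg hi]
    rw [hi1, ZMod.val_cast_of_lt hlt]

lemma liftX_strictMono (hq2 : 2 ≤ q) (hx : MkRealization q d σ x) :
    StrictMono (liftX q x) := by
  apply strictMono_int_of_lt_succ
  intro k
  have hqR := hq0R' (q := q)
  by_cases hi : (k : ZMod q) = 0
  · have h1 : ((k + 1 : ℤ) : ZMod q) = 1 := by push_cast; rw [hi]; ring
    have hrep1 : rep q ((1 : ZMod q)) = 1 := by
      have := rep_natval (q := q) (m := 1) le_rfl (by omega)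
      simpa using this
    unfold liftX
    rw [h1, hi]
    have hrep0 : rep q (0 : ZMod q) = q := by simp [rep]
    rw [hrep0, hrep1]
    have h0 := hx01 hx 0
    have h1' := hx01 hx 1
    have key : ((k:ℝ) + 1 - 1) / q - ((k:ℝ) - q) / q = 1 := by field_simp; ring
    push_cast
    nlinarith [key]
  · have h1 : ((k + 1 : ℤ) : ZMod q) = (k : ZMod q) + 1 := by push_cast; ring
    have hrs := rep_succ hq2 hi
    unfold liftX
    rw [h1, hrs]
    have hlt : x ((k : ZMod q)) < x ((k : ZMod q) + 1) := hxlt hx (by omega)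
    have key : ((k:ℝ) + 1 - ((rep q ((k:ZMod q)) : ℕ) + 1)) / q
        - ((k:ℝ) - (rep q ((k:ZMod q)) : ℕ)) / q = 0 := by field_simp; ring
    push_cast
    nlinarith [key]

lemma liftX_near (hx : MkRealization q d σ x) (k : ℤ) :
    |liftX q x k - (k : ℝ) / q| ≤ 1 := by
  have hqR := hq0R' (q := q)
  have heq : liftX q x k - (k : ℝ) / q = x ((k : ZMod q)) - (rep q ((k : ZMod q)) : ℕ) / q := by
    unfold liftX; field_simp; ring
  rw [heq, abs_le]
  have h01 := hx01 hx ((k : ZMod q))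
  have hr1 : (1 : ℝ) ≤ (rep q ((k : ZMod q)) : ℕ) := by exact_mod_cast rep_pos _
  have hrq : ((rep q ((k : ZMod q)) : ℕ) : ℝ) ≤ q := by exact_mod_cast rep_le _
  constructor
  · have : ((rep q ((k : ZMod q)) : ℕ) : ℝ) / q ≤ 1 := by
      rw [div_le_one hqR]; exact hrq
    linarith
  · have : (0:ℝ) ≤ ((rep q ((k : ZMod q)) : ℕ) : ℝ) / q := by positivity
    linarith

/-- the integer translation numbers of the realization. -/
noncomputable def mChoice (hx : MkRealization q d σ x) : ZMod q → ℤ :=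
  fun i => Classical.choose (mspec hx i)

lemma mChoice_spec (hx : MkRealization q d σ x) (i : ZMod q) :
    (d : ℝ) * x i = x (σ i) + mChoice hx i := Classical.choose_spec (mspec hx i)

/-- The lift of the permutation action: `liftX (liftPhi k) = d * liftX k`. -/
noncomputable def liftPhi (hx : MkRealization q d σ x) (k : ℤ) : ℤ :=
  (rep q (σ (k : ZMod q)) : ℤ) + q * mChoice hx ((k : ZMod q))
    + d * (k - (rep q ((k : ZMod q)) : ℤ))

lemma liftPhi_cast (hx : MkRealization q d σ x) (k : ℤ) :
    ((liftPhi hx k : ℤ) : ZMod q) = σ ((k : ZMod q)) := by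
  unfold liftPhi
  push_cast
  rw [show (((rep q (σ (k:ZMod q)) : ℕ) : ZMod q)) = σ ((k:ZMod q)) from natCast_rep _,
    show (((rep q ((k:ZMod q)) : ℕ) : ZMod q)) = ((k:ZMod q)) from natCast_rep _]
  simp [ZMod.natCast_self]

lemma liftX_phi (hx : MkRealization q d σ x) (k : ℤ) :
    liftX q x (liftPhi hx k) = d * liftX q x k := by
  have hms := mChoice_spec hx ((k : ZMod q))
  have hqR := hq0R (q := q)
  unfold liftX
  rw [liftPhi_cast]
  rw [show ((liftPhi hx k : ℤ) : ℝ) = (rep q (σ (k : ZMod q)) : ℕ)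
      + q * (mChoice hx ((k : ZMod q)) : ℝ)
      + d * ((k:ℝ) - (rep q ((k : ZMod q)) : ℕ)) by unfold liftPhi; push_cast; ring]
  field_simp
  linear_combination (-1 : ℝ) * (q : ℝ) * hms
end LiftSec

section PhiSec

variable {q d : ℕ} [NeZero q] {σ : Equiv.Perm (ZMod q)} {x : ZMod q → ℝ}

lemma liftX_injective (hq2 : 2 ≤ q) (hx : MkRealization q d σ x) :
    Function.Injective (liftX q x) := (liftX_strictMono hq2 hx).injective

lemma liftPhi_strictMono (hq2 : 2 ≤ q) (hd1 : 1 ≤ d) (hx : MkRealization q d σ x) :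
    StrictMono (liftPhi hx) := by
  intro k k' hkk
  have hX := liftX_strictMono hq2 hx
  have h1 : liftX q x (liftPhi hx k) < liftX q x (liftPhi hx k') := by
    rw [liftX_phi, liftX_phi]
    have hd0 : (0:ℝ) < d := by exact_mod_cast hd1
    exact mul_lt_mul_of_pos_left (hX hkk) hd0
  exact hX.lt_iff_lt.1 h1

lemma liftPhi_add_q (hq2 : 2 ≤ q) (hx : MkRealization q d σ x) (k : ℤ) :
    liftPhi hx (k + q) = liftPhi hx k + q * d := by
  apply liftX_injective hq2 hx
  rw [liftX_add_mul, liftX_phi]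
  have h1 : liftX q x (k + q) = liftX q x k + 1 := by
    have := liftX_add_mul (q := q) (x := x) k 1
    simpa using this
  rw [liftX_phi, h1]
  push_cast
  ring

lemma one_ne_zero_zmod (hq2 : 2 ≤ q) : (1 : ZMod q) ≠ 0 := by
  intro h
  have h1 : ((1 : ℕ) : ZMod q) = 0 := by simpa using h
  have h2 := (ZMod.natCast_eq_zero_iff 1 q).1 h1
  have := Nat.le_of_dvd (by omega) h2
  omega

/-- The key increment lemma: increments of `liftPhi` are determined by `σ`. -/
lemma liftPhi_incr (hq2 : 2 ≤ q) (hd2 : 2 ≤ d) (hx : MkRealization q d σ x)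
    (hdes : desNum q σ = d) (k : ℤ) :
    liftPhi hx (k + 1) - liftPhi hx k = ((σ ((k : ZMod q) + 1) - σ ((k : ZMod q))).val : ℤ) := by
  set g : ℤ → ℤ := fun k => liftPhi hx (k + 1) - liftPhi hx k
      - ((σ ((k : ZMod q) + 1) - σ ((k : ZMod q))).val : ℤ) with hg
  suffices hgz : g k = 0 by
    rw [hg] at hgz; simp only at hgz; omega
  have hq1 : 1 ≤ q := by omega
  have hqz : (0:ℤ) < q := by exact_mod_cast hq1
  have hdvd : ∀ k : ℤ, (q : ℤ) ∣ g k := by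
    intro k
    have hc : ((g k : ℤ) : ZMod q) = 0 := by
      rw [hg]
      push_cast
      rw [liftPhi_cast, liftPhi_cast]
      rw [show (((k + 1 : ℤ) : ZMod q)) = (k : ZMod q) + 1 by push_cast; ring]
      rw [ZMod.natCast_rightInverse]
      ring
    exact (ZMod.intCast_zmod_eq_zero_iff_dvd _ q).1 hc
  have hge : ∀ k : ℤ, 1 ≤ liftPhi hx (k + 1) - liftPhi hx k := by
    intro k
    have := liftPhi_strictMono hq2 (by omega) hx (show k < k + 1 by omega)
    omega
  have hIpos : ∀ i : ZMod q, 1 ≤ ((σ (i + 1) - σ i).val : ℤ) := by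
    intro i
    have hne : σ (i + 1) - σ i ≠ 0 := by
      intro h
      have h2 : σ (i + 1) = σ i := by linear_combination h
      have h3 := σ.injective h2
      have h4 : (1 : ZMod q) = 0 := by linear_combination h3
      exact one_ne_zero_zmod hq2 h4
    have hv : (σ (i + 1) - σ i).val ≠ 0 := fun h0 => hne ((ZMod.val_eq_zero _).1 h0)
    omega
  have hIlt : ∀ i : ZMod q, ((σ (i + 1) - σ i).val : ℤ) < q := by
    intro i; exact_mod_cast ZMod.val_lt _
  have hnn : ∀ k : ℤ, 0 ≤ g k := by
    intro k
    obtain ⟨t, ht⟩ := hdvd k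
    have h1 := hge k
    have h2 := hIlt ((k : ZMod q))
    have h3 := hIpos ((k : ZMod q))
    have hgk : 2 - (q:ℤ) ≤ g k := by rw [hg]; simp only; omega
    by_contra hneg
    push_neg at hneg
    have ht0 : t ≤ -1 := by nlinarith
    nlinarith
  have t1 : ∑ n ∈ Finset.range q, (liftPhi hx ((n:ℤ) + 1) - liftPhi hx (n:ℤ)) = q * d := by
    have h := Finset.sum_range_sub (fun n : ℕ => liftPhi hx (n : ℤ)) q
    calc ∑ n ∈ Finset.range q, (liftPhi hx ((n:ℤ) + 1) - liftPhi hx (n:ℤ))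
        = ∑ n ∈ Finset.range q, (liftPhi hx (((n+1:ℕ) : ℤ)) - liftPhi hx (n:ℤ)) := by
          apply Finset.sum_congr rfl; intro n _; norm_num
      _ = liftPhi hx ((q:ℕ) : ℤ) - liftPhi hx ((0:ℕ) : ℤ) := h
      _ = q * d := by
          have h2 := liftPhi_add_q hq2 hx 0
          norm_num at h2 ⊢
          omega
  have t2 : ∑ n ∈ Finset.range q, ((σ (((n:ℤ) : ZMod q) + 1) - σ (((n:ℤ) : ZMod q))).val : ℤ)
      = q * d := by
    have hbij : ∑ n ∈ Finset.range q,
        ((σ (((n:ℤ) : ZMod q) + 1) - σ (((n:ℤ) : ZMod q))).val : ℤ)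
        = ∑ i : ZMod q, ((σ (i + 1) - σ i).val : ℤ) := by
      apply Finset.sum_bij (i := fun (n : ℕ) (_ : n ∈ Finset.range q) => ((n : ℕ) : ZMod q))
      · intro a ha; exact Finset.mem_univ _
      · intro a1 h1 a2 h2 he
        simp only [Finset.mem_range] at h1 h2
        have : ((a1 : ℕ) : ZMod q).val = ((a2 : ℕ) : ZMod q).val := by rw [he]
        rwa [ZMod.val_cast_of_lt h1, ZMod.val_cast_of_lt h2] at this
      · intro b _
        exact ⟨b.val, Finset.mem_range.2 (ZMod.val_lt b), ZMod.natCast_rightInverse b⟩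
      · intro a _
        have : (((a:ℕ) : ℤ) : ZMod q) = ((a : ℕ) : ZMod q) := by push_cast; rfl
        rw [this]
    rw [hbij, sum_inc, hdes]
  have htel : ∑ n ∈ Finset.range q, g ((n:ℕ) : ℤ) = 0 := by
    rw [hg]
    simp only
    rw [Finset.sum_sub_distrib, t1, t2]
    ring
  have hzero : ∀ n ∈ Finset.range q, g ((n:ℕ) : ℤ) = 0 :=
    (Finset.sum_eq_zero_iff_of_nonneg (fun n _ => hnn _)).1 htel
  have hper : ∀ k : ℤ, g (k + q) = g k := by
    intro k
    rw [hg]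
    simp only
    have h1 : liftPhi hx (k + q + 1) = liftPhi hx (k + 1) + q * d := by
      rw [show k + (q:ℤ) + 1 = (k + 1) + q by ring, liftPhi_add_q hq2 hx]
    have h2 := liftPhi_add_q hq2 hx k
    have h3 : ((k + (q:ℤ) : ℤ) : ZMod q) = ((k : ℤ) : ZMod q) := by
      push_cast; simp [ZMod.natCast_self]
    rw [h1, h2, h3]
    ring
  have hstep : ∀ t : ℤ, ∀ k : ℤ, g (k + q * t) = g k := by
    intro t
    induction t using Int.induction_on with
    | zero => intro k; simp
    | succ n ih =>
      intro k
      rw [show k + (q:ℤ) * ((n:ℤ) + 1) = (k + q * n) + q by ring, hper, ih]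
    | pred n ih =>
      intro k
      have h1 := hper (k + (q:ℤ) * (-(n:ℤ) - 1))
      rw [show k + (q:ℤ) * (-(n:ℤ) - 1) + q = k + q * (-(n:ℤ)) by ring] at h1
      rw [← h1, ih]
  have hk0 : 0 ≤ k % q := Int.emod_nonneg k (by omega)
  have hklt : k % q < q := Int.emod_lt_of_pos k hqz
  have hsplit : k = k % q + q * (k / q) := by
    have := Int.mul_ediv_add_emod k q
    omega
  have hgk : g k = g (k % q) := by
    conv_lhs => rw [hsplit]
    exact hstep (k / q) (k % q)
  rw [hgk, show (k % q) = (((k % q).toNat : ℕ) : ℤ) from (Int.toNat_of_nonneg hk0).symm]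
  apply hzero
  rw [Finset.mem_range]
  omega

end PhiSec

section ClassSec

variable {q d : ℕ} [NeZero q]

/-- Classification: two realizations of rotation-conjugate full-descent cycles under `m_d`
differ by a rigid rotation by a multiple of `1/(d-1)`. -/
lemma classification (hq2 : 2 ≤ q) (hd2 : 2 ≤ d)
    {σ₁ σ₂ : Equiv.Perm (ZMod q)} {x y : ZMod q → ℝ}
    (hx : MkRealization q d σ₁ x) (hy : MkRealization q d σ₂ y)
    (hd1 : desNum q σ₁ = d) (hdd2 : desNum q σ₂ = d)
    (J : ℤ) (hJ : ∀ i : ZMod q, σ₂ i = σ₁ (i - (J : ZMod q)) + (J : ZMod q)) :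
    ∃ w : ℤ, ∀ k : ℤ, liftX q y (k + J) = liftX q x k + (w : ℝ) / ((d:ℝ) - 1) := by
  have hdR : ((d:ℝ) - 1) ≠ 0 := by
    have : (2:ℝ) ≤ d := by exact_mod_cast hd2
    linarith
  have hincx := liftPhi_incr hq2 hd2 hx hd1
  have hincy := liftPhi_incr hq2 hd2 hy hdd2
  set Φx := liftPhi hx with hPhix
  set Φy := liftPhi hy with hPhiy
  set D : ℤ → ℤ := fun k => Φy (k + J) - Φx k with hDdef
  have hD : ∀ k : ℤ, D (k + 1) = D k := by
    intro k
    have h1 := hincy (k + J)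
    have h2 := hincx k
    have hcast : ((k + J : ℤ) : ZMod q) = (k : ZMod q) + (J : ZMod q) := by push_cast; ring
    rw [hcast] at h1
    have e1 : (k:ZMod q) + (J:ZMod q) + 1 - (J:ZMod q) = (k:ZMod q) + 1 := by ring
    have e2 : (k:ZMod q) + (J:ZMod q) - (J:ZMod q) = (k:ZMod q) := by ring
    have hval : σ₂ ((k:ZMod q) + (J:ZMod q) + 1) - σ₂ ((k:ZMod q) + (J:ZMod q))
        = σ₁ ((k:ZMod q) + 1) - σ₁ ((k:ZMod q)) := by
      rw [hJ ((k:ZMod q) + (J:ZMod q) + 1), hJ ((k:ZMod q) + (J:ZMod q)), e1, e2]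
      ring
    rw [hval] at h1
    have e3 : k + 1 + J = k + J + 1 := by ring
    simp only [hDdef, e3]
    omega
  have hconst : ∀ k : ℤ, D k = D 0 := by
    intro k
    induction k using Int.induction_on with
    | zero => rfl
    | succ n ih => rw [hD (n:ℤ), ih]
    | pred n ih =>
      have := hD (-(n:ℤ) - 1)
      rw [show -(n:ℤ) - 1 + 1 = -(n:ℤ) by ring] at this
      rw [← this]
      exact ih
  have hKJ : (q:ℤ) ∣ D 0 - J := by
    have hc : ((D 0 - J : ℤ) : ZMod q) = 0 := by
      have c1 : ((Φy (0 + J) : ℤ) : ZMod q) = σ₂ (((0 + J : ℤ) : ZMod q)) := liftPhi_cast hy _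
      have c2 : ((Φx (0 : ℤ) : ℤ) : ZMod q) = σ₁ (((0:ℤ) : ZMod q)) := liftPhi_cast hx _
      simp only [hDdef]
      push_cast
      rw [c1, c2]
      have : σ₂ (((0 + J : ℤ) : ZMod q)) = σ₁ 0 + (J : ZMod q) := by
        rw [show (((0 + J : ℤ) : ZMod q)) = ((J:ℤ) : ZMod q) by norm_num]
        rw [hJ]
        norm_num
      rw [this]
      norm_num
    exact (ZMod.intCast_zmod_eq_zero_iff_dvd _ q).1 hc
  obtain ⟨m0, hm0⟩ := hKJ
  simp only [hDdef] at hm0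
  have hPhiRel : ∀ k : ℤ, Φy (k + J) = Φx k + J + q * m0 := by
    intro k
    have h1 := hconst k
    simp only [hDdef] at h1
    omega
  set c : ℝ := (m0 : ℝ) / ((d:ℝ) - 1) with hc
  set B : ℤ → ℝ := fun k => liftX q y (k + J) - liftX q x k - c with hB
  have hBd : ∀ k : ℤ, B (Φx k) = d * B k := by
    intro k
    have h1 : Φx k + J = Φy (k + J) + q * (-m0) := by
      have h := hPhiRel k; rw [h]; ring
    simp only [hB]
    rw [h1, liftX_add_mul, liftX_phi hy, liftX_phi hx]
    push_cast
    simp only [hc]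
    field_simp
    ring
  have hBbound : ∃ C : ℝ, ∀ k : ℤ, |B k| ≤ C := by
    refine ⟨2 + |(J:ℝ)/q| + |c|, ?_⟩
    intro k
    have n1 := liftX_near hy (k + J)
    have n2 := liftX_near hx k
    have hqR := hq0R' (q := q)
    have e : B k = (liftX q y (k + J) - ((k + J : ℤ):ℝ)/q)
        - (liftX q x k - (k:ℝ)/q) + ((J:ℝ)/q - c) := by
      simp only [hB]
      push_cast
      field_simp
      ring
    rw [e, abs_le]
    have b1 := abs_le.1 n1
    have b2 := abs_le.1 n2
    have b3 := le_abs_self ((J:ℝ)/q)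
    have b4 := neg_abs_le ((J:ℝ)/q)
    have b5 := le_abs_self c
    have b6 := neg_abs_le c
    constructor <;> linarith
  have hBiter : ∀ n : ℕ, ∀ k : ℤ, B (Φx^[n] k) = (d:ℝ)^n * B k := by
    intro n
    induction n with
    | zero => intro k; simp
    | succ m ih =>
      intro k
      rw [Function.iterate_succ_apply', hBd, ih]
      ring
  have hBzero : ∀ k : ℤ, B k = 0 := by
    intro k
    by_contra hne
    have hpos : 0 < |B k| := abs_pos.2 hne
    obtain ⟨C, hC⟩ := hBbound
    have hd1R : (1:ℝ) < d := by
      have : (2:ℝ) ≤ d := by exact_mod_cast hd2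
      linarith
    obtain ⟨n, hn⟩ := pow_unbounded_of_one_lt (C / |B k|) hd1R
    have h1 : |B (Φx^[n] k)| = (d:ℝ)^n * |B k| := by
      rw [hBiter n k, abs_mul, abs_pow, abs_of_nonneg (by positivity : (0:ℝ) ≤ (d:ℝ))]
    have h2 := hC (Φx^[n] k)
    rw [h1] at h2
    have h3 : C / |B k| < (d:ℝ)^n := hn
    have h4 : C < (d:ℝ)^n * |B k| := by
      rwa [div_lt_iff₀ hpos] at h3
    linarith
  refine ⟨m0, fun k => ?_⟩
  have := hBzero k
  simp only [hB] at this
  rw [← hc]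
  linarith

end ClassSec

section ShiftSec

variable {q d : ℕ} [NeZero q] {σ : Equiv.Perm (ZMod q)} {x : ZMod q → ℝ}

/-- `x` is (as a subset of the circle) invariant under rotation by `w/(d-1)`,
with label shift `e`. -/
def ShiftBy (q d : ℕ) [NeZero q] (x : ZMod q → ℝ) (w e : ℤ) : Prop :=
  ∀ k : ℤ, liftX q x (k + e) = liftX q x k + (w : ℝ) / ((d:ℝ) - 1)

lemma hdR' (hd2 : 2 ≤ d) : ((d:ℝ) - 1) ≠ 0 := by
  have : (2:ℝ) ≤ d := by exact_mod_cast hd2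
  linarith

lemma shiftBy_unique_e (hq2 : 2 ≤ q) (hx : MkRealization q d σ x) {w e e' : ℤ}
    (h : ShiftBy q d x w e) (h' : ShiftBy q d x w e') : e = e' := by
  have h2 : liftX q x (0 + e) = liftX q x (0 + e') := by rw [h 0, h' 0]
  have := liftX_injective hq2 hx h2
  omega

lemma shiftBy_unique_w (hd2 : 2 ≤ d) {w w' e : ℤ}
    (h : ShiftBy q d x w e) (h' : ShiftBy q d x w' e) : w = w' := by
  have h2 : (w:ℝ)/((d:ℝ)-1) = (w':ℝ)/((d:ℝ)-1) := by
    have := (h 0).symm.trans (h' 0); linarith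
  have := hdR' hd2
  field_simp at h2
  exact_mod_cast h2

lemma shiftBy_zero : ShiftBy q d x 0 0 := by intro k; simp

lemma shiftBy_base (hd2 : 2 ≤ d) : ShiftBy q d x ((d:ℤ) - 1) q := by
  intro k
  have h1 := liftX_add_mul (q := q) (x := x) k 1
  rw [show k + (q:ℤ) = k + q * 1 by ring, h1]
  have := hdR' hd2
  push_cast
  field_simp

lemma shiftBy_add {w w' e e' : ℤ} (h : ShiftBy q d x w e) (h' : ShiftBy q d x w' e') :
    ShiftBy q d x (w + w') (e + e') := by
  intro k
  rw [show k + (e + e') = (k + e) + e' by ring, h' (k + e), h k]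
  push_cast
  ring

lemma shiftBy_neg {w e : ℤ} (h : ShiftBy q d x w e) : ShiftBy q d x (-w) (-e) := by
  intro k
  have h1 := h (k - e)
  rw [show k - e + e = k by ring] at h1
  rw [show k + -e = k - e by ring, h1]
  push_cast
  ring

lemma shiftBy_smul {w e : ℤ} (h : ShiftBy q d x w e) (t : ℤ) :
    ShiftBy q d x (t * w) (t * e) := by
  induction t using Int.induction_on with
  | zero => simpa using (shiftBy_zero (q := q) (d := d) (x := x))
  | succ n ih =>
    have h2 := shiftBy_add ih h
    rw [show ((n:ℤ)+1) * w = (n:ℤ)*w + w by ring, show ((n:ℤ)+1) * e = (n:ℤ)*e + e by ring]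
    exact h2
  | pred n ih =>
    have h2 := shiftBy_add ih (shiftBy_neg h)
    rw [show ((-(n:ℤ) - 1)) * w = (-(n:ℤ))*w + -w by ring,
      show ((-(n:ℤ) - 1)) * e = (-(n:ℤ))*e + -e by ring]
    exact h2

/-- an orbit symmetry induces a combinatorial symmetry of `σ`. -/
lemma shiftBy_stab (hq2 : 2 ≤ q) (hd2 : 2 ≤ d) (hx : MkRealization q d σ x)
    {w e : ℤ} (h : ShiftBy q d x w e) :
    ∀ i : ZMod q, σ (i + ((e : ℤ) : ZMod q)) = σ i + ((e : ℤ) : ZMod q) := by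
  have hdR := hdR' hd2
  have key : ∀ k : ℤ, liftPhi hx (k + e) = liftPhi hx k + q * w + e := by
    intro k
    apply liftX_injective hq2 hx
    rw [liftX_phi hx, h k]
    rw [show liftPhi hx k + (q:ℤ) * w + e = (liftPhi hx k + q * w) + e by ring,
      h (liftPhi hx k + q * w), liftX_add_mul, liftX_phi hx]
    field_simp
    ring
  intro i
  have hk := key ((i.val : ℤ))
  have hc := congrArg (fun t : ℤ => ((t : ℤ) : ZMod q)) hk
  rw [liftPhi_cast hx] at hc
  have hrhs : (((liftPhi hx ((i.val:ℤ)) + q * w + e : ℤ)) : ZMod q)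
      = σ (((i.val : ℤ) : ZMod q)) + ((e:ℤ) : ZMod q) := by
    push_cast
    rw [show ((((liftPhi hx ((i.val:ℤ)) : ℤ)) : ZMod q)) = σ (((i.val:ℤ) : ZMod q)) from
      liftPhi_cast hx _]
    simp [ZMod.natCast_self]
  rw [hrhs] at hc
  have hci : (((i.val : ℤ)) : ZMod q) = i := by
    push_cast
    exact ZMod.natCast_rightInverse i
  rw [hci] at hc
  have hce : (((i.val : ℤ) + e : ℤ) : ZMod q) = i + ((e:ℤ) : ZMod q) := by
    push_cast
    rw [ZMod.natCast_rightInverse i]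
  rw [hce] at hc
  exact hc

/-- converse: a combinatorial symmetry of `σ` induces an orbit symmetry. -/
lemma stab_shiftBy (hq2 : 2 ≤ q) (hd2 : 2 ≤ d) (hx : MkRealization q d σ x)
    (hdes : desNum q σ = d) {a : ZMod q}
    (ha : ∀ i, σ (i + a) = σ i + a) : ∃ w : ℤ, ShiftBy q d x w ((a.val : ℤ)) := by
  have hca : ((((a.val : ℤ)) : ZMod q)) = a := by
    push_cast
    exact ZMod.natCast_rightInverse a
  have hJ : ∀ i : ZMod q, σ i = σ (i - (((a.val:ℤ) : ℤ) : ZMod q)) + (((a.val:ℤ) : ℤ) : ZMod q) := by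
    intro i
    rw [hca]
    have h1 := ha (i - a)
    rw [show i - a + a = i by ring] at h1
    exact h1
  obtain ⟨w, hw⟩ := classification hq2 hd2 hx hx hdes hdes ((a.val : ℤ)) hJ
  exact ⟨w, fun k => hw k⟩

/-- The symmetry order pins down the orbit's rotation group: there are `g` and `e₀`
with `s * g = d - 1` and the orbit invariant under rotation by `g/(d-1) = 1/s`. -/
lemma sym_shift (hq2 : 2 ≤ q) (hd2 : 2 ≤ d) (hx : MkRealization q d σ x)
    (hdes : desNum q σ = d) {s : ℕ} (hs : symOrder q σ = s) :
    ∃ g e0 : ℤ, 1 ≤ g ∧ 1 ≤ e0 ∧ (s:ℤ) * g = (d:ℤ) - 1 ∧ ShiftBy q d x g e0 := by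
  classical
  have hdR := hdR' hd2
  set W : AddSubgroup ℤ :=
    { carrier := {w : ℤ | ∃ e : ℤ, ShiftBy q d x w e},
      zero_mem' := ⟨0, shiftBy_zero⟩,
      add_mem' := by rintro w w' ⟨e, he⟩ ⟨e', he'⟩; exact ⟨e + e', shiftBy_add he he'⟩,
      neg_mem' := by rintro w ⟨e, he⟩; exact ⟨-e, shiftBy_neg he⟩ } with hW
  obtain ⟨g0, hg0⟩ := Int.subgroup_cyclic W
  have hmem : ∀ w : ℤ, (∃ e, ShiftBy q d x w e) ↔ g0 ∣ w := by
    intro w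
    have h1 : w ∈ W ↔ w ∈ AddSubgroup.closure {g0} := by rw [hg0]
    rw [AddSubgroup.mem_closure_singleton] at h1
    constructor
    · intro h
      obtain ⟨n, hn⟩ := h1.1 h
      exact ⟨n, by rw [← hn, smul_eq_mul]; ring⟩
    · rintro ⟨n, hn⟩
      exact h1.2 ⟨n, by rw [hn, smul_eq_mul]; ring⟩
  have hd1W : ∃ e, ShiftBy q d x ((d:ℤ)-1) e := ⟨q, shiftBy_base hd2⟩
  have hg0dvd : g0 ∣ (d:ℤ) - 1 := (hmem _).1 hd1W
  have hd2Z : (2:ℤ) ≤ d := by exact_mod_cast hd2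
  have hg0ne : g0 ≠ 0 := by
    rintro rfl
    rw [zero_dvd_iff] at hg0dvd
    omega
  set g : ℤ := |g0| with hgdef
  have hg1 : 1 ≤ g := by
    have := abs_pos.2 hg0ne
    omega
  have hgdvd : ∀ w : ℤ, (∃ e, ShiftBy q d x w e) ↔ g ∣ w := by
    intro w
    rw [hmem, hgdef, abs_dvd]
  obtain ⟨e0, he0⟩ : ∃ e, ShiftBy q d x g e := (hgdvd g).2 dvd_rfl
  have hsmul : ∀ t : ℤ, ShiftBy q d x (t * g) (t * e0) := fun t => shiftBy_smul he0 t
  obtain ⟨r, hr⟩ := (hgdvd ((d:ℤ)-1)).1 hd1W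
  have hq_eq : r * e0 = q := by
    have h1 : ShiftBy q d x ((d:ℤ)-1) (r * e0) := by
      have h2 := hsmul r
      rw [show r * g = g * r from mul_comm r g, ← hr] at h2
      exact h2
    exact shiftBy_unique_e hq2 hx h1 (shiftBy_base hd2)
  have he0ne : e0 ≠ 0 := by
    intro h0
    rw [h0] at he0
    have h1 := he0 0
    simp only [add_zero] at h1
    have h2 : (g:ℝ) / ((d:ℝ)-1) = 0 := by linarith
    rw [div_eq_zero_iff] at h2
    rcases h2 with h2 | h2
    · have : g = 0 := by exact_mod_cast h2
      omega
    · exact hdR h2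
  have hqZ : (1:ℤ) ≤ q := by
    have : 2 ≤ q := hq2; exact_mod_cast Nat.one_le_of_lt this
  have hr1 : 1 ≤ r := by nlinarith
  have he0pos : 1 ≤ e0 := by nlinarith
  -- counting both directions: r = s
  set SF : Finset (ZMod q) := Finset.univ.filter (fun a => ∀ i, σ (i + a) = σ i + a) with hSF
  have hSFcard : SF.card = s := by rw [hSF, ← symOrder_eq, hs]
  have hrs1 : r.toNat ≤ s := by
    rw [← hSFcard]
    have hmaps : ∀ t ∈ Finset.range r.toNat, (((((t:ℤ) * e0 : ℤ)) : ZMod q)) ∈ SF := by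
      intro t _
      simp only [hSF, Finset.mem_filter, Finset.mem_univ, true_and]
      exact shiftBy_stab hq2 hd2 hx (hsmul (t:ℤ))
    have hinj : Set.InjOn (fun t : ℕ => ((((t:ℤ) * e0 : ℤ)) : ZMod q)) (Finset.range r.toNat) := by
      intro t1 h1 t2 h2 he
      simp only [Finset.coe_range, Set.mem_Iio] at h1 h2
      simp only at he
      have hdvd : (q:ℤ) ∣ ((t1:ℤ) * e0 - (t2:ℤ) * e0) := by
        have hz : ((((t1:ℤ) * e0 - (t2:ℤ) * e0 : ℤ)) : ZMod q) = 0 := by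
          push_cast
          push_cast at he
          rw [he]
          ring
        exact (ZMod.intCast_zmod_eq_zero_iff_dvd _ q).1 hz
      have hb : |(t1:ℤ) * e0 - (t2:ℤ) * e0| < q := by
        have ht1 : (t1:ℤ) < r := by omega
        have ht2 : (t2:ℤ) < r := by omega
        rw [show (t1:ℤ) * e0 - (t2:ℤ) * e0 = ((t1:ℤ) - t2) * e0 by ring, abs_mul,
          abs_of_nonneg (by omega : (0:ℤ) ≤ e0)]
        have habs : |(t1:ℤ) - t2| ≤ r - 1 := by
          rw [abs_le]; omega
        nlinarith
      have := Int.eq_zero_of_abs_lt_dvd hdvd hb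
      have ht : (t1:ℤ) = t2 := by
        have he0' : e0 ≠ 0 := he0ne
        have : ((t1:ℤ) - t2) * e0 = 0 := by linarith
        rcases mul_eq_zero.1 this with h | h
        · omega
        · exact absurd h he0'
      exact_mod_cast ht
    have := Finset.card_le_card_of_injOn _ hmaps hinj
    simpa using this
  have hrs2 : s ≤ r.toNat := by
    rw [← hSFcard]
    set f : ZMod q → ℤ := fun a =>
      if h : ∀ i, σ (i + a) = σ i + a then
        Classical.choose (stab_shiftBy hq2 hd2 hx hdes h) / g else 0 with hf
    have hkey : ∀ a : ZMod q, (∀ i, σ (i + a) = σ i + a) → ((a.val : ℤ) = f a * e0) := by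
      intro a h
      simp only [hf, dif_pos h]
      set w := Classical.choose (stab_shiftBy hq2 hd2 hx hdes h) with hwdef
      have hws : ShiftBy q d x w ((a.val : ℤ)) :=
        Classical.choose_spec (stab_shiftBy hq2 hd2 hx hdes h)
      obtain ⟨t, ht⟩ := (hgdvd w).1 ⟨_, hws⟩
      have h2 : ShiftBy q d x w (t * e0) := by
        have h3 := hsmul t
        rw [mul_comm t g, ← ht] at h3
        exact h3
      have h4 := shiftBy_unique_e hq2 hx hws h2
      rw [ht, Int.mul_ediv_cancel_left _ (by omega : g ≠ 0)]
      exact h4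
    have hmaps : ∀ a ∈ SF, f a ∈ Finset.Icc (0:ℤ) (r - 1) := by
      intro a ha
      simp only [hSF, Finset.mem_filter, Finset.mem_univ, true_and] at ha
      have h1 := hkey a ha
      have hval0 : (0:ℤ) ≤ (a.val : ℤ) := by positivity
      have hvalq : (a.val : ℤ) < q := by exact_mod_cast ZMod.val_lt a
      rw [Finset.mem_Icc]
      constructor
      · nlinarith
      · nlinarith [hq_eq]
    have hinj : Set.InjOn f SF := by
      intro a ha b hb he
      simp only [hSF, Finset.coe_filter, Set.mem_setOf_eq] at ha hb
      have h1 := hkey a ha.2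
      have h2 := hkey b hb.2
      have hval : (a.val : ℤ) = (b.val : ℤ) := by rw [h1, h2, he]
      have hval' : a.val = b.val := by exact_mod_cast hval
      calc a = ((a.val : ℕ) : ZMod q) := (ZMod.natCast_rightInverse a).symm
        _ = ((b.val : ℕ) : ZMod q) := by rw [hval']
        _ = b := ZMod.natCast_rightInverse b
    have hcard := Finset.card_le_card_of_injOn f hmaps hinj
    have : (Finset.Icc (0:ℤ) (r-1)).card = r.toNat := by
      rw [Int.card_Icc]
      omega
    omega
  have hsr : (s : ℤ) = r := by omega
  exact ⟨g, e0, hg1, he0pos, by rw [hsr]; linarith [hr], he0⟩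

end ShiftSec

section FinalHelpers

variable {q d : ℕ} [NeZero q] {σ : Equiv.Perm (ZMod q)} {x : ZMod q → ℝ}

lemma liftX_eq_orbit (k : ℤ) : ∃ t : ℤ, liftX q x k = x ((k : ZMod q)) + t := by
  have h : ((k : ℤ) : ZMod q) = (((rep q ((k : ZMod q)) : ℕ) : ℤ) : ZMod q) := by
    rw [intCast_rep]
  obtain ⟨t, _, ht⟩ := liftX_sub_int (q := q) (x := x) h
  exact ⟨t, by rw [ht, liftX_rep]⟩

lemma fract_eq_of_Ico {a b : ℝ} (hb : b ∈ Set.Ico (0:ℝ) 1) (t : ℤ) (h : a = b + t) :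
    Int.fract a = b := by
  rw [h, Int.fract_add_intCast, Int.fract_eq_self.2 ⟨hb.1, hb.2⟩]

lemma fract_fract_sub (a b : ℝ) : Int.fract (Int.fract a - b) = Int.fract (a - b) := by
  have h1 : Int.fract a - b = (a - b) - (⌊a⌋ : ℤ) := by
    rw [← Int.self_sub_floor]
    ring
  rw [h1, Int.fract_sub_intCast]

/-- Bullet 1 construction: rotating the unique realization by `-n/(d-1)` yields a
realization of a rotation-conjugate. -/
lemma rotate_realization (hq2 : 2 ≤ q) (hd2 : 2 ≤ d)
    (hnf : ∀ i : ZMod q, σ i ≠ i) (hx : MkRealization q d σ x)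
    (hdes : desNum q σ = d) (n : ℕ) :
    ∃ j : ℕ, ∃ y : ZMod q → ℝ,
      MkRealization q d (rotPerm q ^ j * σ * (rotPerm q ^ j)⁻¹) y ∧
      Set.range y = (fun t => Int.fract (t - (n : ℝ) / ((d : ℝ) - 1))) '' Set.range x := by
  have hdRpos : (0:ℝ) < (d:ℝ) - 1 := by
    have : (2:ℝ) ≤ d := by exact_mod_cast hd2
    linarith
  have hdR : ((d:ℝ) - 1) ≠ 0 := ne_of_gt hdRpos
  set c : ℝ := (n:ℝ)/((d:ℝ)-1) with hc
  have hc0 : 0 ≤ c := by positivity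
  have hdc : (d:ℝ) * c = c + n := by
    rw [hc]; field_simp; ring
  have hXmono := liftX_strictMono hq2 hx
  have hrep1 : liftX q x (1 : ℤ) = x 1 := by
    have h := liftX_rep (q := q) (x := x) (i := 1)
    have h2 : rep q (1 : ZMod q) = 1 := by
      have := rep_natval (q := q) (m := 1) le_rfl (by omega)
      simpa using this
    rw [h2] at h
    exact_mod_cast h
  have hPne : liftX q x (1 - q) < c := by
    have h1 : liftX q x (1 + q * (-1)) = liftX q x 1 + ((-1 : ℤ) : ℝ) := liftX_add_mul _ _
    rw [show (1 - (q:ℤ)) = 1 + q * (-1) by ring, h1, hrep1]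
    have := (hx01 hx 1).2
    push_cast
    linarith
  have hPbdd : ∀ z : ℤ, liftX q x z < c → z ≤ ⌈(q:ℝ) * (c+1)⌉ := by
    intro z hz
    have h1 := abs_le.1 (liftX_near hx z)
    have hqR := hq0R' (q := q)
    have h3 : (z:ℝ) < q * (c + 1) := by
      have h2 : (z:ℝ)/q < c + 1 := by linarith
      calc (z:ℝ) = q * ((z:ℝ)/q) := by field_simp
        _ < q * (c+1) := mul_lt_mul_of_pos_left h2 hqR
    have h4 : (z:ℝ) ≤ (⌈(q:ℝ)*(c+1)⌉ : ℝ) := le_trans h3.le (Int.le_ceil _)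
    exact_mod_cast h4
  obtain ⟨p, hp, hpmax⟩ := Int.exists_greatest_of_bdd ⟨_, hPbdd⟩ ⟨1 - q, hPne⟩
  have hp1 : c ≤ liftX q x (p + 1) := by
    by_contra h
    push_neg at h
    have := hpmax _ h
    omega
  have hne : liftX q x (p+1) ≠ c := by
    intro heq
    have h1 : liftX q x (liftPhi hx (p+1)) = liftX q x ((p+1) + q * n) := by
      rw [liftX_phi hx, liftX_add_mul, heq, hdc]
      push_cast
      ring
    have h2 := liftX_injective hq2 hx h1
    have h3 := liftPhi_cast hx (p+1)
    rw [h2] at h3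
    have h4 : (((p+1) + (q:ℤ)*n : ℤ) : ZMod q) = (((p+1) : ℤ) : ZMod q) := by
      push_cast
      simp [ZMod.natCast_self]
    rw [h4] at h3
    exact hnf _ h3.symm
  have hgt : c < liftX q x (p+1) := lt_of_le_of_ne hp1 (Ne.symm hne)
  set j : ℕ := ((-p : ℤ) : ZMod q).val with hj
  have hjz : ((j:ℕ) : ZMod q) = ((-p : ℤ) : ZMod q) := ZMod.natCast_rightInverse _
  set σ' := rotPerm q ^ j * σ * (rotPerm q ^ j)⁻¹ with hσ'
  set pz : ZMod q := ((p : ℤ) : ZMod q) with hpz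
  have hσ'app : ∀ i : ZMod q, σ' i = σ (i + pz) - pz := by
    intro i
    have e1 : i - ((j:ℕ) : ZMod q) = i + pz := by
      rw [hjz, hpz]; push_cast; ring
    rw [hσ', conj_apply, e1, hjz, hpz]
    push_cast
    ring
  set y : ZMod q → ℝ := fun i => liftX q x (p + rep q i) - c with hy
  have hylow : ∀ i : ZMod q, c < liftX q x (p + (rep q i : ℤ)) := by
    intro i
    have hr := rep_pos (q := q) i
    have h1 : p + 1 ≤ p + (rep q i : ℤ) := by
      have : (1:ℤ) ≤ (rep q i : ℤ) := by exact_mod_cast hr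
      omega
    exact lt_of_lt_of_le hgt (hXmono.monotone h1)
  have hyhigh : ∀ i : ZMod q, liftX q x (p + (rep q i : ℤ)) < c + 1 := by
    intro i
    have hr := rep_le (q := q) i
    have h1 : p + (rep q i : ℤ) ≤ p + q := by
      have : (rep q i : ℤ) ≤ q := by exact_mod_cast hr
      omega
    have h2 : liftX q x (p + q) = liftX q x p + 1 := by
      have h3 := liftX_add_mul (q := q) (x := x) p 1
      rw [show p + (q:ℤ)*1 = p + q by ring] at h3
      simpa using h3
    have h4 := hXmono.monotone h1
    rw [h2] at h4
    linarith [hp]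
  have hyIco : ∀ i, y i ∈ Set.Ico (0:ℝ) 1 := by
    intro i
    constructor
    · simp only [hy]; linarith [hylow i]
    · simp only [hy]; linarith [hyhigh i]
  have hreal : MkRealization q d σ' y := by
    refine ⟨fun i => ⟨by simp only [hy]; linarith [hylow i],
      by simp only [hy]; linarith [hyhigh i]⟩, ?_, ?_⟩
    · intro i i' hrlt
      simp only [hy]
      have h1 : p + (rep q i : ℤ) < p + (rep q i' : ℤ) := by
        have : (rep q i : ℤ) < (rep q i' : ℤ) := by exact_mod_cast hrlt
        omega
      have := hXmono h1
      linarith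
    · intro i
      have c1 := liftPhi_cast hx (p + (rep q i : ℤ))
      have e1 : (((p + (rep q i : ℤ) : ℤ)) : ZMod q) = pz + i := by
        push_cast
        rw [natCast_rep, hpz]
        try push_cast
        try ring
      rw [e1] at c1
      have hAcast : (((liftPhi hx (p + (rep q i : ℤ)) - (q:ℤ) * n : ℤ)) : ZMod q)
          = (((p + (rep q (σ' i) : ℤ) : ℤ)) : ZMod q) := by
        push_cast
        rw [c1, natCast_rep, hσ'app i, hpz]
        push_cast
        rw [show (((p:ℤ)) : ZMod q) + i = i + (((p:ℤ)) : ZMod q) from add_comm _ _]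
        simp [ZMod.natCast_self]
        try ring
      obtain ⟨t, _, ht⟩ := liftX_sub_int (q := q) (x := x) hAcast
      refine ⟨t, ?_⟩
      have k1 := liftX_phi hx (p + (rep q i : ℤ))
      have hphi : liftX q x (liftPhi hx (p + (rep q i : ℤ)))
          = liftX q x (liftPhi hx (p + (rep q i : ℤ)) - q*n) + n := by
        have h5 := liftX_add_mul (q := q) (x := x) (liftPhi hx (p + (rep q i : ℤ)) - q*n) n
        rw [show liftPhi hx (p + (rep q i : ℤ)) - q*n + (q:ℤ)*n
          = liftPhi hx (p + (rep q i : ℤ)) by ring] at h5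
        exact h5
      simp only [hy]
      rw [hphi] at k1
      push_cast at ht ⊢
      linarith [k1, ht, hdc]
  refine ⟨j, y, hreal, ?_⟩
  ext u
  constructor
  · rintro ⟨i, rfl⟩
    refine ⟨x (((p + (rep q i : ℤ) : ℤ) : ZMod q)), ⟨_, rfl⟩, ?_⟩
    obtain ⟨t, ht⟩ := liftX_eq_orbit (q := q) (x := x) (p + (rep q i : ℤ))
    refine fract_eq_of_Ico (hyIco i) (-t) ?_
    simp only [hy]
    rw [ht]
    push_cast
    ring
  · rintro ⟨v, ⟨i0, rfl⟩, rfl⟩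
    refine ⟨i0 - pz, ?_⟩
    obtain ⟨t, ht⟩ := liftX_eq_orbit (q := q) (x := x) (p + (rep q (i0 - pz) : ℤ))
    have e1 : ((p + (rep q (i0 - pz) : ℤ) : ℤ) : ZMod q) = i0 := by
      push_cast
      rw [natCast_rep, hpz]
      push_cast
      ring
    rw [e1] at ht
    refine (fract_eq_of_Ico (hyIco (i0 - pz)) (-t) ?_).symm
    simp only [hy]
    rw [ht]
    push_cast
    ring

/-- Bullet 2 helper: any realization of a rotation conjugate is a rotated copy. -/
lemma conj_realization_shift (hq2 : 2 ≤ q) (hd2 : 2 ≤ d) {σ₂ : Equiv.Perm (ZMod q)}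
    {y : ZMod q → ℝ} (hx : MkRealization q d σ x) (hy : MkRealization q d σ₂ y)
    (hdes : desNum q σ = d) (j : ℕ)
    (hσ₂ : σ₂ = rotPerm q ^ j * σ * (rotPerm q ^ j)⁻¹) :
    ∃ m0 : ℤ, Set.range y
      = (fun u => Int.fract (u + (m0:ℝ)/((d:ℝ)-1))) '' Set.range x := by
  set jz : ZMod q := ((j:ℕ) : ZMod q) with hjzdef
  have hJz : (((j : ℤ)) : ZMod q) = jz := by rw [hjzdef]; push_cast; rfl
  have hJ : ∀ i : ZMod q, σ₂ i = σ (i - (((j:ℤ)) : ZMod q)) + (((j:ℤ)) : ZMod q) := by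
    intro i
    rw [hσ₂, conj_apply, hJz]
  have hdes2 : desNum q σ₂ = d := by
    rw [desNum_conj σ σ₂ (((j:ℤ)) : ZMod q) hJ, hdes]
  obtain ⟨m0, hm0⟩ := classification hq2 hd2 hx hy hdes hdes2 (j:ℤ) hJ
  refine ⟨m0, ?_⟩
  have hYX : ∀ i : ZMod q, ∃ t : ℤ, y i = x (i - jz) + t + (m0:ℝ)/((d:ℝ)-1) := by
    intro i
    have h1 := hm0 ((rep q i : ℤ) - j)
    rw [show (rep q i : ℤ) - (j:ℤ) + (j:ℤ) = (rep q i : ℤ) by ring, liftX_rep] at h1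
    obtain ⟨t, ht⟩ := liftX_eq_orbit (q := q) (x := x) ((rep q i : ℤ) - j)
    have e1 : (((rep q i : ℤ) - (j:ℤ) : ℤ) : ZMod q) = i - jz := by
      push_cast
      rw [natCast_rep, hjzdef]
      try push_cast
      try ring
    rw [e1] at ht
    exact ⟨t, by rw [h1, ht]⟩
  have hyIco : ∀ i, y i ∈ Set.Ico (0:ℝ) 1 := fun i => ⟨(hy.1 i).1.le, (hy.1 i).2⟩
  ext u
  constructor
  · rintro ⟨i, rfl⟩
    refine ⟨x (i - jz), ⟨_, rfl⟩, ?_⟩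
    obtain ⟨t, ht⟩ := hYX i
    refine fract_eq_of_Ico (hyIco i) (-t) ?_
    rw [ht]
    push_cast
    ring
  · rintro ⟨v, ⟨i0, rfl⟩, rfl⟩
    refine ⟨i0 + jz, ?_⟩
    obtain ⟨t, ht⟩ := hYX (i0 + jz)
    rw [show i0 + jz - jz = i0 by ring] at ht
    refine (fract_eq_of_Ico (hyIco (i0+jz)) (-t) ?_).symm
    rw [ht]
    push_cast
    ring

end FinalHelpers

end RotAux

/-- Let `τ = [σ]` with `des τ = d ≥ 2`, `sym τ = s`, where the representative `σ`
has signature ending in `1` (`a_q = 1`), and let `𝒪` (given by `x`) be the unique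
realization of `σ` under `m_d`. Then the rotated copies `𝒪 - j/(d-1) (mod ℤ)` for
`0 ≤ j < (d-1)/s` form all the realizations of `τ` under `m_d`, and each of these
orbits is invariant under the rigid rotation `t ↦ t - 1/s (mod ℤ)`. -/
theorem rotated_copies_form_all_realizations (q d s : ℕ) [NeZero q] (hq : 2 ≤ q)
    (σ : Equiv.Perm (ZMod q)) (hσ : IsQCycle q σ) (hd : desNum q σ = d)
    (hd2 : 2 ≤ d) (hs : symOrder q σ = s) (hsig : transMatrix q σ 0 0 = 1)
    (x : ZMod q → ℝ) (hx : MkRealization q d σ x) :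
    (∀ n : ℕ, n < (d - 1) / s → ∃ j : ℕ, ∃ y : ZMod q → ℝ,
        MkRealization q d (rotPerm q ^ j * σ * (rotPerm q ^ j)⁻¹) y ∧
        Set.range y = (fun t => Int.fract (t - (n : ℝ) / ((d : ℝ) - 1))) '' Set.range x) ∧
    (∀ (j : ℕ) (y : ZMod q → ℝ),
        MkRealization q d (rotPerm q ^ j * σ * (rotPerm q ^ j)⁻¹) y →
        ∃ n : ℕ, n < (d - 1) / s ∧
          Set.range y = (fun t => Int.fract (t - (n : ℝ) / ((d : ℝ) - 1))) '' Set.range x) ∧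
    (∀ n : ℕ, n < (d - 1) / s → ∀ i : ZMod q, ∃ i' : ZMod q,
        Int.fract (Int.fract (x i - (n : ℝ) / ((d : ℝ) - 1)) - 1 / (s : ℝ))
          = Int.fract (x i' - (n : ℝ) / ((d : ℝ) - 1))) := by
  classical
  obtain ⟨g, e0, hg1, he01, hsg, hshift⟩ := RotAux.sym_shift hq hd2 hx hd hs
  have hd2Z : (2:ℤ) ≤ d := by exact_mod_cast hd2
  have hdRpos : (0:ℝ) < (d:ℝ) - 1 := by
    have : (2:ℝ) ≤ d := by exact_mod_cast hd2
    linarith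
  have hdR : ((d:ℝ) - 1) ≠ 0 := ne_of_gt hdRpos
  have hs0 : 0 < s := by
    rcases Nat.eq_zero_or_pos s with h | h
    · exfalso; rw [h] at hsg; push_cast at hsg; omega
    · exact h
  have hgN : ((g.toNat : ℕ) : ℤ) = g := Int.toNat_of_nonneg (by omega)
  have hmulN : s * g.toNat = d - 1 := by
    have h2 : ((s * g.toNat : ℕ) : ℤ) = (d:ℤ) - 1 := by
      push_cast [hgN]
      exact hsg
    omega
  have hdivN : (d - 1) / s = g.toNat := by
    rw [← hmulN, Nat.mul_div_cancel_left _ hs0]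
  have h1ne : (1 : ZMod q) ≠ 0 := RotAux.one_ne_zero_zmod hq
  have hnf : ∀ i : ZMod q, σ i ≠ i := by
    intro i hfix
    obtain ⟨nn, hnn⟩ := hσ i (i + 1)
    have hpow : ∀ m : ℕ, (σ ^ m) i = i := by
      intro m
      induction m with
      | zero => rfl
      | succ k ih => rw [pow_succ, Equiv.Perm.mul_apply, hfix, ih]
    rw [hpow nn] at hnn
    exact h1ne (by linear_combination -hnn)
  have hpt_sub : ∀ i : ZMod q, ∃ (i' : ZMod q) (t : ℤ),
      x i - (g:ℝ)/((d:ℝ)-1) = x i' + t := by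
    intro i
    have h1 := hshift ((rep q i : ℤ) - e0)
    rw [show (rep q i : ℤ) - e0 + e0 = (rep q i : ℤ) by ring, RotAux.liftX_rep] at h1
    obtain ⟨t, ht⟩ := RotAux.liftX_eq_orbit (q := q) (x := x) ((rep q i : ℤ) - e0)
    exact ⟨_, t, by rw [← ht]; linarith⟩
  have hpt_add : ∀ i : ZMod q, ∃ (i' : ZMod q) (t : ℤ),
      x i + (g:ℝ)/((d:ℝ)-1) = x i' + t := by
    intro i
    have h1 := hshift ((rep q i : ℤ))
    rw [RotAux.liftX_rep] at h1
    obtain ⟨t, ht⟩ := RotAux.liftX_eq_orbit (q := q) (x := x) ((rep q i : ℤ) + e0)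
    exact ⟨_, t, by rw [← ht]; linarith⟩
  set S : ℤ → Set ℝ := fun t => (fun u => Int.fract (u - (t:ℝ)/((d:ℝ)-1))) '' Set.range x
    with hS
  have hc_add : ∀ t : ℤ, ((t + g : ℤ):ℝ)/((d:ℝ)-1)
      = (t:ℝ)/((d:ℝ)-1) + (g:ℝ)/((d:ℝ)-1) := by
    intro t; push_cast; ring
  have hS_step : ∀ t : ℤ, S (t + g) = S t := by
    intro t
    ext u
    simp only [hS, Set.mem_image, Set.mem_range]
    constructor
    · rintro ⟨v, ⟨i, rfl⟩, rfl⟩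
      obtain ⟨i', tt, hpt⟩ := hpt_sub i
      refine ⟨x i', ⟨i', rfl⟩, ?_⟩
      have he : x i' - (t:ℝ)/((d:ℝ)-1)
          = (x i - ((t + g : ℤ):ℝ)/((d:ℝ)-1)) + ((-tt : ℤ):ℝ) := by
        rw [hc_add t]
        push_cast
        linarith [hpt]
      rw [he, Int.fract_add_intCast]
    · rintro ⟨v, ⟨i, rfl⟩, rfl⟩
      obtain ⟨i', tt, hpt⟩ := hpt_add i
      refine ⟨x i', ⟨i', rfl⟩, ?_⟩
      have he : x i' - ((t + g : ℤ):ℝ)/((d:ℝ)-1)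
          = (x i - (t:ℝ)/((d:ℝ)-1)) + ((-tt : ℤ):ℝ) := by
        rw [hc_add t]
        push_cast
        linarith [hpt]
      rw [he, Int.fract_add_intCast]
  have hS_mul : ∀ (l : ℤ) (t : ℤ), S (t + g * l) = S t := by
    intro l
    induction l using Int.induction_on with
    | zero => intro t; simp
    | succ k ih =>
      intro t
      rw [show t + g * ((k:ℤ)+1) = (t + g * k) + g by ring, hS_step, ih]
    | pred k ih =>
      intro t
      have h1 := hS_step (t + g * (-(k:ℤ)-1))
      rw [show t + g * (-(k:ℤ)-1) + g = t + g * (-(k:ℤ)) by ring] at h1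
      rw [← h1]
      exact ih t
  refine ⟨?_, ?_, ?_⟩
  · intro n _
    exact RotAux.rotate_realization hq hd2 hnf hx hd n
  · intro j y hy
    obtain ⟨m0, hm0⟩ := RotAux.conj_realization_shift hq hd2 hx hy hd j rfl
    have hnn : 0 ≤ (-m0) % g := Int.emod_nonneg _ (by omega)
    have hlt : (-m0) % g < g := Int.emod_lt_of_pos _ (by omega)
    refine ⟨((-m0) % g).toNat, ?_, ?_⟩
    · rw [hdivN]; omega
    · have h3 : Set.range y = S (-m0) := by
        rw [hm0]
        have hfun : (fun u : ℝ => Int.fract (u + (m0:ℝ)/((d:ℝ)-1)))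
            = (fun u : ℝ => Int.fract (u - ((-m0 : ℤ):ℝ)/((d:ℝ)-1))) := by
          funext u
          congr 1
          push_cast
          try ring
        rw [hfun]
      have hsplit : -m0 = ((((-m0) % g).toNat : ℕ) : ℤ) + g * ((-m0)/g) := by
        have h4 := Int.mul_ediv_add_emod (-m0) g
        omega
      have h5 : S (-m0) = S (((((-m0) % g).toNat : ℕ)) : ℤ) := by
        conv_lhs => rw [hsplit]
        exact hS_mul _ _
      rw [h3, h5]
      simp only [hS, Int.cast_natCast]
  · intro n hn i
    obtain ⟨i', t, hpt⟩ := hpt_sub i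
    refine ⟨i', ?_⟩
    have hsR : ((s:ℝ)) * (g:ℝ) = (d:ℝ) - 1 := by exact_mod_cast hsg
    have hs0R : ((s:ℝ)) ≠ 0 := Nat.cast_ne_zero.2 (by omega)
    have hgR : ((g:ℝ)) ≠ 0 := by
      intro h0
      rw [h0, mul_zero] at hsR
      linarith
    have h1s : (1:ℝ)/(s:ℝ) = (g:ℝ)/((d:ℝ)-1) := by
      rw [div_eq_div_iff hs0R hdR]
      linarith [hsR]
    rw [RotAux.fract_fract_sub, h1s]
    have he : x i - (n:ℝ)/((d:ℝ)-1) - (g:ℝ)/((d:ℝ)-1)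
        = (x i' - (n:ℝ)/((d:ℝ)-1)) + ((t : ℤ):ℝ) := by
      linarith [hpt]
    rw [he, Int.fract_add_intCast]
end
end

section
/- Let σ ∈ 𝒞_q with des(σ) = d, let k > d, and let n = (n₁,…,n_q) be a σ-admissible vector in degree k. Then there are exactly n_q realizations 𝒪 of σ under m_k with fix(𝒪) = n. More precisely, for each integer 0 ≤ n < n_q there is a unique realization 𝒪_n = {x₁,…,x_q} of σ under m_k with fixed point distribution (n₁,…,n_q) and with exactly n fixed points of m_k in the interval (0, x₁); consequently 𝒪_n = 𝒪_0 + n/(k−1) (mod ℤ) for 0 ≤ n < n_q. -/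
open scoped Classical

noncomputable section

set_option linter.unusedSectionVars false

namespace GRFPD
variable {q : ℕ} [NeZero q]

lemma rep_pos (i : ZMod q) : 1 ≤ rep q i := by
  unfold rep; split
  · exact Nat.one_le_iff_ne_zero.2 (NeZero.ne q)
  · exact Nat.one_le_iff_ne_zero.2 (by simpa [ZMod.val_eq_zero] using ‹i ≠ 0›)

lemma rep_le (i : ZMod q) : rep q i ≤ q := by
  unfold rep; split
  · exact le_rfl
  · exact (ZMod.val_lt i).le

lemma rep_lt_of_ne (i : ZMod q) (h : i ≠ 0) : rep q i < q := by
  unfold rep; rw [if_neg h]; exact ZMod.val_lt i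

lemma rep_zero : rep q (0 : ZMod q) = q := by simp [rep]

lemma rep_eq_q_iff (i : ZMod q) : rep q i = q ↔ i = 0 := by
  constructor
  · intro h; by_contra hne; exact absurd h (rep_lt_of_ne i hne).ne
  · intro h; simp [h, rep_zero]

lemma rep_injective : Function.Injective (rep q) := by
  intro i j h
  by_cases hi : i = 0 <;> by_cases hj : j = 0
  · rw [hi, hj]
  · exfalso; rw [hi, rep_zero] at h; exact absurd h.symm (rep_lt_of_ne j hj).ne
  · exfalso; rw [hj, rep_zero] at h; exact absurd h (rep_lt_of_ne i hi).ne
  · unfold rep at h; rw [if_neg hi, if_neg hj] at h; exact ZMod.val_injective q h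

lemma rep_step (i : ZMod q) (h : i ≠ 0) : rep q (i + 1) = rep q i + 1 := by
  have hq1 : 1 ≤ q := Nat.one_le_iff_ne_zero.2 (NeZero.ne q)
  have hival : i.val < q := ZMod.val_lt i
  have hrep : rep q i = i.val := if_neg h
  by_cases h2 : i.val + 1 = q
  · -- i + 1 = 0
    have : i + 1 = 0 := by
      have : ((i.val + 1 : ℕ) : ZMod q) = 0 := by rw [h2]; exact ZMod.natCast_self q
      simpa [ZMod.natCast_val, ZMod.cast_id] using this
    rw [this, rep_zero, hrep, h2]
  · have hlt : i.val + 1 < q := lt_of_le_of_ne (Nat.succ_le_of_lt hival) h2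
    have hne : i + 1 ≠ 0 := by
      intro h0
      have : ((i.val + 1 : ℕ) : ZMod q) = 0 := by
        simpa [ZMod.natCast_val, ZMod.cast_id] using h0
      have hd := (ZMod.natCast_eq_zero_iff _ _).1 this
      have := Nat.le_of_dvd (by omega) hd
      omega
    have hval : (i + 1).val = i.val + 1 := by
      have : ((i.val + 1 : ℕ) : ZMod q) = i + 1 := by
        push_cast [ZMod.natCast_val, ZMod.cast_id]; ring
      rw [← this, ZMod.val_natCast_of_lt hlt]
    rw [rep, if_neg hne, hval, hrep]


-- enumeration lemma
lemma rep_cast {v : ℕ} (h1 : 1 ≤ v) (h2 : v ≤ q) : rep q (v : ZMod q) = v := by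
  by_cases h : v = q
  · subst h; simp [rep, ZMod.natCast_self]
  · have hlt : v < q := lt_of_le_of_ne h2 h
    have hv : ((v : ZMod q)).val = v := ZMod.val_natCast_of_lt hlt
    have hne : (v : ZMod q) ≠ 0 := by
      intro h0; rw [h0, ZMod.val_zero] at hv; omega
    rw [rep, if_neg hne, hv]

-- every i is cast of its rep
lemma cast_rep (i : ZMod q) : ((rep q i : ℕ) : ZMod q) = i := by
  by_cases h : i = 0
  · simp [h, rep, ZMod.natCast_self]
  · rw [rep, if_neg h]; simp [ZMod.natCast_val, ZMod.cast_id]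

-- cycle facts
variable {σ : Equiv.Perm (ZMod q)}

lemma orbit_inj (hσ : IsQCycle q σ) (i : ZMod q) :
    ∀ a b, a < b → b < q → (σ ^ a) i ≠ (σ ^ b) i := by
  intro a b hab hbq heq
  set p := b - a with hp
  have hp1 : 1 ≤ p := by omega
  have hpq : p < q := by omega
  have hfix : (σ ^ p) ((σ ^ a) i) = (σ ^ a) i := by
    have : σ ^ p * σ ^ a = σ ^ b := by rw [← pow_add]; congr 1; omega
    have := congrArg (fun τ => τ i) this
    simpa using this.trans heq.symm
  -- orbit of j := σ^a i has size ≤ p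
  set j := (σ ^ a) i with hj
  have hper : ∀ t : ℕ, (σ ^ t) j = (σ ^ (t % p)) j := by
    intro t
    induction t using Nat.strong_induction_on with
    | _ t ih =>
      by_cases ht : t < p
      · rw [Nat.mod_eq_of_lt ht]
      · push_neg at ht
        have h1 : (σ ^ t) j = (σ ^ (t - p)) j := by
          have : σ ^ t = σ ^ (t - p) * σ ^ p := by rw [← pow_add]; congr 1; omega
          rw [this]; simp [Equiv.Perm.mul_apply, hfix]
        rw [h1, ih (t - p) (by omega), ← Nat.mod_eq_sub_mod ht]
  have hsurj : ∀ y : ZMod q, y ∈ Finset.image (fun t => (σ ^ t) j) (Finset.range p) := by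
    intro y
    obtain ⟨t, ht⟩ := hσ j y
    rw [Finset.mem_image]
    exact ⟨t % p, Finset.mem_range.2 (Nat.mod_lt _ (by omega)), by rw [← hper, ht]⟩
  have hcard : (Finset.univ : Finset (ZMod q)).card ≤ p := by
    calc (Finset.univ : Finset (ZMod q)).card
        ≤ (Finset.image (fun t => (σ ^ t) j) (Finset.range p)).card := by
          apply Finset.card_le_card; intro y _; exact hsurj y
      _ ≤ p := (Finset.card_image_le).trans (by simp)
  rw [Finset.card_univ, ZMod.card] at hcard
  omega

lemma sigma_pow_q (hσ : IsQCycle q σ) (i : ZMod q) : (σ ^ q) i = i := by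
  have hq0 : 0 < q := Nat.pos_of_ne_zero (NeZero.ne q)
  -- the orbit map on range q is surjective onto ZMod q
  have hsurj : ∀ y : ZMod q, ∃ t < q, (σ ^ t) i = y := by
    intro y
    have hinj : Set.InjOn (fun t => (σ ^ t) i) (Finset.range q) := by
      intro a ha b hb heq
      simp only [Finset.coe_range, Set.mem_Iio] at ha hb
      by_contra hne
      rcases Nat.lt_or_ge a b with h | h
      · exact orbit_inj hσ i a b h hb heq
      · exact orbit_inj hσ i b a (by omega) ha heq.symm
    have himg : (Finset.image (fun t => (σ ^ t) i) (Finset.range q)).card = q := by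
      rw [Finset.card_image_of_injOn hinj, Finset.card_range]
    have : Finset.image (fun t => (σ ^ t) i) (Finset.range q) = Finset.univ := by
      apply Finset.eq_univ_of_card
      rw [himg, ZMod.card]
    have hy : y ∈ Finset.image (fun t => (σ ^ t) i) (Finset.range q) := this ▸ Finset.mem_univ y
    obtain ⟨t, ht, htv⟩ := Finset.mem_image.1 hy
    exact ⟨t, Finset.mem_range.1 ht, htv⟩
  obtain ⟨t, htq, ht⟩ := hsurj ((σ ^ q) i)
  by_cases ht0 : t = 0
  · subst ht0; simpa using ht.symm
  · exfalso
    have h2 : (σ ^ (q - t)) ((σ ^ t) i) = (σ ^ t) i := by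
      rw [← Equiv.Perm.mul_apply, ← pow_add]
      have hqt : q - t + t = q := by omega
      rw [hqt, ht]
    exact orbit_inj hσ ((σ ^ t) i) 0 (q - t) (by omega) (by omega) (by simpa using h2.symm)

lemma sigma_ne_self (hσ : IsQCycle q σ) (hq : 2 ≤ q) (i : ZMod q) : σ i ≠ i := by
  have := orbit_inj hσ i 0 1 (by omega) (by omega)
  simpa using fun h => this (by simpa using h.symm)


def psi (σ : Equiv.Perm (ZMod q)) (l : ZMod q) : ℕ := (σ l - l).val

lemma psi_pos (hσ : IsQCycle q σ) (hq : 2 ≤ q) (l : ZMod q) : 1 ≤ psi σ l := by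
  have : σ l - l ≠ 0 := sub_ne_zero.2 (sigma_ne_self hσ hq l)
  exact Nat.one_le_iff_ne_zero.2 (by simpa [psi, ZMod.val_eq_zero] using this)

lemma psi_lt (l : ZMod q) : psi σ l < q := ZMod.val_lt _

lemma val_sub_comm (a b : ZMod q) (h : a ≠ b) : (b - a).val = q - (a - b).val := by
  haveI : NeZero (a - b) := ⟨sub_ne_zero.2 h⟩
  have : b - a = -(a - b) := by ring
  rw [this, ZMod.val_neg_of_ne_zero]

lemma rep_mod (i : ZMod q) : rep q i % q = i.val := by
  unfold rep; split
  · simp [‹i = 0›]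
  · exact Nat.mod_eq_of_lt (ZMod.val_lt i)

/-- `l` is marked iff `ψ` has a descent at `l`. -/
lemma marked_iff (hσ : IsQCycle q σ) (hq : 2 ≤ q) (l : ZMod q) :
    transMatrix q σ l l = 1 ↔ psi σ (l + 1) < psi σ l := by
  have h1 : (l - σ l).val = q - psi σ l := val_sub_comm _ _ (sigma_ne_self hσ hq l)
  have hppos := psi_pos hσ hq l
  have hppos' := psi_pos hσ hq (l + 1)
  have hplt := psi_lt (σ := σ) l
  have hplt' := psi_lt (σ := σ) (l + 1)
  -- σ(l+1) - σ l = cast (ψ(l+1) + 1 + (q - ψ l))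
  have hkey : σ (l + 1) - σ l = ((psi σ (l + 1) + 1 + (q - psi σ l) : ℕ) : ZMod q) := by
    push_cast
    rw [show ((psi σ (l+1) : ZMod q)) = σ (l+1) - (l+1) by
          simp [psi, ZMod.natCast_val, ZMod.cast_id],
        show (((q - psi σ l : ℕ) : ZMod q)) = l - σ l by
          rw [← h1]; simp [ZMod.natCast_val, ZMod.cast_id]]
    push_cast
    ring
  have hval : (σ (l + 1) - σ l).val = (psi σ (l + 1) + 1 + (q - psi σ l)) % q := by
    rw [hkey, ZMod.val_natCast]
  have hne0 : (σ (l + 1) - σ l).val ≠ 0 := by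
    simp only [ne_eq, ZMod.val_eq_zero, sub_eq_zero]
    intro h
    have h2 : l + 1 = l := σ.injective h
    have h3 : (1 : ZMod q) = 0 := by
      have := congrArg (fun z => z - l) h2
      simpa [add_sub_cancel_left] using this
    have h4 : ((1 : ℕ) : ZMod q) = 0 := by exact_mod_cast h3
    have := (ZMod.natCast_eq_zero_iff _ _).1 h4
    have := Nat.le_of_dvd (by omega) this
    omega
  have hiff : transMatrix q σ l l = 1 ↔ (l - σ l).val < (σ (l + 1) - σ l).val := by
    constructor
    · intro h; by_contra hc; simp [transMatrix, hc] at h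
    · intro h; simp [transMatrix, h]
  rw [hiff, h1, hval]
  set a := psi σ (l + 1) with ha
  set b := psi σ l with hb
  have hSne : (a + 1 + (q - b)) % q ≠ 0 := by rw [← hval]; exact hne0
  rcases le_or_gt b a with hba | hba
  · have h2 : a + 1 + (q - b) = q + (a + 1 - b) := by omega
    rw [h2, Nat.add_mod_left, Nat.mod_eq_of_lt (by omega)]
    omega
  · have hSle : a + 1 + (q - b) ≤ q := by omega
    have hSlt : a + 1 + (q - b) < q :=
      lt_of_le_of_ne hSle (fun h => hSne (by rw [h]; exact Nat.mod_self q))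
    rw [Nat.mod_eq_of_lt hSlt]
    omega

/-- The fundamental relation between `rep (σ l)`, `rep l` and `ψ l`. -/
lemma rep_sigma (hσ : IsQCycle q σ) (hq : 2 ≤ q) (l : ZMod q) :
    rep q (σ l) + q * (if rep q (σ l) < rep q l then 1 else 0) = rep q l + psi σ l := by
  set R1 := rep q (σ l) with hR1
  set R2 := rep q l with hR2
  have hb1 := rep_pos (σ l)
  have hb2 := rep_le (σ l)
  have hb3 := rep_pos l
  have hb4 := rep_le l
  have hp1 := psi_pos hσ hq l
  have hp2 := psi_lt (σ := σ) l
  have hmod : R1 % q = (R2 + psi σ l) % q := by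
    have h1 : R1 % q = (σ l).val := rep_mod (σ l)
    have h2 : (σ l) = l + (σ l - l) := by ring
    have h3 : (σ l).val = (l.val + psi σ l) % q := by
      conv_lhs => rw [h2]
      rw [ZMod.val_add]
      rfl
    have hlv : l.val % q = l.val := Nat.mod_eq_of_lt (ZMod.val_lt l)
    rw [rep_mod (σ l), h3, Nat.add_mod l.val, Nat.add_mod R2, rep_mod l, hlv]
  have hcong : Nat.ModEq q (R1 + q * (if R1 < R2 then 1 else 0)) (R2 + psi σ l) := by
    have h0 : Nat.ModEq q R1 (R2 + psi σ l) := by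
      unfold Nat.ModEq; exact hmod
    calc R1 + q * (if R1 < R2 then 1 else 0) ≡ R1 + 0 [MOD q] := by
          exact Nat.ModEq.add_left _ (Nat.modEq_zero_iff_dvd.2 (Dvd.intro _ rfl))
      _ = R1 := by ring
      _ ≡ R2 + psi σ l [MOD q] := h0
  apply Nat.ModEq.eq_of_abs_lt hcong
  rw [abs_sub_lt_iff]
  constructor <;> (push_cast; split <;> omega)


lemma rep_one (hq : 2 ≤ q) : rep q (1 : ZMod q) = 1 := by
  have h := rep_cast (q := q) (v := 1) le_rfl (by omega)
  simpa using h

lemma rep_pred (hq : 2 ≤ q) (b : ZMod q) (h : 2 ≤ rep q b) :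
    b - 1 ≠ 0 ∧ rep q (b - 1) + 1 = rep q b := by
  have hb1 : b - 1 ≠ 0 := by
    intro h0
    have : b = 1 := by
      have := congrArg (fun z => z + 1) h0
      simpa [sub_add_cancel] using this
    rw [this, rep_one hq] at h
    omega
  refine ⟨hb1, ?_⟩
  have := rep_step (b - 1) hb1
  rw [sub_add_cancel] at this
  omega

lemma psi_chain (hq : 2 ≤ q) :
    ∀ N : ℕ, ∀ a b : ZMod q, rep q b = N → rep q a ≤ rep q b →
      (∀ l, rep q a ≤ rep q l → rep q l < rep q b → psi σ l ≤ psi σ (l + 1)) →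
      psi σ a ≤ psi σ b := by
  intro N
  induction N using Nat.strong_induction_on with
  | _ N ih =>
    intro a b hN hab hmono
    rcases eq_or_lt_of_le hab with heq | hlt
    · rw [rep_injective heq]
    · have h2 : 2 ≤ rep q b := by have := rep_pos a; omega
      obtain ⟨hb1, hstep⟩ := rep_pred hq b h2
      have hb' : rep q (b - 1) = N - 1 := by omega
      have h1 : psi σ a ≤ psi σ (b - 1) := by
        apply ih (N - 1) (by have := rep_pos b; omega) a (b - 1) hb' (by omega)
        intro l hl1 hl2
        exact hmono l hl1 (by omega)
      have h3 : psi σ (b - 1) ≤ psi σ (b - 1 + 1) :=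
        hmono (b - 1) (by omega) (by omega)
      rw [sub_add_cancel] at h3
      omega

variable (σ) in
def eps (σ : Equiv.Perm (ZMod q)) (l : ZMod q) : ℕ :=
  if rep q (σ l) < rep q l then 1 else 0

def Mv (q : ℕ) [NeZero q] (n : ZMod q → ℕ) (m : ℕ) (i : ZMod q) : ℕ :=
  m + ∑ l ∈ Finset.univ.filter (fun l => rep q l < rep q i), n l

def dig (q : ℕ) [NeZero q] (σ : Equiv.Perm (ZMod q)) (n : ZMod q → ℕ) (m : ℕ) (i : ZMod q) : ℕ :=
  Mv q n m i + eps σ i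

variable {n : ZMod q → ℕ} {m : ℕ}

lemma Mv_one (hq : 2 ≤ q) : Mv q n m (1 : ZMod q) = m := by
  unfold Mv
  rw [rep_one hq]
  have : Finset.univ.filter (fun l : ZMod q => rep q l < 1) = ∅ := by
    apply Finset.filter_false_of_mem
    intro l _
    have := rep_pos l
    omega
  rw [this, Finset.sum_empty, add_zero]

lemma Mv_zero : Mv q n m 0 + n 0 = m + ∑ i, n i := by
  unfold Mv
  rw [rep_zero]
  have : Finset.univ.filter (fun l : ZMod q => rep q l < q) = Finset.univ.erase 0 := by
    ext l
    simp only [Finset.mem_filter, Finset.mem_univ, true_and, Finset.mem_erase, and_true]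
    constructor
    · intro h h0; rw [h0, rep_zero] at h; omega
    · intro h; exact rep_lt_of_ne l h
  rw [this, add_assoc, Finset.sum_erase_add _ _ (Finset.mem_univ 0)]

lemma Mv_diff {i j : ZMod q} (hij : rep q i ≤ rep q j) :
    Mv q n m j = Mv q n m i +
      ∑ l ∈ Finset.univ.filter (fun l => rep q i ≤ rep q l ∧ rep q l < rep q j), n l := by
  unfold Mv
  rw [add_assoc]
  congr 1
  rw [← Finset.sum_union]
  · congr 1
    ext l
    simp only [Finset.mem_filter, Finset.mem_union, Finset.mem_univ, true_and]
    omega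
  · rw [Finset.disjoint_filter]
    intro l _ h1 h2
    omega

lemma Mv_succ {i : ZMod q} (hi : i ≠ 0) : Mv q n m (i + 1) = Mv q n m i + n i := by
  rw [Mv_diff (i := i) (j := i + 1) (by rw [rep_step i hi]; omega)]
  congr 1
  have : Finset.univ.filter (fun l => rep q i ≤ rep q l ∧ rep q l < rep q (i + 1)) = {i} := by
    ext l
    simp only [Finset.mem_filter, Finset.mem_univ, true_and, Finset.mem_singleton]
    rw [rep_step i hi]
    constructor
    · intro h
      exact rep_injective (by omega : rep q l = rep q i)
    · intro h; subst h; omega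
  rw [this, Finset.sum_singleton]

lemma Mv_mono {i j : ZMod q} (hij : rep q i ≤ rep q j) : Mv q n m i ≤ Mv q n m j := by
  rw [Mv_diff hij]; omega

/-- The key combinatorial lemma: the digit sequence is "lexicographically monotone". -/
lemma digC (hσ : IsQCycle q σ) (hq : 2 ≤ q)
    (hadm' : ∀ l, psi σ (l + 1) < psi σ l → 1 ≤ n l) (i j : ZMod q)
    (hij : rep q i < rep q j) :
    dig q σ n m i < dig q σ n m j ∨
      (dig q σ n m i = dig q σ n m j ∧ rep q (σ i) < rep q (σ j)) := by
  have hMd := Mv_diff (n := n) (m := m) hij.le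
  set S := ∑ l ∈ Finset.univ.filter
      (fun l => rep q i ≤ rep q l ∧ rep q l < rep q j), n l with hS
  have hsi := rep_sigma hσ hq i
  have hsj := rep_sigma hσ hq j
  have hsnei : rep q (σ i) ≠ rep q i := fun h => sigma_ne_self hσ hq i (rep_injective h)
  have hsnej : rep q (σ j) ≠ rep q j := fun h => sigma_ne_self hσ hq j (rep_injective h)
  have hri := rep_pos (σ i); have hrj := rep_pos (σ j)
  have hri' := rep_le (σ i); have hrj' := rep_le (σ j)
  have hqi := rep_le i; have hqj := rep_le j
  have hpi1 := psi_pos hσ hq i; have hpi2 := psi_lt (σ := σ) i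
  have hpj1 := psi_pos hσ hq j; have hpj2 := psi_lt (σ := σ) j
  unfold dig eps at *
  by_cases hS0 : S = 0
  · -- ψ is monotone from i to j
    have hmono : psi σ i ≤ psi σ j := by
      apply psi_chain hq (rep q j) i j rfl hij.le
      intro l hl1 hl2
      by_contra hc
      push_neg at hc
      have h1 : 1 ≤ n l := hadm' l hc
      have h2 : n l = 0 := by
        have := (Finset.sum_eq_zero_iff.1 (hS ▸ hS0)) l
          (Finset.mem_filter.2 ⟨Finset.mem_univ l, hl1, hl2⟩)
        exact this
      omega
    rw [hMd, hS0, add_zero]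
    by_cases hei : rep q (σ i) < rep q i <;> by_cases hej : rep q (σ j) < rep q j <;>
      simp only [hei, hej, if_pos, if_neg, if_true, if_false] at *
    · right; constructor; · trivial
      omega
    · exfalso; omega
    · left; omega
    · right; constructor; · trivial
      omega
  · rw [hMd]
    by_cases hei : rep q (σ i) < rep q i <;> by_cases hej : rep q (σ j) < rep q j <;>
      simp only [hei, hej, if_pos, if_neg, if_true, if_false] at *
    · left; omega
    · -- ei = 1, ej = 0 : if S = 1 digits equal and rep σ i < rep σ j automatic
      rcases Nat.lt_or_ge S 2 with h1 | h1
      · right; constructor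
        · omega
        · omega
      · left; omega
    · left; omega
    · left; omega


lemma orbit_image (hσ : IsQCycle q σ) (i : ZMod q) :
    Finset.image (fun t => (σ ^ t) i) (Finset.range q) = Finset.univ ∧
      (∀ a ∈ Finset.range q, ∀ b ∈ Finset.range q,
        (σ ^ a) i = (σ ^ b) i → a = b) := by
  have hq0 : 0 < q := Nat.pos_of_ne_zero (NeZero.ne q)
  have hinj : ∀ a ∈ Finset.range q, ∀ b ∈ Finset.range q,
      (σ ^ a) i = (σ ^ b) i → a = b := by
    intro a ha b hb heq
    simp only [Finset.mem_range] at ha hb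
    by_contra hne
    rcases Nat.lt_or_ge a b with h | h
    · exact orbit_inj hσ i a b h hb heq
    · exact orbit_inj hσ i b a (by omega) ha heq.symm
  refine ⟨?_, hinj⟩
  apply Finset.eq_univ_of_card
  rw [Finset.card_image_of_injOn fun a ha b hb => hinj a ha b hb, Finset.card_range, ZMod.card]

lemma orbit_sum (hσ : IsQCycle q σ) (i : ZMod q) (f : ZMod q → ℕ) :
    ∑ t ∈ Finset.range q, f ((σ ^ t) i) = ∑ l, f l := by
  obtain ⟨him, hinj⟩ := orbit_image hσ i
  rw [← him, Finset.sum_image hinj]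

lemma orbit_exists (hσ : IsQCycle q σ) (i j : ZMod q) : ∃ t < q, (σ ^ t) i = j := by
  have hq0 : 0 < q := Nat.pos_of_ne_zero (NeZero.ne q)
  obtain ⟨nn, hnn⟩ := hσ i j
  refine ⟨nn % q, Nat.mod_lt _ hq0, ?_⟩
  -- σ^n = σ^(n % q) on points, via σ^q = id
  have : ∀ t : ℕ, (σ ^ t) i = (σ ^ (t % q)) i := by
    intro t
    induction t using Nat.strong_induction_on with
    | _ t ih =>
      by_cases ht : t < q
      · rw [Nat.mod_eq_of_lt ht]
      · push_neg at ht
        have h1 : (σ ^ t) i = (σ ^ (t - q)) i := by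
          have he : σ ^ t = σ ^ (t - q) * σ ^ q := by rw [← pow_add]; congr 1; omega
          rw [he, Equiv.Perm.mul_apply, sigma_pow_q hσ]
        rw [h1, ih (t - q) (by omega), ← Nat.mod_eq_sub_mod ht]
  rw [← this, hnn]

section digits
variable (σ) in
def NN (q k : ℕ) [NeZero q] (σ : Equiv.Perm (ZMod q)) (D : ZMod q → ℕ) (i : ZMod q) : ℕ :=
  ∑ t ∈ Finset.range q, D ((σ ^ t) i) * k ^ (q - 1 - t)

variable {k : ℕ} {D : ZMod q → ℕ}

lemma geom_nat (hk : 1 ≤ k) : (k - 1) * (∑ t ∈ Finset.range q, k ^ t) + 1 = k ^ q := by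
  obtain ⟨k', rfl⟩ : ∃ k', k = k' + 1 := ⟨k - 1, by omega⟩
  induction q with
  | zero => simp
  | succ q ih =>
    rw [Finset.sum_range_succ, pow_succ]
    simp only [Nat.add_sub_cancel] at ih ⊢
    set S := ∑ t ∈ Finset.range q, (k' + 1) ^ t
    set p := (k' + 1) ^ q
    zify at ih ⊢
    linear_combination ih

lemma NN_rec (hσ : IsQCycle q σ) (i : ZMod q) :
    k * NN q k σ D i + D i = NN q k σ D (σ i) + D i * k ^ q := by
  have hq0 : 0 < q := Nat.pos_of_ne_zero (NeZero.ne q)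
  set g : ℕ → ℕ := fun s => D ((σ ^ s) i) * k ^ (q - s) with hg
  have h1 : k * NN q k σ D i = ∑ t ∈ Finset.range q, g t := by
    rw [NN, Finset.mul_sum]
    apply Finset.sum_congr rfl
    intro t ht
    simp only [Finset.mem_range] at ht
    simp only [hg]
    have : k ^ (q - t) = k * k ^ (q - 1 - t) := by
      rw [← pow_succ']
      congr 1
      omega
    rw [this]
    ring
  have h2 : NN q k σ D (σ i) = ∑ t ∈ Finset.range q, g (t + 1) := by
    rw [NN]
    apply Finset.sum_congr rfl
    intro t ht
    simp only [Finset.mem_range] at ht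
    simp only [hg]
    have hpt : (σ ^ t) (σ i) = (σ ^ (t + 1)) i := by
      rw [pow_succ, Equiv.Perm.mul_apply]
    rw [hpt]
    congr 2
    omega
  have h3 : (∑ t ∈ Finset.range q, g (t + 1)) + g 0 = (∑ t ∈ Finset.range q, g t) + g q := by
    have := Finset.sum_range_succ' g q
    have h4 := Finset.sum_range_succ g q
    omega
  have hg0 : g 0 = D i * k ^ q := by simp [hg]
  have hgq : g q = D i := by simp [hg, sigma_pow_q hσ]
  linarith

lemma NN_le (hD : ∀ i, D i ≤ k - 1) (hk : 2 ≤ k) (i : ZMod q) :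
    NN q k σ D i + 1 ≤ k ^ q := by
  have h1 : NN q k σ D i ≤ ∑ t ∈ Finset.range q, (k - 1) * k ^ (q - 1 - t) := by
    apply Finset.sum_le_sum
    intro t _
    exact Nat.mul_le_mul_right _ (hD _)
  have h2 : ∑ t ∈ Finset.range q, (k - 1) * k ^ (q - 1 - t) =
      (k - 1) * ∑ t ∈ Finset.range q, k ^ (q - 1 - t) := by rw [Finset.mul_sum]
  have h3 : ∑ t ∈ Finset.range q, k ^ (q - 1 - t) = ∑ t ∈ Finset.range q, k ^ t := by
    rw [← Finset.sum_range_reflect]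
    apply Finset.sum_congr rfl
    intro t ht
    simp only [Finset.mem_range] at ht
    congr 1
    omega
  have h4 := geom_nat (q := q) (by omega : 1 ≤ k)
  rw [h3] at h2
  linarith

-- strict upper bound given an index with small digit
lemma NN_lt (hσ : IsQCycle q σ) (hD : ∀ i, D i ≤ k - 1) (hk : 2 ≤ k)
    {i1 : ZMod q} (hi1 : D i1 + 2 ≤ k) (i : ZMod q) :
    NN q k σ D i + 2 ≤ k ^ q := by
  obtain ⟨t1, ht1, ht1v⟩ := orbit_exists hσ i i1
  have hpow : 1 ≤ k ^ (q - 1 - t1) := Nat.one_le_pow _ _ (by omega)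
  have h1 : NN q k σ D i + k ^ (q - 1 - t1) ≤
      ∑ t ∈ Finset.range q, (k - 1) * k ^ (q - 1 - t) := by
    have heach : ∀ t ∈ Finset.range q,
        D ((σ ^ t) i) * k ^ (q - 1 - t) + (if t = t1 then k ^ (q - 1 - t1) else 0) ≤
          (k - 1) * k ^ (q - 1 - t) := by
      intro t _
      by_cases h : t = t1
      · subst h
        rw [if_pos rfl, ht1v]
        have : D i1 + 1 ≤ k - 1 := by omega
        calc D i1 * k ^ (q - 1 - t) + k ^ (q - 1 - t) = (D i1 + 1) * k ^ (q - 1 - t) := by ring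
          _ ≤ (k - 1) * k ^ (q - 1 - t) := Nat.mul_le_mul_right _ this
      · rw [if_neg h, add_zero]
        exact Nat.mul_le_mul_right _ (hD _)
    have hsum := Finset.sum_le_sum heach
    rw [Finset.sum_add_distrib, Finset.sum_ite_eq' (Finset.range q) t1] at hsum
    rw [if_pos (Finset.mem_range.2 ht1)] at hsum
    exact hsum
  have h2 : ∑ t ∈ Finset.range q, (k - 1) * k ^ (q - 1 - t) + 1 = k ^ q := by
    rw [← Finset.mul_sum]
    have h3 : ∑ t ∈ Finset.range q, k ^ (q - 1 - t) = ∑ t ∈ Finset.range q, k ^ t := by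
      rw [← Finset.sum_range_reflect]
      apply Finset.sum_congr rfl
      intro t ht
      simp only [Finset.mem_range] at ht
      congr 1
      omega
    rw [h3, geom_nat (by omega : 1 ≤ k)]
  linarith

lemma NN_pos (hσ : IsQCycle q σ) (hk : 2 ≤ k) {i0 : ZMod q} (hi0 : 1 ≤ D i0) (i : ZMod q) :
    1 ≤ NN q k σ D i := by
  obtain ⟨t0, ht0, ht0v⟩ := orbit_exists hσ i i0
  have h1 : 1 ≤ D ((σ ^ t0) i) * k ^ (q - 1 - t0) := by
    rw [ht0v]
    have h2 : 1 ≤ k ^ (q - 1 - t0) := Nat.one_le_pow _ _ (by omega)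
    exact Nat.one_le_iff_ne_zero.2 (Nat.mul_ne_zero (by omega) (by omega))
  calc 1 ≤ D ((σ ^ t0) i) * k ^ (q - 1 - t0) := h1
    _ ≤ NN q k σ D i :=
      Finset.single_le_sum (f := fun t => D ((σ ^ t) i) * k ^ (q - 1 - t))
        (fun t _ => Nat.zero_le _) (Finset.mem_range.2 ht0)

def xF (q k : ℕ) [NeZero q] (σ : Equiv.Perm (ZMod q)) (D : ZMod q → ℕ) (i : ZMod q) : ℝ :=
  (NN q k σ D i : ℝ) / ((k : ℝ) ^ q - 1)

lemma denom_pos (hk : 2 ≤ k) (hq0 : 0 < q) : (0 : ℝ) < (k : ℝ) ^ q - 1 := by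
  have h1 : (1 : ℝ) < (k : ℝ) := by exact_mod_cast (by omega : 1 < k)
  have := one_lt_pow₀ h1 (by omega : q ≠ 0)
  linarith

lemma xF_eq (hσ : IsQCycle q σ) (hk : 2 ≤ k) (i : ZMod q) :
    (k : ℝ) * xF q k σ D i = xF q k σ D (σ i) + D i := by
  have hq0 : 0 < q := Nat.pos_of_ne_zero (NeZero.ne q)
  have hden := denom_pos (q := q) hk hq0
  have hrec := NN_rec (k := k) (D := D) hσ i
  have hrecR : (k : ℝ) * NN q k σ D i + D i = NN q k σ D (σ i) + D i * (k : ℝ) ^ q := by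
    exact_mod_cast congrArg (fun z : ℕ => (z : ℝ)) hrec
  rw [xF, xF]
  field_simp
  nlinarith [hrecR]

lemma xF_mem (hσ : IsQCycle q σ) (hD : ∀ i, D i ≤ k - 1) (hk : 2 ≤ k)
    {i0 i1 : ZMod q} (hi0 : 1 ≤ D i0) (hi1 : D i1 + 2 ≤ k) (i : ZMod q) :
    xF q k σ D i ∈ Set.Ioo (0 : ℝ) 1 := by
  have hq0 : 0 < q := Nat.pos_of_ne_zero (NeZero.ne q)
  have hden := denom_pos (q := q) hk hq0
  have h1 := NN_pos hσ hk hi0 i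
  have h2 := NN_lt hσ hD hk hi1 i
  constructor
  · rw [xF]
    apply div_pos _ hden
    exact_mod_cast (by omega : (0 : ℕ) < NN q k σ D i)
  · rw [xF, div_lt_one hden]
    have : (NN q k σ D i : ℝ) + 2 ≤ (k : ℝ) ^ q := by exact_mod_cast h2
    linarith

/-- Ordering of the constructed points from the lexicographic digit property. -/
lemma xF_order (hσ : IsQCycle q σ) (hq : 2 ≤ q) (hD : ∀ i, D i ≤ k - 1) (hk : 2 ≤ k)
    {i0 i1 : ZMod q} (hi0 : 1 ≤ D i0) (hi1 : D i1 + 2 ≤ k)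
    (hC : ∀ i j : ZMod q, rep q i < rep q j →
      D i < D j ∨ (D i = D j ∧ rep q (σ i) < rep q (σ j)))
    (i j : ZMod q) (hij : rep q i < rep q j) : xF q k σ D i < xF q k σ D j := by
  have hq0 : 0 < q := Nat.pos_of_ne_zero (NeZero.ne q)
  -- find the first strict digit index
  have hex : ∃ t < q, D ((σ ^ t) i) < D ((σ ^ t) j) ∧
      ∀ s < t, D ((σ ^ s) i) = D ((σ ^ s) j) := by
    by_contra hcon
    push_neg at hcon
    have hstep : ∀ t, t < q → rep q ((σ ^ t) i) < rep q ((σ ^ t) j) ∧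
        (∀ s < t, D ((σ ^ s) i) = D ((σ ^ s) j)) := by
      intro t
      induction t using Nat.strong_induction_on with
      | _ t ih =>
        intro htq
        rcases Nat.eq_zero_or_pos t with h0 | h0
        · subst h0
          exact ⟨by simpa using hij, by omega⟩
        · obtain ⟨hrt, hpre⟩ := ih (t - 1) (by omega) (by omega)
          rcases hC _ _ hrt with hlt | ⟨heqd, hrs⟩
          · exact absurd hlt (by
              have := hcon (t - 1) (by omega)
              intro hl
              obtain ⟨s, hs1, hs2⟩ := this hl
              exact hs2 (hpre s hs1))
          · constructor
            · have hts : t - 1 + 1 = t := by omega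
              have h1 : (σ ^ t) i = σ ((σ ^ (t - 1)) i) := by
                conv_lhs => rw [← hts]
                rw [pow_succ', Equiv.Perm.mul_apply]
              have h2 : (σ ^ t) j = σ ((σ ^ (t - 1)) j) := by
                conv_lhs => rw [← hts]
                rw [pow_succ', Equiv.Perm.mul_apply]
              rw [h1, h2]
              exact hrs
            · intro s hs
              rcases Nat.lt_or_ge s (t - 1) with h | h
              · exact hpre s h
              · have : s = t - 1 := by omega
                subst this
                exact heqd
    -- all reps strictly smaller: contradiction by summing
    have hsum : ∑ t ∈ Finset.range q, rep q ((σ ^ t) i) <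
        ∑ t ∈ Finset.range q, rep q ((σ ^ t) j) := by
      apply Finset.sum_lt_sum_of_nonempty ⟨0, Finset.mem_range.2 hq0⟩
      intro t ht
      exact (hstep t (Finset.mem_range.1 ht)).1
    rw [orbit_sum hσ i, orbit_sum hσ j] at hsum
    omega
  obtain ⟨t0, ht0q, hstrict, hpre⟩ := hex
  -- downward induction
  have hkey : ∀ u s, s + u = t0 → xF q k σ D ((σ ^ s) i) < xF q k σ D ((σ ^ s) j) := by
    intro u
    induction u with
    | zero =>
      intro s hs
      have hst : s = t0 := by omega
      subst hst
      set a := (σ ^ s) i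
      set b := (σ ^ s) j
      have hea := xF_eq (D := D) hσ hk a
      have heb := xF_eq (D := D) hσ hk b
      have hma := xF_mem hσ hD hk hi0 hi1 (σ a)
      have hmb := xF_mem hσ hD hk hi0 hi1 (σ b)
      have hdab : (D a : ℝ) + 1 ≤ D b := by exact_mod_cast (by omega : D a + 1 ≤ D b)
      have hkpos : (0 : ℝ) < k := by positivity
      rw [Set.mem_Ioo] at hma hmb
      have : (k : ℝ) * xF q k σ D a < (k : ℝ) * xF q k σ D b := by
        rw [hea, heb]
        linarith [hma.2, hmb.1]
      exact lt_of_mul_lt_mul_left this hkpos.le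
    | succ u ihu =>
      intro s hs
      set a := (σ ^ s) i with hA
      set b := (σ ^ s) j with hB
      have hnext : xF q k σ D ((σ ^ (s + 1)) i) < xF q k σ D ((σ ^ (s + 1)) j) :=
        ihu (s + 1) (by omega)
      have h1 : (σ ^ (s + 1)) i = σ a := by rw [hA, ← Equiv.Perm.mul_apply, ← pow_succ']
      have h2 : (σ ^ (s + 1)) j = σ b := by rw [hB, ← Equiv.Perm.mul_apply, ← pow_succ']
      rw [h1, h2] at hnext
      have hea := xF_eq (D := D) hσ hk a
      have heb := xF_eq (D := D) hσ hk b
      have heqd : D a = D b := hpre s (by omega)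
      have hkpos : (0 : ℝ) < k := by positivity
      have : (k : ℝ) * xF q k σ D a < (k : ℝ) * xF q k σ D b := by
        rw [hea, heb, heqd]
        linarith
      exact lt_of_mul_lt_mul_left this hkpos.le
  have := hkey t0 0 (by omega)
  simpa using this

end digits

lemma kk1 {k : ℕ} (hk : 2 ≤ k) : (0 : ℝ) < (k : ℝ) - 1 := by
  have : (2 : ℝ) ≤ k := by exact_mod_cast hk
  linarith

lemma count_between {k A B : ℕ} (hk : 2 ≤ k) (hB : B ≤ 2 * (k - 1)) (hAB : A ≤ B) {y z : ℝ}
    (hy1 : (A : ℝ) < ((k : ℝ) - 1) * y) (hy2 : ((k : ℝ) - 1) * y < A + 1)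
    (hz1 : (B : ℝ) < ((k : ℝ) - 1) * z) (hz2 : ((k : ℝ) - 1) * z < B + 1) :
    ((Finset.Icc 1 (2 * (k - 1))).filter fun j : ℕ =>
      y < (j : ℝ) / ((k : ℝ) - 1) ∧ (j : ℝ) / ((k : ℝ) - 1) < z).card = B - A := by
  have hk1 := kk1 hk
  have hflt : ((Finset.Icc 1 (2 * (k - 1))).filter fun j : ℕ =>
      y < (j : ℝ) / ((k : ℝ) - 1) ∧ (j : ℝ) / ((k : ℝ) - 1) < z) = Finset.Icc (A + 1) B := by
    ext j
    simp only [Finset.mem_filter, Finset.mem_Icc]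
    rw [lt_div_iff₀ hk1, div_lt_iff₀ hk1]
    constructor
    · rintro ⟨⟨hj1, hj2⟩, h1, h2⟩
      have c1 : (A : ℝ) < (j : ℝ) := by nlinarith
      have c2 : (j : ℝ) < (B : ℝ) + 1 := by nlinarith
      have c1' : A < j := by exact_mod_cast c1
      have c2' : j < B + 1 := by exact_mod_cast c2
      omega
    · rintro ⟨hj1, hj2⟩
      have c1 : (A : ℝ) + 1 ≤ (j : ℝ) := by exact_mod_cast hj1
      have c2 : (j : ℝ) ≤ B := by exact_mod_cast hj2
      refine ⟨⟨by omega, by omega⟩, by nlinarith, by nlinarith⟩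
  rw [hflt, Nat.card_Icc]
  omega

lemma count_below {k A : ℕ} (hk : 2 ≤ k) (hA : A ≤ k - 2) {y : ℝ}
    (hy1 : (A : ℝ) < ((k : ℝ) - 1) * y) (hy2 : ((k : ℝ) - 1) * y < A + 1) :
    ((Finset.range (k - 1)).filter fun j : ℕ =>
      0 < j ∧ (j : ℝ) / ((k : ℝ) - 1) < y).card = A := by
  have hk1 := kk1 hk
  have hflt : ((Finset.range (k - 1)).filter fun j : ℕ =>
      0 < j ∧ (j : ℝ) / ((k : ℝ) - 1) < y) = Finset.Icc 1 A := by
    ext j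
    simp only [Finset.mem_filter, Finset.mem_range, Finset.mem_Icc]
    rw [div_lt_iff₀ hk1]
    constructor
    · rintro ⟨hj1, hj2, h2⟩
      have c2 : (j : ℝ) < (A : ℝ) + 1 := by nlinarith
      have c2' : j < A + 1 := by exact_mod_cast c2
      omega
    · rintro ⟨hj1, hj2⟩
      have c2 : (j : ℝ) ≤ A := by exact_mod_cast hj2
      refine ⟨by omega, by omega, by nlinarith⟩
  rw [hflt, Nat.card_Icc]
  omega

lemma exists_nat_floor {y : ℝ} (h0 : 0 < y) (hni : ∀ z : ℤ, (z : ℝ) ≠ y) :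
    ∃ A : ℕ, (A : ℝ) < y ∧ y < A + 1 := by
  have h1 : (0 : ℤ) ≤ ⌊y⌋ := Int.floor_nonneg.2 h0.le
  have hco : ((⌊y⌋.toNat : ℕ) : ℝ) = ((⌊y⌋ : ℤ) : ℝ) := by
    exact_mod_cast congrArg (fun z : ℤ => (z : ℝ)) (Int.toNat_of_nonneg h1)
  refine ⟨⌊y⌋.toNat, ?_, ?_⟩
  · have h2 : (⌊y⌋ : ℝ) ≤ y := Int.floor_le y
    have h3 : (⌊y⌋ : ℝ) ≠ y := hni _
    rw [hco]
    exact lt_of_le_of_ne h2 h3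
  · have h2 : y < ⌊y⌋ + 1 := Int.lt_floor_add_one y
    rw [hco]
    exact_mod_cast h2



section main
variable {q k : ℕ} [NeZero q] {σ : Equiv.Perm (ZMod q)} {n : ZMod q → ℕ} {m : ℕ}

/-- A solution of the functional equation with digits `D` must be `xF`. -/
lemma x_repr (hσ : IsQCycle q σ) (hk : 2 ≤ k) (x : ZMod q → ℝ) (D : ZMod q → ℕ)
    (hfe : ∀ i, (k : ℝ) * x i = x (σ i) + (D i : ℝ)) (i : ZMod q) :
    x i = xF q k σ D i := by
  have hq0 : 0 < q := Nat.pos_of_ne_zero (NeZero.ne q)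
  have hden := denom_pos (q := q) hk hq0
  have claim : ∀ t : ℕ, (k : ℝ) ^ t * x i =
      x ((σ ^ t) i) + ∑ s ∈ Finset.range t, (D ((σ ^ s) i) : ℝ) * (k : ℝ) ^ (t - 1 - s) := by
    intro t
    induction t with
    | zero => simp
    | succ t ih =>
      have h1 : (k : ℝ) ^ (t + 1) * x i = (k : ℝ) * ((k : ℝ) ^ t * x i) := by ring
      rw [h1, ih, mul_add, hfe ((σ ^ t) i)]
      have h2 : σ ((σ ^ t) i) = (σ ^ (t + 1)) i := by
        rw [pow_succ', Equiv.Perm.mul_apply]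
      rw [h2, Finset.sum_range_succ]
      have h3 : (k : ℝ) * ∑ s ∈ Finset.range t, (D ((σ ^ s) i) : ℝ) * (k : ℝ) ^ (t - 1 - s) =
          ∑ s ∈ Finset.range t, (D ((σ ^ s) i) : ℝ) * (k : ℝ) ^ (t + 1 - 1 - s) := by
        rw [Finset.mul_sum]
        apply Finset.sum_congr rfl
        intro s hs
        simp only [Finset.mem_range] at hs
        have : (k : ℝ) ^ (t + 1 - 1 - s) = (k : ℝ) * (k : ℝ) ^ (t - 1 - s) := by
          rw [← pow_succ']
          congr 1
          omega
        rw [this]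
        ring
      rw [h3]
      have h4 : (t + 1 - 1 - t) = 0 := by omega
      rw [h4]
      ring
  have hq' := claim q
  rw [sigma_pow_q hσ i] at hq'
  have hsum : ∑ s ∈ Finset.range q, (D ((σ ^ s) i) : ℝ) * (k : ℝ) ^ (q - 1 - s) =
      (NN q k σ D i : ℝ) := by
    rw [NN]
    push_cast
    rfl
  rw [hsum] at hq'
  rw [xF]
  field_simp
  nlinarith [hq']

lemma n0_le (hsum : ∑ i, n i = k - 1) : n 0 ≤ k - 1 := by
  rw [← hsum]
  exact Finset.single_le_sum (fun i _ => Nat.zero_le _) (Finset.mem_univ 0)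

lemma Mv_le (hq : 2 ≤ q) (hk : 2 ≤ k) (hsum : ∑ i, n i = k - 1) (hn0 : 1 ≤ n 0)
    (hm : m < n 0) (i : ZMod q) : Mv q n m i ≤ k - 2 := by
  have h1 : Mv q n m i ≤ Mv q n m 0 := Mv_mono (by rw [rep_zero]; exact rep_le i)
  have h2 := Mv_zero (q := q) (n := n) (m := m)
  rw [hsum] at h2
  have h3 := n0_le hsum
  omega

lemma eps_zero_eq (hσ : IsQCycle q σ) (hq : 2 ≤ q) : eps σ (0 : ZMod q) = 1 := by
  rw [eps, if_pos]
  rw [rep_zero]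
  exact rep_lt_of_ne _ (sigma_ne_self hσ hq 0)

lemma eps_one_eq (hσ : IsQCycle q σ) (hq : 2 ≤ q) : eps σ (1 : ZMod q) = 0 := by
  rw [eps, if_neg]
  rw [rep_one hq]
  have := rep_pos (σ (1 : ZMod q))
  omega

lemma dig_le (hσ : IsQCycle q σ) (hq : 2 ≤ q) (hk : 2 ≤ k) (hsum : ∑ i, n i = k - 1)
    (hn0 : 1 ≤ n 0) (hm : m < n 0) (i : ZMod q) : dig q σ n m i ≤ k - 1 := by
  have h1 := Mv_le hq hk hsum hn0 hm i
  have h2 : eps σ i ≤ 1 := by rw [eps]; split <;> omega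
  rw [dig]
  omega

lemma dig_zero_pos (hσ : IsQCycle q σ) (hq : 2 ≤ q) : 1 ≤ dig q σ n m (0 : ZMod q) := by
  rw [dig, eps_zero_eq hσ hq]
  omega

lemma dig_one_le (hσ : IsQCycle q σ) (hq : 2 ≤ q) (hk : 2 ≤ k) (hsum : ∑ i, n i = k - 1)
    (hn0 : 1 ≤ n 0) (hm : m < n 0) : dig q σ n m (1 : ZMod q) + 2 ≤ k := by
  rw [dig, eps_one_eq hσ hq, Mv_one hq]
  have := n0_le hsum
  omega

lemma dig_C (hσ : IsQCycle q σ) (hq : 2 ≤ q)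
    (hadm : ∀ i, transMatrix q σ i i = 1 → 1 ≤ n i) :
    ∀ i j : ZMod q, rep q i < rep q j →
      dig q σ n m i < dig q σ n m j ∨
        (dig q σ n m i = dig q σ n m j ∧ rep q (σ i) < rep q (σ j)) := by
  intro i j hij
  exact digC hσ hq (fun l h => hadm l ((marked_iff hσ hq l).2 h)) i j hij


lemma xF_floor (hσ : IsQCycle q σ) (hq : 2 ≤ q) (hk : 2 ≤ k) (hsum : ∑ i, n i = k - 1)
    (hn0 : 1 ≤ n 0) (hm : m < n 0)
    (hadm : ∀ i, transMatrix q σ i i = 1 → 1 ≤ n i) (i : ZMod q) :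
    (Mv q n m i : ℝ) < ((k : ℝ) - 1) * xF q k σ (dig q σ n m) i ∧
      ((k : ℝ) - 1) * xF q k σ (dig q σ n m) i < Mv q n m i + 1 := by
  set D := dig q σ n m with hD
  have hDle := dig_le (n := n) (m := m) hσ hq hk hsum hn0 hm
  have hi0 := dig_zero_pos (n := n) (m := m) hσ hq
  have hi1 := dig_one_le hσ hq hk hsum hn0 hm
  have hmem := fun j => xF_mem (D := D) hσ hDle hk hi0 hi1 j
  have horder := fun a b h => xF_order (D := D) hσ hq hDle hk hi0 hi1
    (dig_C hσ hq hadm) a b h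
  have he := xF_eq (D := D) hσ hk i
  have hdig : (D i : ℝ) = (Mv q n m i : ℝ) + (eps σ i : ℝ) := by
    rw [hD]
    push_cast [dig]
    ring
  obtain ⟨h1, h2⟩ := Set.mem_Ioo.1 (hmem i)
  obtain ⟨h3, h4⟩ := Set.mem_Ioo.1 (hmem (σ i))
  by_cases hcase : rep q (σ i) < rep q i
  · have heps : (eps σ i : ℝ) = 1 := by rw [eps, if_pos hcase]; norm_num
    have hxlt : xF q k σ D (σ i) < xF q k σ D i := horder _ _ hcase
    constructor <;> nlinarith [he, hdig, heps, hxlt]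
  · have heps : (eps σ i : ℝ) = 0 := by rw [eps, if_neg hcase]; norm_num
    have hne : rep q (σ i) ≠ rep q i := fun h => sigma_ne_self hσ hq i (rep_injective h)
    have hxlt : xF q k σ D i < xF q k σ D (σ i) := horder _ _ (by omega)
    constructor <;> nlinarith [he, hdig, heps, hxlt]

lemma cast_k_sub_one (hk : 2 ≤ k) : ((k - 1 : ℕ) : ℝ) = (k : ℝ) - 1 := by
  push_cast [Nat.cast_sub (by omega : 1 ≤ k)]
  ring

lemma exist_real (hσ : IsQCycle q σ) (hq : 2 ≤ q) (hk : 2 ≤ k) (hsum : ∑ i, n i = k - 1)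
    (hn0 : 1 ≤ n 0) (hm : m < n 0)
    (hadm : ∀ i, transMatrix q σ i i = 1 → 1 ≤ n i) :
    MkRealization q k σ (xF q k σ (dig q σ n m)) ∧
      (∀ i, fixDist q k (xF q k σ (dig q σ n m)) i = n i) ∧
      countFixBelow q k (xF q k σ (dig q σ n m)) = m := by
  set D := dig q σ n m with hD
  have hDle := dig_le (n := n) (m := m) hσ hq hk hsum hn0 hm
  have hi0 := dig_zero_pos (n := n) (m := m) hσ hq
  have hi1 := dig_one_le hσ hq hk hsum hn0 hm
  have hmem := fun j => xF_mem (D := D) hσ hDle hk hi0 hi1 j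
  have horder := fun a b h => xF_order (D := D) hσ hq hDle hk hi0 hi1
    (dig_C hσ hq hadm) a b h
  have hfloor := fun i => xF_floor (n := n) (m := m) hσ hq hk hsum hn0 hm hadm i
  have hmlek : m ≤ k - 2 := by have := n0_le (n := n) hsum; omega
  have hfloor1 : (m : ℝ) < ((k : ℝ) - 1) * xF q k σ D 1 ∧
      ((k : ℝ) - 1) * xF q k σ D 1 < m + 1 := by
    have := hfloor 1
    rw [Mv_one hq] at this
    exact this
  refine ⟨⟨hmem, horder, ?_⟩, ?_, ?_⟩
  · intro i
    exact ⟨(D i : ℤ), by push_cast; exact xF_eq (D := D) hσ hk i⟩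
  · intro i
    by_cases hi : i = 0
    · subst hi
      rw [fixDist, upperPt, if_pos rfl]
      have hMz := Mv_zero (q := q) (n := n) (m := m)
      rw [hsum] at hMz
      have hup1 : ((m + (k - 1) : ℕ) : ℝ) < ((k : ℝ) - 1) * (xF q k σ D 1 + 1) := by
        push_cast [cast_k_sub_one hk]
        nlinarith [hfloor1.1]
      have hup2 : ((k : ℝ) - 1) * (xF q k σ D 1 + 1) < ((m + (k - 1) : ℕ) : ℝ) + 1 := by
        push_cast [cast_k_sub_one hk]
        nlinarith [hfloor1.2]
      rw [count_between hk (by omega) (by omega : Mv q n m 0 ≤ m + (k - 1))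
        (hfloor 0).1 (hfloor 0).2 hup1 hup2]
      omega
    · rw [fixDist, upperPt, if_neg hi]
      have hstep : rep q i < rep q (i + 1) := by rw [rep_step i hi]; omega
      have hAB : Mv q n m i ≤ Mv q n m (i + 1) := Mv_mono (le_of_lt hstep)
      rw [count_between hk (by have := Mv_le hq hk hsum hn0 hm (i+1); omega) hAB
        (hfloor i).1 (hfloor i).2 (hfloor (i+1)).1 (hfloor (i+1)).2]
      rw [Mv_succ hi]
      omega
  · rw [countFixBelow]
    rw [count_below hk hmlek hfloor1.1 hfloor1.2]


lemma realization_eq (hσ : IsQCycle q σ) (hq : 2 ≤ q) (hk : 2 ≤ k)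
    (hsum : ∑ i, n i = k - 1) (hn0 : 1 ≤ n 0)
    (hadm : ∀ i, transMatrix q σ i i = 1 → 1 ≤ n i) (x : ZMod q → ℝ)
    (hx : MkRealization q k σ x) (hfix : ∀ i, fixDist q k x i = n i) :
    ∃ m' : ℕ, m' < n 0 ∧ countFixBelow q k x = m' ∧ x = xF q k σ (dig q σ n m') := by
  obtain ⟨hmem, hord, hfe⟩ := hx
  have hk1 : (0 : ℝ) < (k : ℝ) - 1 := kk1 hk
  have hdist : ∀ i, x (σ i) ≠ x i := by
    intro i h
    have hne : rep q (σ i) ≠ rep q i := fun hh => sigma_ne_self hσ hq i (rep_injective hh)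
    rcases Nat.lt_or_ge (rep q (σ i)) (rep q i) with hlt | hge
    · exact absurd h (ne_of_lt (hord _ _ hlt))
    · exact absurd h.symm (ne_of_lt (hord _ _ (by omega)))
  have hnon : ∀ i, ∀ z : ℤ, (z : ℝ) ≠ ((k : ℝ) - 1) * x i := by
    intro i z hz
    obtain ⟨mi, hmi⟩ := hfe i
    have hmi' : (k : ℝ) * x i = x (σ i) + mi := hmi
    have h1 : x i - x (σ i) = ((mi - z : ℤ) : ℝ) := by push_cast; linarith
    have h2 : x (σ i) ≠ x i := hdist i
    obtain ⟨hx1, hx2⟩ := Set.mem_Ioo.1 (hmem i)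
    obtain ⟨hx3, hx4⟩ := Set.mem_Ioo.1 (hmem (σ i))
    have h4 : mi - z ≠ 0 := by
      intro h0
      rw [h0] at h1
      push_cast at h1
      exact h2 (by linarith)
    have h5 : 1 ≤ |mi - z| := Int.one_le_abs h4
    have h6 : |((mi - z : ℤ) : ℝ)| < 1 := by
      rw [← h1, abs_sub_lt_iff]
      constructor <;> linarith
    rw [← Int.cast_abs] at h6
    have h7 : (1 : ℝ) ≤ ((|mi - z| : ℤ) : ℝ) := by exact_mod_cast h5
    linarith
  have hpos : ∀ i, 0 < ((k : ℝ) - 1) * x i := fun i => mul_pos hk1 (hmem i).1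
  choose A hA1 hA2 using fun i => exists_nat_floor (hpos i) (fun z => hnon i z)
  have hAle : ∀ i, A i ≤ k - 2 := by
    intro i
    have h1 : ((k : ℝ) - 1) * x i < (k : ℝ) - 1 := by nlinarith [(hmem i).2]
    have h2 : (A i : ℝ) < ((k - 1 : ℕ) : ℝ) := by
      rw [cast_k_sub_one hk]
      linarith [hA1 i]
    have h3 : A i < k - 1 := by exact_mod_cast h2
    omega
  have hchain : ∀ i : ZMod q, i ≠ 0 → A (i + 1) = A i + n i := by
    intro i hi
    have hfx := hfix i
    rw [fixDist, upperPt, if_neg hi] at hfx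
    have hstep : rep q i < rep q (i + 1) := by rw [rep_step i hi]; omega
    have hxlt : x i < x (i + 1) := hord _ _ hstep
    have hAB : A i ≤ A (i + 1) := by
      have hr : (A i : ℝ) < (A (i + 1) : ℝ) + 1 := by nlinarith [hA1 i, hA2 (i + 1)]
      have : A i < A (i + 1) + 1 := by exact_mod_cast hr
      omega
    rw [count_between hk (by have := hAle (i + 1); omega) hAB
      (hA1 i) (hA2 i) (hA1 (i + 1)) (hA2 (i + 1))] at hfx
    omega
  set m' := A 1 with hm'
  have hcast : ∀ v : ℕ, 1 ≤ v → v ≤ q → A ((v : ZMod q)) = Mv q n m' ((v : ZMod q)) := by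
    intro v
    induction v with
    | zero => intro h; omega
    | succ v ih =>
      intro h1 h2
      rcases Nat.eq_zero_or_pos v with h0 | h0
      · subst h0
        norm_num
        rw [Mv_one hq]
      · have hvq : v ≤ q := by omega
        have hih := ih (by omega) hvq
        have hrv : rep q ((v : ZMod q)) = v := rep_cast (by omega) hvq
        have hne : ((v : ZMod q)) ≠ 0 := by
          intro h
          rw [h, rep_zero] at hrv
          omega
        have hc : ((v + 1 : ℕ) : ZMod q) = (v : ZMod q) + 1 := by push_cast; ring
        rw [hc, hchain _ hne, Mv_succ hne, hih]
  have hAeq : ∀ l : ZMod q, A l = Mv q n m' l := by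
    intro l
    have h1 := hcast (rep q l) (rep_pos l) (rep_le l)
    rw [cast_rep l] at h1
    exact h1
  have hm'lt : m' < n 0 := by
    have h1 := hAeq 0
    have h2 := Mv_zero (q := q) (n := n) (m := m')
    rw [hsum] at h2
    have h3 := hAle 0
    have h4 := n0_le (n := n) hsum
    omega
  have hdigs : ∀ i, (k : ℝ) * x i = x (σ i) + (dig q σ n m' i : ℝ) := by
    intro i
    obtain ⟨mi, hmi⟩ := hfe i
    have hmi' : (k : ℝ) * x i = x (σ i) + mi := hmi
    have hfl1 := hA1 i
    have hfl2 := hA2 i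
    rw [hAeq i] at hfl1 hfl2
    obtain ⟨hx1, hx2⟩ := Set.mem_Ioo.1 (hmem i)
    obtain ⟨hx3, hx4⟩ := Set.mem_Ioo.1 (hmem (σ i))
    have hne : rep q (σ i) ≠ rep q i := fun hh => sigma_ne_self hσ hq i (rep_injective hh)
    by_cases hcase : rep q (σ i) < rep q i
    · have hxlt : x (σ i) < x i := hord _ _ hcase
      have heps : eps σ i = 1 := by rw [eps, if_pos hcase]
      have hb1 : ((Mv q n m' i : ℕ) : ℝ) < (mi : ℝ) := by nlinarith
      have hb2 : (mi : ℝ) < ((Mv q n m' i : ℕ) : ℝ) + 2 := by nlinarith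
      have hc1 : ((Mv q n m' i : ℕ) : ℤ) < mi := by exact_mod_cast hb1
      have hc2 : mi < ((Mv q n m' i : ℕ) : ℤ) + 2 := by exact_mod_cast hb2
      have hmieq : mi = ((Mv q n m' i : ℕ) : ℤ) + 1 := by omega
      rw [hmi', hmieq, dig, heps]
      push_cast
      ring
    · have hxlt : x i < x (σ i) := hord _ _ (by omega)
      have heps : eps σ i = 0 := by rw [eps, if_neg hcase]
      have hb1 : ((Mv q n m' i : ℕ) : ℝ) - 1 < (mi : ℝ) := by nlinarith
      have hb2 : (mi : ℝ) < ((Mv q n m' i : ℕ) : ℝ) + 1 := by nlinarith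
      have hc1 : ((Mv q n m' i : ℕ) : ℤ) - 1 < mi := by exact_mod_cast hb1
      have hc2 : mi < ((Mv q n m' i : ℕ) : ℤ) + 1 := by exact_mod_cast hb2
      have hmieq : mi = ((Mv q n m' i : ℕ) : ℤ) := by omega
      rw [hmi', hmieq, dig, heps]
      push_cast
      ring
  refine ⟨m', hm'lt, ?_, ?_⟩
  · rw [countFixBelow, count_below hk (hAle 1) (hA1 1) (hA2 1)]
  · funext i
    exact x_repr hσ hk x _ hdigs i


lemma pow_reflect : ∑ t ∈ Finset.range q, k ^ (q - 1 - t) = ∑ t ∈ Finset.range q, k ^ t := by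
  rw [← Finset.sum_range_reflect]
  apply Finset.sum_congr rfl
  intro t ht
  simp only [Finset.mem_range] at ht
  congr 1
  omega

lemma dig_shift (i : ZMod q) : dig q σ n m i = dig q σ n 0 i + m := by
  rw [dig, dig, Mv, Mv]
  omega

lemma NN_shift (i : ZMod q) :
    NN q k σ (dig q σ n m) i =
      NN q k σ (dig q σ n 0) i + m * ∑ t ∈ Finset.range q, k ^ t := by
  rw [NN, NN, ← pow_reflect, Finset.mul_sum, ← Finset.sum_add_distrib]
  apply Finset.sum_congr rfl
  intro t ht
  rw [dig_shift]
  ring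

lemma xF_shift (hk : 2 ≤ k) (i : ZMod q) :
    xF q k σ (dig q σ n m) i = xF q k σ (dig q σ n 0) i + (m : ℝ) / ((k : ℝ) - 1) := by
  have hq0 : 0 < q := Nat.pos_of_ne_zero (NeZero.ne q)
  have hden := denom_pos (q := q) hk hq0
  have hk1 := kk1 hk
  have hgn := geom_nat (q := q) (by omega : 1 ≤ k)
  have hg : ((k : ℝ) - 1) * ((∑ t ∈ Finset.range q, k ^ t : ℕ) : ℝ) = (k : ℝ) ^ q - 1 := by
    rw [← cast_k_sub_one hk]
    have : (((k - 1) * (∑ t ∈ Finset.range q, k ^ t) + 1 : ℕ) : ℝ) = ((k ^ q : ℕ) : ℝ) := by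
      exact_mod_cast congrArg (fun z : ℕ => (z : ℝ)) hgn
    push_cast at this
    push_cast
    linarith
  have hcast : ((NN q k σ (dig q σ n m) i : ℕ) : ℝ) =
      (NN q k σ (dig q σ n 0) i : ℝ) + (m : ℝ) * ((∑ t ∈ Finset.range q, k ^ t : ℕ) : ℝ) := by
    exact_mod_cast congrArg (fun z : ℕ => (z : ℝ)) (NN_shift (m := m) i)
  have hfrac : (m : ℝ) * ((∑ t ∈ Finset.range q, k ^ t : ℕ) : ℝ) / ((k : ℝ) ^ q - 1) =
      (m : ℝ) / ((k : ℝ) - 1) := by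
    rw [div_eq_div_iff hden.ne' hk1.ne']
    linear_combination (m : ℝ) * hg
  rw [xF, xF, hcast, add_div, hfrac]

end main

end GRFPD

/-- Let `σ` be a `q`-cycle with `des σ = d`, let `k > d`, and let `n` be a
`σ`-admissible vector in degree `k` (componentwise `n ≥ sig σ`, `∑ nᵢ = k - 1`,
`n_q ≥ 1`, where the index `q ≡ 0`). Then there are exactly `n_q` realizations
`𝒪` of `σ` under `m_k` with `fix 𝒪 = n`; more precisely for each `0 ≤ m < n_q`
there is a unique such realization with exactly `m` fixed points of `m_k` in
`(0, x₁)`, and these realizations are rotated copies: `𝒪_m = 𝒪_0 + m/(k-1)`. -/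
theorem general_realization_fixed_point_distribution (q d k : ℕ) [NeZero q]
    (hq : 2 ≤ q) (σ : Equiv.Perm (ZMod q)) (hσ : IsQCycle q σ)
    (hd : desNum q σ = d) (hk : d < k)
    (n : ZMod q → ℕ) (hsum : ∑ i, n i = k - 1) (hn0 : 1 ≤ n 0)
    (hadm : ∀ i, transMatrix q σ i i = 1 → 1 ≤ n i) :
    ({x : ZMod q → ℝ | MkRealization q k σ x ∧ ∀ i, fixDist q k x i = n i}.ncard
        = n 0) ∧
    (∀ m : ℕ, m < n 0 → ∃! x : ZMod q → ℝ,
        MkRealization q k σ x ∧ (∀ i, fixDist q k x i = n i) ∧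
        countFixBelow q k x = m) ∧
    (∀ m : ℕ, m < n 0 → ∀ x₀ xm : ZMod q → ℝ,
        (MkRealization q k σ x₀ ∧ (∀ i, fixDist q k x₀ i = n i) ∧
          countFixBelow q k x₀ = 0) →
        (MkRealization q k σ xm ∧ (∀ i, fixDist q k xm i = n i) ∧
          countFixBelow q k xm = m) →
        Set.range xm
          = (fun t => Int.fract (t + (m : ℝ) / ((k : ℝ) - 1))) '' Set.range x₀) := by
  classical
  have hk2 : 2 ≤ k := by
    have h1 := GRFPD.n0_le (n := n) hsum
    omega
  have hER := fun (m' : ℕ) (hm' : m' < n 0) =>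
    GRFPD.exist_real (n := n) (m := m') hσ hq hk2 hsum hn0 hm' hadm
  have hRE := fun (x : ZMod q → ℝ) =>
    GRFPD.realization_eq (n := n) hσ hq hk2 hsum hn0 hadm x
  constructor
  · -- cardinality
    have hset : {x : ZMod q → ℝ | MkRealization q k σ x ∧ ∀ i, fixDist q k x i = n i}
        = ↑((Finset.range (n 0)).image
            (fun m' => GRFPD.xF q k σ (GRFPD.dig q σ n m'))) := by
      ext x
      simp only [Set.mem_setOf_eq, Finset.coe_image, Set.mem_image, Finset.mem_coe,
        Finset.mem_range]
      constructor
      · rintro ⟨h1, h2⟩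
        obtain ⟨m', hm', hcfb, heq⟩ := hRE x h1 h2
        exact ⟨m', hm', heq.symm⟩
      · rintro ⟨m', hm', rfl⟩
        exact ⟨(hER m' hm').1, (hER m' hm').2.1⟩
    rw [hset, Set.ncard_coe_finset, Finset.card_image_of_injOn, Finset.card_range]
    intro a ha b hb hab
    simp only [Finset.coe_range, Set.mem_Iio] at ha hb
    have hab' : GRFPD.xF q k σ (GRFPD.dig q σ n a) = GRFPD.xF q k σ (GRFPD.dig q σ n b) := hab
    have h1 := (hER a ha).2.2
    have h2 := (hER b hb).2.2
    rw [hab'] at h1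
    rw [h1] at h2
    exact h2
  constructor
  · -- unique existence
    intro m hm
    refine ⟨GRFPD.xF q k σ (GRFPD.dig q σ n m),
      ⟨(hER m hm).1, (hER m hm).2.1, (hER m hm).2.2⟩, ?_⟩
    rintro y ⟨hy1, hy2, hy3⟩
    obtain ⟨m'', hm'', hcfb, heq⟩ := hRE y hy1 hy2
    have : m'' = m := by rw [hy3] at hcfb; omega
    rw [heq, this]
  · -- rotation
    intro m hm x₀ xm h₀ hmm
    obtain ⟨m0, hm0, hcfb0, heq0⟩ := hRE x₀ h₀.1 h₀.2.1
    have hm0z : m0 = 0 := by rw [h₀.2.2] at hcfb0; omega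
    obtain ⟨m1, hm1, hcfb1, heq1⟩ := hRE xm hmm.1 hmm.2.1
    have hm1m : m1 = m := by rw [hmm.2.2] at hcfb1; omega
    rw [hm0z] at heq0
    rw [hm1m] at heq1
    have hpt : ∀ i, xm i = x₀ i + (m : ℝ) / ((k : ℝ) - 1) := by
      intro i
      rw [heq0, heq1, GRFPD.xF_shift hk2]
    have hmemm : ∀ i, xm i ∈ Set.Ioo (0 : ℝ) 1 := hmm.1.1
    ext y
    constructor
    · rintro ⟨i, rfl⟩
      refine ⟨x₀ i, ⟨i, rfl⟩, ?_⟩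
      show Int.fract (x₀ i + (m : ℝ) / ((k : ℝ) - 1)) = xm i
      rw [← hpt i]
      exact Int.fract_eq_self.2 ⟨(hmemm i).1.le, (hmemm i).2⟩
    · rintro ⟨t, ⟨i, rfl⟩, rfl⟩
      refine ⟨i, ?_⟩
      show xm i = Int.fract (x₀ i + (m : ℝ) / ((k : ℝ) - 1))
      rw [← hpt i]
      exact (Int.fract_eq_self.2 ⟨(hmemm i).1.le, (hmemm i).2⟩).symm
end
end

section
/- Let σ ∈ 𝒞_q with des(σ) = d and sig(σ) = (a₁,…,a_q), and let k > d. Then the number of realizations of σ under m_k equals the binomial coefficient C(q+k−d, q) if a_q = 1, and equals C(q+k−d−1, q) if a_q = 0. -/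
open scoped Classical

noncomputable section

/-! ### Auxiliary development -/

namespace RCaux

section Basics
variable (q : ℕ) [NeZero q]

lemma rep_pos (i : ZMod q) : 1 ≤ rep q i := by
  unfold rep; split
  · exact Nat.one_le_iff_ne_zero.2 (NeZero.ne q)
  · exact Nat.one_le_iff_ne_zero.2 (by simpa [ZMod.val_eq_zero] using ‹¬ _›)

lemma rep_le (i : ZMod q) : rep q i ≤ q := by
  unfold rep; split
  · exact le_rfl
  · exact (ZMod.val_lt i).le

lemma rep_inj : Function.Injective (rep q) := by
  intro i j h
  by_cases hi : i = 0 <;> by_cases hj : j = 0 <;> simp [rep, hi, hj] at h ⊢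
  · exact absurd h (by have := ZMod.val_lt j; omega)
  · exact absurd h (by have := ZMod.val_lt i; omega)
  · exact ZMod.val_injective q h

lemma rep_natCast {p : ℕ} (h1 : 1 ≤ p) (h2 : p ≤ q) : rep q ((p : ZMod q)) = p := by
  rcases eq_or_lt_of_le h2 with rfl | h2
  · simp [rep, ZMod.natCast_self]
  · have : ((p : ZMod q)) ≠ 0 := by
      rw [Ne, ZMod.natCast_eq_zero_iff]
      intro hd
      exact absurd (Nat.le_of_dvd (by omega) hd) (by omega)
    rw [rep, if_neg this, ZMod.val_natCast_of_lt h2]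

lemma natCast_rep (i : ZMod q) : ((rep q i : ℕ) : ZMod q) = i := by
  unfold rep; split
  · simp [ZMod.natCast_self, *]
  · simp [ZMod.natCast_val, ZMod.cast_id]

lemma rep_zero : rep q 0 = q := by simp [rep]

lemma rep_eq_q_iff {i : ZMod q} : rep q i = q ↔ i = 0 := by
  constructor
  · intro h; by_contra hi
    rw [rep, if_neg hi] at h
    exact absurd h (by have := ZMod.val_lt i; omega)
  · rintro rfl; exact rep_zero q

lemma rep_add_one {i : ZMod q} (hq : 2 ≤ q) (hi : i ≠ 0) :
    rep q (i + 1) = rep q i + 1 := by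
  have hv := ZMod.val_lt i
  have hv1 : 1 ≤ i.val := by
    rcases Nat.eq_zero_or_pos i.val with h | h
    · exact absurd (by rwa [ZMod.val_eq_zero] at h) hi
    · exact h
  haveI : Fact (1 < q) := ⟨hq⟩
  by_cases h : i + 1 = 0
  · have h1 : i = -1 := eq_neg_of_add_eq_zero_left h
    rw [h, rep_zero, rep, if_neg hi, h1]
    have hvm : (-1 : ZMod q).val = q - 1 := by
      obtain ⟨q', rfl⟩ : ∃ q', q = q' + 1 := ⟨q - 1, by omega⟩
      exact ZMod.val_neg_one q'
    omega
  · rw [rep, if_neg h, rep, if_neg hi]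
    have hval : (i + 1).val = (i.val + 1) % q := by
      rw [ZMod.val_add, ZMod.val_one]
    have hne : (i + 1).val ≠ 0 := by
      rw [Ne, ZMod.val_eq_zero]; exact h
    have : i.val + 1 ≤ q := by omega
    rcases eq_or_lt_of_le this with he | hlt
    · exfalso; rw [hval, he, Nat.mod_self] at hne; exact hne rfl
    · rw [hval, Nat.mod_eq_of_lt hlt]

end Basics

section Cyc
variable {q : ℕ} [NeZero q] {σ : Equiv.Perm (ZMod q)}

lemma pow_fix {i : ZMod q} (h : σ i = i) (n : ℕ) : (σ ^ n) i = i := by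
  induction n with
  | zero => simp
  | succ n ih => rw [pow_succ, Equiv.Perm.mul_apply, h, ih]

lemma orderOf_eq (hq : 2 ≤ q) (hσ : IsQCycle q σ) : orderOf σ = q := by
  haveI : Fact (1 < q) := ⟨hq⟩
  have hc : σ.IsCycle := by
    have hx : ∃ x : ZMod q, σ x ≠ x := by
      by_contra h
      push_neg at h
      obtain ⟨n, hn⟩ := hσ 0 1
      rw [pow_fix (h 0)] at hn
      exact one_ne_zero hn.symm
    obtain ⟨x, hx⟩ := hx
    refine ⟨x, hx, fun y hy => ?_⟩
    obtain ⟨n, hn⟩ := hσ x y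
    exact ⟨(n : ℤ), by simpa using hn⟩
  have hs : σ.support = Finset.univ := by
    rw [Finset.eq_univ_iff_forall]
    intro y
    rw [Equiv.Perm.mem_support]
    intro h
    obtain ⟨z, hz⟩ := exists_ne y
    obtain ⟨n, hn⟩ := hσ y z
    rw [pow_fix h] at hn
    exact hz hn.symm
  rw [hc.orderOf, hs, Finset.card_univ, ZMod.card]

lemma pow_q_eq_one (hq : 2 ≤ q) (hσ : IsQCycle q σ) : σ ^ q = 1 := by
  have h := orderOf_eq hq hσ
  calc σ ^ q = σ ^ orderOf σ := by rw [h]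
  _ = 1 := pow_orderOf_eq_one σ

lemma orbit_small (hq : 2 ≤ q) (hσ : IsQCycle q σ) (i j : ZMod q) :
    ∃ t < q, (σ ^ t) i = j := by
  obtain ⟨n, hn⟩ := hσ i j
  refine ⟨n % orderOf σ, ?_, by rw [pow_mod_orderOf]; exact hn⟩
  rw [orderOf_eq hq hσ]
  exact Nat.mod_lt _ (by omega)

end Cyc

section Comb
variable (q : ℕ) [NeZero q] (σ : Equiv.Perm (ZMod q))

/-- descent at `i`. -/
def desc (i : ZMod q) : Prop := rep q (σ (i + 1)) < rep q (σ i)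

/-- indicator of descent. -/
def cval (i : ZMod q) : ℕ := if desc q σ i then 1 else 0

/-- number of descents at positions `1, …, p-1` of the chain. -/
def csum (p : ℕ) : ℕ :=
  ((Finset.Ico 1 p).filter fun t : ℕ => desc q σ ((t : ZMod q))).card

/-- number of descents away from `0`. -/
def dpr : ℕ := csum q σ q

/-- the staircase condition on digit vectors. -/
def Star (m : ZMod q → ℕ) : Prop :=
  ∀ i : ZMod q, i ≠ 0 → m i + cval q σ i ≤ m (i + 1)

variable {q σ}

lemma csum_mono {p p' : ℕ} (h : p ≤ p') : csum q σ p ≤ csum q σ p' :=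
  Finset.card_le_card (Finset.filter_subset_filter _ (Finset.Ico_subset_Ico le_rfl h))

lemma csum_le {p : ℕ} (hp : 1 ≤ p) : csum q σ p ≤ p - 1 := by
  refine le_trans (Finset.card_filter_le _ _) ?_
  rw [Nat.card_Ico]

lemma csum_succ {p : ℕ} (hp : 1 ≤ p) :
    csum q σ (p + 1) = csum q σ p + cval q σ ((p : ZMod q)) := by
  unfold csum cval
  have hins : Finset.Ico 1 (p + 1) = insert p (Finset.Ico 1 p) := by
    ext a; simp [Finset.mem_Ico, Finset.mem_insert]; omega
  rw [hins, Finset.filter_insert]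
  have hnm : p ∉ (Finset.Ico 1 p).filter fun t : ℕ => desc q σ ((t : ZMod q)) := by
    simp [Finset.mem_Ico]
  split
  · rw [Finset.card_insert_of_notMem hnm]
  · simp

end Comb


section Chain
variable {q : ℕ} [NeZero q] {σ : Equiv.Perm (ZMod q)}

lemma natCast_ne_zero {p : ℕ} (h1 : 1 ≤ p) (h2 : p < q) : ((p : ZMod q)) ≠ 0 := by
  intro h
  rw [ZMod.natCast_eq_zero_iff] at h
  exact absurd (Nat.le_of_dvd (by omega) h) (by omega)

/-- The chain inequality: along the chain `1, 2, …, q` the digits grow at least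
as fast as the descent count. -/
lemma chain_le {m : ZMod q → ℕ} (hm : Star q σ m) {p p' : ℕ}
    (h1 : 1 ≤ p) (h2 : p ≤ p') (h3 : p' ≤ q) :
    m ((p : ZMod q)) + csum q σ p' ≤ m ((p' : ZMod q)) + csum q σ p := by
  induction p' , h2 using Nat.le_induction with
  | base => rfl
  | succ p' hpp ih =>
      have h3' : p' ≤ q := by omega
      have hlt : p' < q := by omega
      have hstar := hm ((p' : ZMod q)) (natCast_ne_zero (by omega) hlt)
      have hc : csum q σ (p' + 1) = csum q σ p' + cval q σ ((p' : ZMod q)) :=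
        csum_succ (by omega)
      have hcast : ((p' : ZMod q)) + 1 = (((p' + 1 : ℕ)) : ZMod q) := by push_cast; ring
      rw [hcast] at hstar
      have := ih h3'
      omega

/-- If there is no descent in `[p, p')`, then `rep ∘ σ` grows along the chain. -/
lemma no_desc_mono {p p' : ℕ} (hq : 2 ≤ q)
    (h1 : 1 ≤ p) (h2 : p ≤ p') (h3 : p' ≤ q)
    (hnd : ∀ t, p ≤ t → t < p' → ¬ desc q σ ((t : ZMod q))) :
    rep q (σ ((p : ZMod q))) + (p' - p) ≤ rep q (σ ((p' : ZMod q))) := by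
  induction p' , h2 using Nat.le_induction with
  | base => simp
  | succ p' hpp ih =>
      have h3' : p' ≤ q := by omega
      have hlt : p' < q := by omega
      have hnd' : ∀ t, p ≤ t → t < p' → ¬ desc q σ ((t : ZMod q)) :=
        fun t ht ht' => hnd t ht (by omega)
      have hstep := hnd p' (by omega) (by omega)
      unfold desc at hstep
      push_neg at hstep
      haveI : Fact (1 < q) := ⟨hq⟩
      have hne : σ ((p' : ZMod q)) ≠ σ (((p' : ZMod q)) + 1) := by
        intro h
        have h2' := (σ.injective h).symm
        rw [add_eq_left] at h2'
        exact one_ne_zero h2'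
      have hstrict : rep q (σ ((p' : ZMod q))) < rep q (σ (((p' : ZMod q)) + 1)) := by
        rcases lt_or_eq_of_le hstep with h | h
        · exact h
        · exact absurd (rep_inj q h) hne
      have hcast : ((p' : ZMod q)) + 1 = (((p' + 1 : ℕ)) : ZMod q) := by push_cast; ring
      rw [hcast] at hstrict
      have := ih h3' hnd'
      omega

/-- a descent in `rep σ` between two chain positions forces a descent count jump. -/
lemma csum_jump (hq : 2 ≤ q) {p p' : ℕ}
    (h1 : 1 ≤ p) (h2 : p ≤ p') (h3 : p' ≤ q)
    (hdesc : rep q (σ ((p' : ZMod q))) < rep q (σ ((p : ZMod q)))) :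
    csum q σ p < csum q σ p' := by
  rcases lt_or_ge (csum q σ p) (csum q σ p') with h | h
  · exact h
  · exfalso
    have heq : ∀ t, p ≤ t → t < p' → ¬ desc q σ ((t : ZMod q)) := by
      intro t ht ht' hdt
      have hsplit : csum q σ p' =
          csum q σ p + ((Finset.Ico p p').filter fun t : ℕ => desc q σ ((t : ZMod q))).card := by
        unfold csum
        rw [← Finset.card_union_of_disjoint, ← Finset.filter_union]
        · congr 1
          rw [Finset.Ico_union_Ico_eq_Ico h1 h2]
        · exact Finset.disjoint_filter_filter
            (Finset.Ico_disjoint_Ico_consecutive 1 p p')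
      have hmem : t ∈ (Finset.Ico p p').filter fun t : ℕ => desc q σ ((t : ZMod q)) := by
        simp [Finset.mem_Ico, hdt]; omega
      have : 0 < ((Finset.Ico p p').filter fun t : ℕ => desc q σ ((t : ZMod q))).card :=
        Finset.card_pos.2 ⟨t, hmem⟩
      omega
    have := no_desc_mono hq h1 h2 h3 heq
    omega

/-- every `q`-cycle has a descent at some nonzero index. -/
lemma exists_desc (hq : 2 ≤ q) (hσ : IsQCycle q σ) :
    ∃ t : ℕ, 1 ≤ t ∧ t < q ∧ desc q σ ((t : ZMod q)) := by
  by_contra h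
  push_neg at h
  have hnd : ∀ t, 1 ≤ t → t < q → ¬ desc q σ ((t : ZMod q)) := by
    intro t h1 h2 hd
    exact absurd hd (h t h1 h2)
  have := no_desc_mono (σ := σ) hq le_rfl (by omega : 1 ≤ q) le_rfl hnd
  have hub := rep_le q (σ ((q : ZMod q)))
  have hlb := rep_pos q (σ ((1 : ℕ) : ZMod q))
  have hzero : ((q : ZMod q)) = 0 := ZMod.natCast_self q
  have hrepq : rep q (σ ((q : ZMod q))) = q := by omega
  rw [hzero] at hrepq
  have hfix : σ 0 = 0 := by
    rw [← rep_eq_q_iff (q := q)]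
    exact hrepq
  obtain ⟨n, hn⟩ := hσ 0 1
  rw [pow_fix hfix] at hn
  haveI : Fact (1 < q) := ⟨hq⟩
  exact one_ne_zero hn.symm

/-- `desNum` splits as descents away from zero plus the descent at zero. -/
lemma desNum_split (hq : 2 ≤ q) :
    desNum q σ = dpr q σ + cval q σ 0 := by
  unfold desNum dpr
  have h0 : (Finset.univ : Finset (ZMod q)) = insert 0 (Finset.univ.erase 0) :=
    (Finset.insert_erase (Finset.mem_univ 0)).symm
  rw [h0, Finset.filter_insert]
  have hcard : ((Finset.univ.erase (0 : ZMod q)).filter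
      fun i => rep q (σ (i + 1)) < rep q (σ i)).card =
      csum q σ q := by
    unfold csum
    refine Finset.card_bij' (fun i _ => rep q i) (fun t _ => ((t : ZMod q))) ?_ ?_ ?_ ?_
    · intro a ha
      rw [Finset.mem_filter, Finset.mem_erase] at ha
      rw [Finset.mem_filter, Finset.mem_Ico]
      have h1 := rep_pos q a
      have h2 : rep q a < q := by
        rw [rep, if_neg ha.1.1]; exact ZMod.val_lt a
      refine ⟨⟨h1, h2⟩, ?_⟩
      show desc q σ ((rep q a : ℕ) : ZMod q)
      rw [natCast_rep]
      exact ha.2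
    · intro t ht
      rw [Finset.mem_filter, Finset.mem_Ico] at ht
      rw [Finset.mem_filter, Finset.mem_erase]
      exact ⟨⟨natCast_ne_zero ht.1.1 ht.1.2, Finset.mem_univ _⟩, ht.2⟩
    · intro a ha
      exact natCast_rep q a
    · intro t ht
      rw [Finset.mem_filter, Finset.mem_Ico] at ht
      exact rep_natCast q ht.1.1 (le_of_lt ht.1.2)
  by_cases hd : desc q σ 0
  · rw [if_pos (show rep q (σ (0 + 1)) < rep q (σ 0) from hd),
      Finset.card_insert_of_notMem (by simp), hcard]
    simp [cval, hd]
  · rw [if_neg (show ¬ rep q (σ (0 + 1)) < rep q (σ 0) from hd), hcard]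
    simp [cval, hd]

end Chain


section Trans
variable {q : ℕ} [NeZero q] {σ : Equiv.Perm (ZMod q)}

lemma val_cmp {q : ℕ} [NeZero q] (hq : 2 ≤ q) {u v : ZMod q} (huv : u ≠ v) :
    (((0 : ZMod q) - u).val < (v - u).val ↔ rep q v < rep q u) := by
  haveI : Fact (1 < q) := ⟨hq⟩
  have hvu := ZMod.val_lt u
  have hvv := ZMod.val_lt v
  by_cases h0u : u = 0
  · subst h0u
    simp only [sub_zero, zero_sub, neg_zero, ZMod.val_zero]
    have hv0 : v ≠ 0 := fun h => huv h.symm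
    have : 0 < v.val := by
      rcases Nat.eq_zero_or_pos v.val with h | h
      · exact absurd (by rwa [ZMod.val_eq_zero] at h) hv0
      · exact h
    rw [rep_zero, rep, if_neg hv0]
    constructor <;> intro <;> omega
  · have hneg : ((0 : ZMod q) - u).val = q - u.val := by
      rw [zero_sub, ZMod.neg_val, if_neg h0u]
    have huval : 1 ≤ u.val := by
      rcases Nat.eq_zero_or_pos u.val with h | h
      · exact absurd (by rwa [ZMod.val_eq_zero] at h) h0u
      · exact h
    by_cases h0v : v = 0
    · subst h0v
      rw [hneg, rep_zero, rep, if_neg h0u]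
      constructor <;> intro h <;> omega
    · have hvval : 1 ≤ v.val := by
        rcases Nat.eq_zero_or_pos v.val with h | h
        · exact absurd (by rwa [ZMod.val_eq_zero] at h) h0v
        · exact h
      have hvadd : (v - u).val = (v.val + (q - u.val)) % q := by
        rw [sub_eq_add_neg, ZMod.val_add, ZMod.neg_val, if_neg h0u]
      have hvne : v.val ≠ u.val := fun h => huv (ZMod.val_injective q h.symm)
      rw [rep, if_neg h0v, rep, if_neg h0u, hneg, hvadd]
      rcases lt_or_gt_of_ne hvne with h | h
      · have he : (v.val + (q - u.val)) % q = v.val + (q - u.val) :=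
          Nat.mod_eq_of_lt (by omega)
        rw [he]
        constructor <;> intro <;> omega
      · have he : v.val + (q - u.val) = (v.val - u.val) + q := by omega
        rw [he, Nat.add_mod_right, Nat.mod_eq_of_lt (by omega)]
        constructor <;> intro <;> omega

lemma trans_zero_eq (hq : 2 ≤ q) :
    transMatrix q σ 0 0 = (if desc q σ 0 then (1 : ℝ) else 0) := by
  haveI : Fact (1 < q) := ⟨hq⟩
  have huv : σ 0 ≠ σ (0 + 1) := by
    intro h
    have := σ.injective h
    simp at this
  have key : (((0 : ZMod q) - σ 0).val < (σ (0 + 1) - σ 0).val ↔ desc q σ 0) :=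
    val_cmp hq huv
  unfold transMatrix
  simp only [Matrix.of_apply]
  exact if_congr key rfl rfl

end Trans

section Analytic
variable {q k : ℕ} [NeZero q] {σ : Equiv.Perm (ZMod q)}

/-- the number with base-`k` digits `m i, m (σ i), m (σ² i), …`. -/
def Xr (q k : ℕ) [NeZero q] (σ : Equiv.Perm (ZMod q)) (m : ZMod q → ℕ) (i : ZMod q) : ℝ :=
  (∑ j ∈ Finset.range q, (m ((σ ^ j) i) : ℝ) * (k : ℝ) ^ (q - 1 - j)) / ((k : ℝ) ^ q - 1)

lemma denom_pos (hq : 2 ≤ q) (hk : 2 ≤ k) : (0 : ℝ) < (k : ℝ) ^ q - 1 := by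
  have : (1 : ℝ) < (k : ℝ) := by exact_mod_cast hk
  have := one_lt_pow₀ this (by omega : q ≠ 0)
  linarith

lemma geom_eq (hq : 2 ≤ q) :
    ∑ j ∈ Finset.range q, ((k : ℝ) - 1) * (k : ℝ) ^ (q - 1 - j) = (k : ℝ) ^ q - 1 := by
  rw [← Finset.mul_sum]
  rw [Finset.sum_range_reflect (fun j => (k : ℝ) ^ j) q]
  rw [mul_comm, geom_sum_mul]

lemma Xr_mul (hq : 2 ≤ q) (hσ : IsQCycle q σ) (hk : 2 ≤ k) (m : ZMod q → ℕ) (i : ZMod q) :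
    (k : ℝ) * Xr q k σ m i = Xr q k σ m (σ i) + m i := by
  have hD := denom_pos hq hk (q := q)
  have hpow : σ ^ q = 1 := pow_q_eq_one hq hσ
  obtain ⟨Q, hQ⟩ : ∃ Q, q = Q + 1 := ⟨q - 1, by omega⟩
  have e2 : ∀ j, (σ ^ j) (σ i) = (σ ^ (j + 1)) i := by
    intro j
    rw [pow_succ, Equiv.Perm.mul_apply]
  have key : (k : ℝ) * (∑ j ∈ Finset.range q, (m ((σ ^ j) i) : ℝ) * (k : ℝ) ^ (q - 1 - j))
      = ((k : ℝ) ^ q - 1) * m i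
        + ∑ j ∈ Finset.range q, (m ((σ ^ j) (σ i)) : ℝ) * (k : ℝ) ^ (q - 1 - j) := by
    subst hQ
    simp only [Nat.add_sub_cancel]
    have e1 : ∀ j ∈ Finset.range (Q + 1),
        (k : ℝ) * ((m ((σ ^ j) i) : ℝ) * (k : ℝ) ^ (Q - j))
          = (m ((σ ^ j) i) : ℝ) * (k : ℝ) ^ (Q + 1 - j) := by
      intro j hj
      rw [Finset.mem_range] at hj
      have : Q + 1 - j = (Q - j) + 1 := by omega
      rw [this, pow_succ]
      ring
    rw [Finset.mul_sum, Finset.sum_congr rfl e1]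
    rw [Finset.sum_range_succ' (fun j => (m ((σ ^ j) i) : ℝ) * (k : ℝ) ^ (Q + 1 - j)) Q]
    rw [Finset.sum_range_succ (fun j => (m ((σ ^ j) (σ i)) : ℝ) * (k : ℝ) ^ (Q - j)) Q]
    have e3 : ∀ j, (m ((σ ^ (j + 1)) i) : ℝ) * (k : ℝ) ^ (Q + 1 - (j + 1))
        = (m ((σ ^ j) (σ i)) : ℝ) * (k : ℝ) ^ (Q - j) := by
      intro j
      rw [e2 j]
      congr 2
      omega
    rw [Finset.sum_congr rfl fun j _ => e3 j]
    have e4 : (σ ^ Q) (σ i) = i := by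
      rw [e2, hpow]
      rfl
    rw [e4]
    simp only [Nat.sub_self, pow_zero, Nat.sub_zero, mul_one, Equiv.Perm.coe_one, id_eq]
    ring
  unfold Xr
  field_simp
  linarith [key]

lemma Xr_nonneg (hq : 2 ≤ q) (hk : 2 ≤ k) (m : ZMod q → ℕ) (i : ZMod q) :
    0 ≤ Xr q k σ m i := by
  have hD := denom_pos hq hk (q := q)
  apply div_nonneg _ hD.le
  apply Finset.sum_nonneg
  intro j _
  positivity

lemma Xr_le_one (hq : 2 ≤ q) (hk : 2 ≤ k) (m : ZMod q → ℕ) (hm : ∀ i, m i < k) (i : ZMod q) :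
    Xr q k σ m i ≤ 1 := by
  have hD := denom_pos hq hk (q := q)
  rw [Xr, div_le_one hD, ← geom_eq (k := k) hq]
  apply Finset.sum_le_sum
  intro j _
  have h1 : (m ((σ ^ j) i) : ℝ) ≤ (k : ℝ) - 1 := by
    have := hm ((σ ^ j) i)
    have : (m ((σ ^ j) i) : ℝ) + 1 ≤ (k : ℝ) := by exact_mod_cast this
    linarith
  have h2 : (0 : ℝ) < (k : ℝ) ^ (q - 1 - j) := by positivity
  nlinarith

lemma Xr_lt_one (hq : 2 ≤ q) (hσ : IsQCycle q σ) (hk : 2 ≤ k) (m : ZMod q → ℕ)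
    (hm : ∀ i, m i < k) {j0 : ZMod q} (hj : m j0 + 1 < k) (i : ZMod q) :
    Xr q k σ m i < 1 := by
  have hD := denom_pos hq hk (q := q)
  rw [Xr, div_lt_one hD, ← geom_eq (k := k) hq]
  obtain ⟨t, ht, hti⟩ := orbit_small hq hσ i j0
  apply Finset.sum_lt_sum
  · intro j _
    have h1 : (m ((σ ^ j) i) : ℝ) ≤ (k : ℝ) - 1 := by
      have := hm ((σ ^ j) i)
      have : (m ((σ ^ j) i) : ℝ) + 1 ≤ (k : ℝ) := by exact_mod_cast this
      linarith
    have h2 : (0 : ℝ) < (k : ℝ) ^ (q - 1 - j) := by positivity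
    nlinarith
  · refine ⟨t, Finset.mem_range.2 ht, ?_⟩
    rw [hti]
    have h1 : (m j0 : ℝ) < (k : ℝ) - 1 := by
      have : (m j0 : ℝ) + 1 + 1 ≤ (k : ℝ) := by exact_mod_cast hj
      linarith
    have h2 : (0 : ℝ) < (k : ℝ) ^ (q - 1 - t) := by positivity
    nlinarith

lemma Xr_pos (hq : 2 ≤ q) (hσ : IsQCycle q σ) (hk : 2 ≤ k) (m : ZMod q → ℕ)
    {j0 : ZMod q} (hj : 0 < m j0) (i : ZMod q) :
    0 < Xr q k σ m i := by
  have hD := denom_pos hq hk (q := q)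
  rw [Xr, lt_div_iff₀ hD]
  rw [zero_mul]
  obtain ⟨t, ht, hti⟩ := orbit_small hq hσ i j0
  have : (0 : ℝ) = ∑ j ∈ Finset.range q, (0 : ℝ) := by simp
  rw [this]
  apply Finset.sum_lt_sum
  · intro j _
    positivity
  · refine ⟨t, Finset.mem_range.2 ht, ?_⟩
    rw [hti]
    have h1 : (0 : ℝ) < (m j0 : ℝ) := by exact_mod_cast hj
    have h2 : (0 : ℝ) < (k : ℝ) ^ (q - 1 - t) := by positivity
    positivity

end Analytic


section Order
variable {q k : ℕ} [NeZero q] {σ : Equiv.Perm (ZMod q)} {m : ZMod q → ℕ}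

lemma mono_of_star (hm : Star q σ m) {i j : ZMod q} (hij : rep q i < rep q j) :
    m i + csum q σ (rep q j) ≤ m j + csum q σ (rep q i) := by
  have := chain_le hm (rep_pos q i) hij.le (rep_le q j)
  rwa [natCast_rep, natCast_rep] at this

lemma jump_of_desc (hq : 2 ≤ q) {i j : ZMod q} (hij : rep q i < rep q j)
    (hd : rep q (σ j) < rep q (σ i)) :
    csum q σ (rep q i) < csum q σ (rep q j) := by
  have := csum_jump (σ := σ) hq (rep_pos q i) hij.le (rep_le q j)
  rw [natCast_rep, natCast_rep] at this
  exact this hd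

lemma exists_small (hq : 2 ≤ q) (hσ : IsQCycle q σ) (hb : ∀ i, m i < k)
    (hm : Star q σ m) : ∃ t0 : ZMod q, m t0 + 1 < k := by
  by_contra h
  push_neg at h
  obtain ⟨t, ht1, ht2, htd⟩ := exists_desc hq hσ
  have hstar := hm ((t : ZMod q)) (natCast_ne_zero ht1 ht2)
  unfold cval at hstar
  rw [if_pos htd] at hstar
  have h1 := h ((t : ZMod q))
  have h2 := hb (((t : ZMod q)) + 1)
  omega

lemma exists_posdigit (hq : 2 ≤ q) (hσ : IsQCycle q σ) (hm : Star q σ m) :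
    ∃ t0 : ZMod q, 0 < m t0 := by
  by_contra h
  push_neg at h
  obtain ⟨t, ht1, ht2, htd⟩ := exists_desc hq hσ
  have hstar := hm ((t : ZMod q)) (natCast_ne_zero ht1 ht2)
  unfold cval at hstar
  rw [if_pos htd] at hstar
  have h2 := h (((t : ZMod q)) + 1)
  omega

lemma Xr_order (hq : 2 ≤ q) (hσ : IsQCycle q σ) (hk : 2 ≤ k)
    (hb : ∀ i, m i < k) (hm : Star q σ m) :
    ∀ i j : ZMod q, rep q i < rep q j → Xr q k σ m i < Xr q k σ m j := by
  haveI : Fact (1 < q) := ⟨hq⟩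
  obtain ⟨ttop, httop⟩ := exists_small hq hσ hb hm
  obtain ⟨tbot, htbot⟩ := exists_posdigit hq hσ hm
  set X : ZMod q → ℝ := Xr q k σ m with hX
  have hkR : (2 : ℝ) ≤ (k : ℝ) := by exact_mod_cast hk
  have diff : ∀ a b : ZMod q,
      (k : ℝ) * (X b - X a) = ((m b : ℝ) - m a) + (X (σ b) - X (σ a)) := by
    intro a b
    have h1 := Xr_mul hq hσ hk m a
    have h2 := Xr_mul hq hσ hk m b
    rw [mul_sub]
    rw [hX]
    linarith
  have hge0 : ∀ a : ZMod q, 0 ≤ X a := fun a => Xr_nonneg hq hk m a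
  have hle1 : ∀ a : ZMod q, X a ≤ 1 := fun a => Xr_le_one hq hk m hb a
  have hlt1 : ∀ a : ZMod q, X a < 1 := fun a => Xr_lt_one hq hσ hk m hb httop a
  -- case A : descent pairs are strictly increasing
  have caseA : ∀ i j : ZMod q, rep q i < rep q j → rep q (σ j) < rep q (σ i) →
      0 < X j - X i := by
    intro i j hij hd
    have h1 := mono_of_star hm hij
    have h2 := jump_of_desc hq hij hd
    have h3 : m i + 1 ≤ m j := by omega
    have h3' : (m i : ℝ) + 1 ≤ (m j : ℝ) := by exact_mod_cast h3
    have h4 := diff i j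
    have h5 := hge0 (σ j)
    have h6 := hlt1 (σ i)
    nlinarith
  have hrep_ne : ∀ i j : ZMod q, rep q i < rep q j → rep q (σ i) ≠ rep q (σ j) := by
    intro i j hij h
    have h1 := rep_inj q h
    have h2 := σ.injective h1
    subst h2
    exact lt_irrefl _ hij
  -- the pair set and its minimum
  set P : Finset (ZMod q × ZMod q) :=
    Finset.univ.filter (fun p => rep q p.1 < rep q p.2) with hP
  have hmemP : ∀ p : ZMod q × ZMod q, p ∈ P ↔ rep q p.1 < rep q p.2 := by
    intro p
    rw [hP, Finset.mem_filter]
    simp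
  have hrep1 : rep q (1 : ZMod q) = 1 := by
    rw [← Nat.cast_one, rep_natCast q le_rfl (by omega)]
  have hPne : P.Nonempty := by
    refine ⟨(1, 0), ?_⟩
    rw [hmemP]
    rw [rep_zero]
    simp only
    rw [hrep1]
    omega
  set f : ZMod q × ZMod q → ℝ := fun p => X p.2 - X p.1 with hf
  set D := P.inf' hPne f with hDdef
  have hDle : ∀ p ∈ P, D ≤ f p := fun p hp => Finset.inf'_le f hp
  obtain ⟨p0, hp0P, hp0⟩ := Finset.exists_mem_eq_inf' hPne f
  -- Step 1 : 0 ≤ D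
  have hD0 : 0 ≤ D := by
    by_contra hneg
    push_neg at hneg
    obtain ⟨i, j⟩ := p0
    rw [hmemP] at hp0P
    dsimp only at hp0P hp0
    rcases lt_or_gt_of_ne (hrep_ne i j hp0P) with hasc | hdesc
    · have hPσ : (σ i, σ j) ∈ P := by rw [hmemP]; exact hasc
      have h1 := mono_of_star hm hp0P
      have h2 := csum_mono (σ := σ) hp0P.le
      have h3 : m i ≤ m j := by omega
      have h3' : (m i : ℝ) ≤ (m j : ℝ) := by exact_mod_cast h3
      have h4 := diff i j
      have h5 := hDle _ hPσ
      have h6 : D = X j - X i := hp0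
      simp only [hf] at h5
      nlinarith
    · have := caseA i j hp0P hdesc
      have h6 : D = X j - X i := hp0
      linarith
  -- Step 2 : no ties
  have hnotie : ∀ i j : ZMod q, rep q i < rep q j → X i ≠ X j := by
    intro i j hij htie
    set T : Finset (ZMod q × ZMod q) := P.filter (fun p => X p.1 = X p.2) with hT
    have hmemT : ∀ p : ZMod q × ZMod q, p ∈ T ↔ (rep q p.1 < rep q p.2 ∧ X p.1 = X p.2) := by
      intro p
      rw [hT, Finset.mem_filter, hmemP]
    have hclose : ∀ p ∈ T, (σ p.1, σ p.2) ∈ T := by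
      rintro ⟨a, b⟩ hab
      rw [hmemT] at hab
      dsimp only at hab
      obtain ⟨hab1, hab2⟩ := hab
      rcases lt_or_gt_of_ne (hrep_ne a b hab1) with hasc | hdesc
      · rw [hmemT]
        refine ⟨hasc, ?_⟩
        have h1 := mono_of_star hm hab1
        have h2 := csum_mono (σ := σ) hab1.le
        have h3 : m a ≤ m b := by omega
        have h3' : (m a : ℝ) ≤ (m b : ℝ) := by exact_mod_cast h3
        have h4 := diff a b
        have hPσ : (σ a, σ b) ∈ P := by rw [hmemP]; exact hasc
        have h5 := hDle _ hPσ
        simp only [hf] at h5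
        have hk0 : (0:ℝ) < (k:ℝ) := by linarith
        nlinarith
      · have := caseA a b hab1 hdesc
        rw [hab2] at this
        simp at this
    have hiter : ∀ n : ℕ, ((σ ^ n) i, (σ ^ n) j) ∈ T := by
      intro n
      induction n with
      | zero =>
          rw [hmemT]
          exact ⟨hij, htie⟩
      | succ n ih =>
          have := hclose _ ih
          have e : ∀ a : ZMod q, (σ ^ (n + 1)) a = σ ((σ ^ n) a) := by
            intro a
            rw [pow_succ']
            rfl
          rw [e, e]
          exact this
    obtain ⟨t, ht⟩ := hσ i j
    set r : ℕ → ℕ := fun n => rep q ((σ ^ (n * t)) i) with hr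
    have hrs : ∀ n : ℕ, r n < r (n + 1) := by
      intro n
      have hmem := hiter (n * t)
      rw [hmemT] at hmem
      have e : (σ ^ (n * t)) j = (σ ^ ((n + 1) * t)) i := by
        rw [← ht, ← Equiv.Perm.mul_apply, ← pow_add]
        congr 1
        ring
      have := hmem.1
      rw [e] at this
      exact this
    have hge : ∀ n : ℕ, n ≤ r n := by
      intro n
      induction n with
      | zero => omega
      | succ n ih => have := hrs n; omega
    have h1 := hge (q + 1)
    have h2 : r (q + 1) ≤ q := rep_le q _
    omega
  intro i j hij
  have h1 := hDle (i, j) (by rw [hmemP]; exact hij)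
  simp only [hf] at h1
  have h2 := hnotie i j hij
  have : X i ≤ X j := by linarith
  exact lt_of_le_of_ne this h2

lemma Xr_mem_Ioo (hq : 2 ≤ q) (hσ : IsQCycle q σ) (hk : 2 ≤ k)
    (hb : ∀ i, m i < k) (hm : Star q σ m) (i : ZMod q) :
    Xr q k σ m i ∈ Set.Ioo (0 : ℝ) 1 := by
  obtain ⟨ttop, httop⟩ := exists_small hq hσ hb hm
  obtain ⟨tbot, htbot⟩ := exists_posdigit hq hσ hm
  exact ⟨Xr_pos hq hσ hk m htbot i, Xr_lt_one hq hσ hk m hb httop i⟩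

end Order


section Corr
variable {q k : ℕ} [NeZero q] {σ : Equiv.Perm (ZMod q)}

/-- the set of admissible digit vectors. -/
def Mset (q k : ℕ) [NeZero q] (σ : Equiv.Perm (ZMod q)) : Set (ZMod q → ℕ) :=
  {m | (∀ i, m i < k) ∧ Star q σ m}

lemma Xr_realization (hq : 2 ≤ q) (hσ : IsQCycle q σ) (hk : 2 ≤ k)
    {m : ZMod q → ℕ} (hm : m ∈ Mset q k σ) :
    MkRealization q k σ (Xr q k σ m) := by
  obtain ⟨hb, hs⟩ := hm
  refine ⟨fun i => Xr_mem_Ioo hq hσ hk hb hs i,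
    fun i j h => Xr_order hq hσ hk hb hs i j h, fun i => ⟨(m i : ℤ), ?_⟩⟩
  have := Xr_mul hq hσ hk m i
  push_cast
  exact this

lemma Xr_injOn (hq : 2 ≤ q) (hσ : IsQCycle q σ) (hk : 2 ≤ k) :
    Set.InjOn (fun m => Xr q k σ m) (Mset q k σ) := by
  intro m hm m' hm' h
  funext i
  have h1 := Xr_mul hq hσ hk m i
  have h2 := Xr_mul hq hσ hk m' i
  have : (m i : ℝ) = (m' i : ℝ) := by
    have e1 : Xr q k σ m i = Xr q k σ m' i := congrFun h i
    have e2 : Xr q k σ m (σ i) = Xr q k σ m' (σ i) := congrFun h (σ i)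
    rw [e1, e2] at h1
    linarith
  exact_mod_cast this

lemma recursion_unique (hk : 2 ≤ k) {x y : ZMod q → ℝ} {w : ZMod q → ℝ}
    (hx : ∀ i, (k : ℝ) * x i = x (σ i) + w i)
    (hy : ∀ i, (k : ℝ) * y i = y (σ i) + w i) : x = y := by
  haveI : Nonempty (ZMod q) := ⟨0⟩
  obtain ⟨i0, _, hmax⟩ := Finset.exists_max_image Finset.univ
    (fun i => |x i - y i|) ⟨0, Finset.mem_univ 0⟩
  set M := |x i0 - y i0| with hM
  have hM0 : 0 ≤ M := abs_nonneg _
  have hkM : (k : ℝ) * M = |x (σ i0) - y (σ i0)| := by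
    rw [hM, ← abs_of_nonneg (by positivity : (0:ℝ) ≤ (k:ℝ)), ← abs_mul]
    congr 1
    have h1 := hx i0
    have h2 := hy i0
    ring_nf
    nlinarith [hx i0, hy i0]
  have hle : |x (σ i0) - y (σ i0)| ≤ M := hmax (σ i0) (Finset.mem_univ _)
  have hk2 : (2 : ℝ) ≤ (k : ℝ) := by exact_mod_cast hk
  have hMz : M = 0 := by nlinarith
  funext i
  have hthis := hmax i (Finset.mem_univ i)
  rw [hMz] at hthis
  have h0 := abs_nonpos_iff.1 hthis
  linarith

lemma surj_real (hq : 2 ≤ q) (hσ : IsQCycle q σ) (hk : 2 ≤ k)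
    {x : ZMod q → ℝ} (hx : MkRealization q k σ x) :
    ∃ m ∈ Mset q k σ, Xr q k σ m = x := by
  haveI : Fact (1 < q) := ⟨hq⟩
  obtain ⟨hIoo, hord, hrec⟩ := hx
  choose mz hmz using hrec
  have hkR : (2 : ℝ) ≤ (k : ℝ) := by exact_mod_cast hk
  have hbound : ∀ i, 0 ≤ mz i ∧ mz i < (k : ℤ) := by
    intro i
    have h1 := hmz i
    simp only at h1
    have h2 := hIoo i
    have h3 := hIoo (σ i)
    obtain ⟨h2a, h2b⟩ := h2
    obtain ⟨h3a, h3b⟩ := h3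
    have hlow : (-1 : ℝ) < (mz i : ℝ) := by nlinarith
    have hhigh : (mz i : ℝ) < (k : ℝ) := by nlinarith
    constructor
    · exact_mod_cast by linarith [show (-1 : ℤ) < mz i from by exact_mod_cast hlow]
    · exact_mod_cast hhigh
  set m : ZMod q → ℕ := fun i => (mz i).toNat with hmdef
  have hcast : ∀ i, (m i : ℝ) = (mz i : ℝ) := by
    intro i
    exact_mod_cast congrArg (fun z : ℤ => (z : ℝ)) (Int.toNat_of_nonneg (hbound i).1)
  have hxrec : ∀ i, (k : ℝ) * x i = x (σ i) + (m i : ℝ) := by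
    intro i
    rw [hcast i]
    exact hmz i
  have hmem : m ∈ Mset q k σ := by
    constructor
    · intro i
      have h1 := (hbound i).2
      have h2 := (hbound i).1
      show (mz i).toNat < k
      omega
    · intro i hi
      have hrep := rep_add_one (q := q) hq hi
      have hxlt : x i < x (i + 1) := hord i (i + 1) (by omega)
      have h1 := hxrec i
      have h2 := hxrec (i + 1)
      have hσIoo1 := hIoo (σ i)
      have hσIoo2 := hIoo (σ (i + 1))
      by_cases hd : desc q σ i
      · have hxd : x (σ (i + 1)) < x (σ i) := hord _ _ hd
        have : (m i : ℝ) < (m (i + 1) : ℝ) := by nlinarith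
        have hmm : m i < m (i + 1) := by exact_mod_cast this
        unfold cval
        rw [if_pos hd]
        omega
      · have h4 : (m i : ℝ) - 1 < (m (i + 1) : ℝ) := by
          obtain ⟨ha, hb'⟩ := hσIoo1
          obtain ⟨hc, hd'⟩ := hσIoo2
          nlinarith
        have hmm : m i ≤ m (i + 1) := by
          have h5 : (m i : ℝ) < (m (i + 1) : ℝ) + 1 := by linarith
          have h6 : m i < m (i + 1) + 1 := by exact_mod_cast h5
          omega
        unfold cval
        rw [if_neg hd]
        omega
  refine ⟨m, hmem, ?_⟩
  apply recursion_unique (w := fun i => (m i : ℝ)) hk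
  · intro i
    exact Xr_mul hq hσ hk m i
  · intro i
    exact hxrec i

lemma ncard_real_eq (hq : 2 ≤ q) (hσ : IsQCycle q σ) (hk : 2 ≤ k) :
    {x : ZMod q → ℝ | MkRealization q k σ x}.ncard = (Mset q k σ).ncard := by
  have himg : (fun m => Xr q k σ m) '' (Mset q k σ)
      = {x : ZMod q → ℝ | MkRealization q k σ x} := by
    ext x
    constructor
    · rintro ⟨m, hm, rfl⟩
      exact Xr_realization hq hσ hk hm
    · intro hx
      obtain ⟨m, hm, hme⟩ := surj_real hq hσ hk hx
      exact ⟨m, hm, hme⟩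
  rw [← himg, Set.ncard_image_of_injOn (Xr_injOn hq hσ hk)]

end Corr


section Count
variable {q k : ℕ} [NeZero q] {σ : Equiv.Perm (ZMod q)}

lemma fin_gap {n : ℕ} {f : Fin n → ℕ} (hf : StrictMono f) :
    ∀ d : ℕ, ∀ a b : Fin n, b.val = a.val + d → f a + d ≤ f b := by
  intro d
  induction d with
  | zero =>
      intro a b h
      have : a = b := Fin.ext (by omega)
      subst this
      omega
  | succ d ih =>
      intro a b h
      have hlt : a.val + d < n := by have := b.isLt; omega
      set c : Fin n := ⟨a.val + d, hlt⟩ with hc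
      have h1 := ih a c rfl
      have h2 : f c < f b := hf (by rw [Fin.lt_def]; simp [hc]; omega)
      omega

lemma fin_ge {n : ℕ} {f : Fin n → ℕ} (hf : StrictMono f) (t : Fin n) : t.val ≤ f t := by
  have hpos : 0 < n := t.pos
  have := fin_gap hf t.val ⟨0, hpos⟩ t (by simp)
  omega

/-- the strictified digit value at chain position `p`. -/
def ufun (q : ℕ) [NeZero q] (σ : Equiv.Perm (ZMod q)) (m : ZMod q → ℕ) (p : ℕ) : ℕ :=
  m ((p : ZMod q)) + (p - 1) - csum q σ p

/-- the finite set of strictified digit values. -/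
def Fm (q : ℕ) [NeZero q] (σ : Equiv.Perm (ZMod q)) (m : ZMod q → ℕ) : Finset ℕ :=
  (Finset.Icc 1 q).image (ufun q σ m)

lemma u_mono {m : ZMod q → ℕ} (hm : m ∈ Mset q k σ) {p p' : ℕ}
    (h1 : 1 ≤ p) (h2 : p < p') (h3 : p' ≤ q) :
    ufun q σ m p < ufun q σ m p' := by
  have hc := chain_le hm.2 h1 h2.le h3
  have hc1 := csum_le (σ := σ) h1
  have hc2 := csum_le (σ := σ) (show 1 ≤ p' by omega)
  unfold ufun
  omega

lemma u_bound {m : ZMod q → ℕ} (hm : m ∈ Mset q k σ) {p : ℕ}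
    (h1 : 1 ≤ p) (h3 : p ≤ q) (hq : 2 ≤ q) :
    ufun q σ m p < k - dpr q σ + q - 1 := by
  have hc := chain_le hm.2 h1 h3 le_rfl
  have hc1 := csum_le (σ := σ) h1
  have hb := hm.1 ((q : ZMod q))
  have hdk : dpr q σ ≤ csum q σ q := le_rfl
  unfold ufun
  unfold dpr at *
  omega

lemma Fm_card {m : ZMod q → ℕ} (hm : m ∈ Mset q k σ) : (Fm q σ m).card = q := by
  have hinj : Set.InjOn (ufun q σ m) ↑(Finset.Icc 1 q) := by
    intro p hp p' hp' h
    rw [Finset.mem_coe, Finset.mem_Icc] at hp hp'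
    by_contra hne
    rcases lt_or_gt_of_ne hne with hlt | hlt
    · exact absurd h (Nat.ne_of_lt (u_mono hm hp.1 hlt hp'.2))
    · exact absurd h.symm (Nat.ne_of_lt (u_mono hm hp'.1 hlt hp.2))
  rw [Fm, Finset.card_image_of_injOn hinj, Nat.card_Icc]
  omega

lemma Fm_mem_Omega (hq : 2 ≤ q) {m : ZMod q → ℕ} (hm : m ∈ Mset q k σ) :
    Fm q σ m ∈ (Finset.range (k - dpr q σ + q - 1)).powersetCard q := by
  rw [Finset.mem_powersetCard]
  refine ⟨?_, Fm_card hm⟩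
  intro a ha
  rw [Fm, Finset.mem_image] at ha
  obtain ⟨p, hp, rfl⟩ := ha
  rw [Finset.mem_Icc] at hp
  rw [Finset.mem_range]
  exact u_bound hm hp.1 hp.2 hq

lemma gfun_eq {m : ZMod q → ℕ} (hm : m ∈ Mset q k σ) :
    (fun t : Fin q => ufun q σ m (t.val + 1)) = (Fm q σ m).orderEmbOfFin (Fm_card hm) := by
  apply Finset.orderEmbOfFin_unique
  · intro t
    rw [Fm, Finset.mem_image]
    exact ⟨t.val + 1, Finset.mem_Icc.2 ⟨by omega, by have := t.isLt; omega⟩, rfl⟩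
  · intro a b hab
    exact u_mono hm (by omega) (by rw [Fin.lt_def] at hab; omega) (by have := b.isLt; omega)

lemma m_recover {m : ZMod q → ℕ} {p : ℕ} (h1 : 1 ≤ p) (h3 : p ≤ q) :
    m ((p : ZMod q)) = ufun q σ m p + csum q σ p - (p - 1) := by
  have hc1 := csum_le (σ := σ) (q := q) h1
  unfold ufun
  omega

lemma Fm_injOn : Set.InjOn (Fm q σ) (Mset q k σ) := by
  intro m hm m' hm' h
  have hcard := Fm_card (k := k) hm
  have key : (fun t : Fin q => ufun q σ m (t.val + 1))
      = (fun t : Fin q => ufun q σ m' (t.val + 1)) := by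
    rw [gfun_eq hm]
    have h2 : ∀ t : Fin q, ufun q σ m' (t.val + 1) ∈ Fm q σ m := by
      intro t
      rw [h, Fm, Finset.mem_image]
      exact ⟨t.val + 1, Finset.mem_Icc.2 ⟨by omega, by have := t.isLt; omega⟩, rfl⟩
    have h3 : StrictMono (fun t : Fin q => ufun q σ m' (t.val + 1)) := by
      intro a b hab
      exact u_mono hm' (by omega) (by rw [Fin.lt_def] at hab; omega) (by have := b.isLt; omega)
    exact (Finset.orderEmbOfFin_unique hcard h2 h3).symm
  funext i
  have hrp := rep_pos q i
  have hrl := rep_le q i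
  have hkey := congrFun key ⟨rep q i - 1, by omega⟩
  simp only at hkey
  have he : rep q i - 1 + 1 = rep q i := by omega
  rw [he] at hkey
  have e1 := m_recover (σ := σ) (m := m) hrp hrl
  have e2 := m_recover (σ := σ) (m := m') hrp hrl
  rw [natCast_rep] at e1 e2
  rw [e1, e2, hkey]

lemma Fm_surjOn (hq : 2 ≤ q) (hk : 2 ≤ k) (hdk : dpr q σ < k)
    {s : Finset ℕ} (hs : s ∈ (Finset.range (k - dpr q σ + q - 1)).powersetCard q) :
    ∃ m ∈ Mset q k σ, Fm q σ m = s := by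
  rw [Finset.mem_powersetCard] at hs
  obtain ⟨hsub, hcard⟩ := hs
  set e := s.orderEmbOfFin hcard with he
  have hqpos : 0 < q := by omega
  have hesm : StrictMono ⇑e := (s.orderEmbOfFin hcard).strictMono
  set E : ℕ → ℕ := fun a => e ⟨min a (q - 1), by omega⟩ with hE
  have hEeq : ∀ t : Fin q, E t.val = e t := by
    intro t
    rw [hE]
    simp only
    congr 1
    apply Fin.ext
    simp only
    have := t.isLt
    omega
  have hEsm : ∀ a b : ℕ, a < b → b ≤ q - 1 → E a < E b := by
    intro a b hab hb
    rw [hE]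
    simp only
    apply hesm
    rw [Fin.lt_def]
    simp only
    omega
  have hEmem : ∀ a : ℕ, E a ∈ s := by
    intro a
    rw [hE]
    exact Finset.orderEmbOfFin_mem s hcard _
  have hEbd : ∀ a : ℕ, E a < k - dpr q σ + q - 1 := by
    intro a
    have := hsub (hEmem a)
    rwa [Finset.mem_range] at this
  have hEge : ∀ a : ℕ, a ≤ q - 1 → a ≤ E a := by
    intro a ha
    have h0 := fin_ge hesm ⟨a, by omega⟩
    simp only at h0
    have hfin : (⟨min a (q - 1), by omega⟩ : Fin q) = ⟨a, by omega⟩ := by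
      apply Fin.ext; simp; omega
    rw [hE]
    simp only
    rw [hfin]
    exact h0
  have hEgap : ∀ a b : ℕ, a ≤ b → b ≤ q - 1 → E a + (b - a) ≤ E b := by
    intro a b hab hb
    have h0 := fin_gap hesm (b - a) ⟨a, by omega⟩ ⟨b, by omega⟩ (by simp; omega)
    have hfin1 : (⟨min a (q - 1), by omega⟩ : Fin q) = ⟨a, by omega⟩ := by
      apply Fin.ext; simp; omega
    have hfin2 : (⟨min b (q - 1), by omega⟩ : Fin q) = ⟨b, by omega⟩ := by
      apply Fin.ext; simp; omega
    rw [hE]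
    simp only
    rw [hfin1, hfin2]
    exact h0
  set m : ZMod q → ℕ := fun i =>
    E (rep q i - 1) + csum q σ (rep q i) - (rep q i - 1) with hmdef
  have hmval : ∀ p : ℕ, 1 ≤ p → p ≤ q →
      m ((p : ZMod q)) = E (p - 1) + csum q σ p - (p - 1) := by
    intro p h1 h3
    rw [hmdef]
    simp only
    rw [rep_natCast q h1 h3]
  have hmi : ∀ i : ZMod q, m i = E (rep q i - 1) + csum q σ (rep q i) - (rep q i - 1) := by
    intro i
    rw [hmdef]
  have hmem : m ∈ Mset q k σ := by
    constructor
    · intro i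
      have hrp := rep_pos q i
      have hrl := rep_le q i
      have hlast := hEgap (rep q i - 1) (q - 1) (by omega) le_rfl
      have hbd := hEbd (q - 1)
      have hcs : csum q σ (rep q i) ≤ dpr q σ := csum_mono hrl
      rw [hmi i]
      omega
    · intro i hi
      have hrp := rep_pos q i
      have hrl : rep q i < q := by
        rw [rep, if_neg hi]; exact ZMod.val_lt i
      have hra := rep_add_one (q := q) hq hi
      have hm1 := hmi i
      have hm2 := hmi (i + 1)
      rw [hra] at hm2
      have hcs : csum q σ (rep q i + 1) = csum q σ (rep q i) + cval q σ i := by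
        rw [csum_succ hrp, natCast_rep]
      have hstep : E (rep q i - 1) + 1 ≤ E (rep q i) :=
        hEsm _ _ (by omega) (by omega)
      have hge := hEge (rep q i - 1) (by omega)
      have hcv : cval q σ i ≤ 1 := by unfold cval; split <;> omega
      have hsimp : rep q i + 1 - 1 = rep q i := by omega
      rw [hsimp] at hm2
      omega
  refine ⟨m, hmem, ?_⟩
  have hu : ∀ p : ℕ, 1 ≤ p → p ≤ q → ufun q σ m p = E (p - 1) := by
    intro p h1 h3
    have h4 := hmval p h1 h3
    have hge := hEge (p - 1) (by omega)
    have hc1 := csum_le (σ := σ) (q := q) h1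
    unfold ufun
    omega
  rw [Fm]
  ext a
  rw [Finset.mem_image]
  constructor
  · rintro ⟨p, hp, rfl⟩
    rw [Finset.mem_Icc] at hp
    rw [hu p hp.1 hp.2]
    exact hEmem _
  · intro ha
    have : a ∈ Set.range (⇑e) := by
      rw [he, Finset.range_orderEmbOfFin]
      exact ha
    obtain ⟨t, ht⟩ := this
    refine ⟨t.val + 1, Finset.mem_Icc.2 ⟨by omega, by have := t.isLt; omega⟩, ?_⟩
    rw [hu (t.val + 1) (by omega) (by have := t.isLt; omega)]
    simp only [Nat.add_sub_cancel]
    rw [hEeq t]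
    exact ht

lemma Mset_ncard (hq : 2 ≤ q) (hk : 2 ≤ k) (hdk : dpr q σ < k) :
    (Mset q k σ).ncard = (k - dpr q σ + q - 1).choose q := by
  set Ω : Finset (Finset ℕ) := (Finset.range (k - dpr q σ + q - 1)).powersetCard q with hΩ
  have himg : Fm q σ '' (Mset q k σ) = ↑Ω := by
    ext s
    constructor
    · rintro ⟨m, hm, rfl⟩
      rw [Finset.mem_coe]
      exact Fm_mem_Omega hq hm
    · intro hsΩ
      rw [Finset.mem_coe] at hsΩ
      obtain ⟨m, hm, hms⟩ := Fm_surjOn hq hk hdk hsΩ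
      exact ⟨m, hm, hms⟩
  have h1 : (Mset q k σ).ncard = (Fm q σ '' (Mset q k σ)).ncard :=
    (Set.ncard_image_of_injOn Fm_injOn).symm
  rw [h1, himg, Set.ncard_coe_finset, hΩ, Finset.card_powersetCard, Finset.card_range]

end Count

end RCaux
/-- Let `σ` be a `q`-cycle with `des σ = d` and signature `(a₁, …, a_q)`, and let
`k > d`. The number of realizations of `σ` under `m_k` is `C(q+k-d, q)` if
`a_q = 1` and `C(q+k-d-1, q)` if `a_q = 0` (here `a_q` is the diagonal entry of
the transition matrix at the index `q ≡ 0`). -/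
theorem realization_count (q d k : ℕ) [NeZero q] (hq : 2 ≤ q)
    (σ : Equiv.Perm (ZMod q)) (hσ : IsQCycle q σ) (hd : desNum q σ = d)
    (hk : d < k) :
    (transMatrix q σ 0 0 = 1 →
      {x : ZMod q → ℝ | MkRealization q k σ x}.ncard = Nat.choose (q + k - d) q) ∧
    (transMatrix q σ 0 0 = 0 →
      {x : ZMod q → ℝ | MkRealization q k σ x}.ncard
        = Nat.choose (q + k - d - 1) q) := by
  haveI : Fact (1 < q) := ⟨hq⟩
  have hsplit := RCaux.desNum_split (σ := σ) hq
  have hdpr1 : 1 ≤ RCaux.dpr q σ := by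
    obtain ⟨t, ht1, ht2, htd⟩ := RCaux.exists_desc hq hσ
    unfold RCaux.dpr RCaux.csum
    apply Finset.card_pos.2
    exact ⟨t, Finset.mem_filter.2 ⟨Finset.mem_Ico.2 ⟨ht1, ht2⟩, htd⟩⟩
  have hcv : RCaux.cval q σ 0 ≤ 1 := by unfold RCaux.cval; split <;> omega
  have hk2 : 2 ≤ k := by omega
  have hdprk : RCaux.dpr q σ < k := by omega
  have hmain : {x : ZMod q → ℝ | MkRealization q k σ x}.ncard
      = (k - RCaux.dpr q σ + q - 1).choose q := by
    rw [RCaux.ncard_real_eq hq hσ hk2, RCaux.Mset_ncard hq hk2 hdprk]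
  have htm := RCaux.trans_zero_eq (σ := σ) hq
  constructor
  · intro h1
    rw [htm] at h1
    have hdesc : RCaux.desc q σ 0 := by
      by_contra hnd
      rw [if_neg hnd] at h1
      exact zero_ne_one h1
    have hcv1 : RCaux.cval q σ 0 = 1 := by unfold RCaux.cval; rw [if_pos hdesc]
    rw [hmain]
    congr 1
    omega
  · intro h0
    rw [htm] at h0
    have hdesc : ¬ RCaux.desc q σ 0 := by
      intro hnd
      rw [if_pos hnd] at h0
      exact one_ne_zero h0
    have hcv1 : RCaux.cval q σ 0 = 0 := by unfold RCaux.cval; rw [if_neg hdesc]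
    rw [hmain]
    congr 1
    omega
end
end
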